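/- arXiv:2408.00250 — 5 statements merged into one kernel-verified Lean document; each statement's English description precedes it below -/
import Mathlib

section
/- Let d > k be positive integers. Then P_{k,d} is a bounded convex subset of ℝ^k equal to the convex hull of the 2^k points {v_J : J ⊆ {1, …, k}}, these points are pairwise distinct, and the set of extreme points of P_{k,d} is exactly {v_J : J ⊆ {1, …, k}}. -/
open Classical in
/-- The point `v_J` attached to a subset `J ⊆ {1,…,k}` (coordinates are 1-indexed:
the coordinate `i : Fin k` of the tuple represents coordinate `i+1`).  If `j ∈ J` is
not the largest element of `J`, then `v_j = (next(j) - j)/min J` where `next(j)` is the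
smallest element of `J` exceeding `j`; if `j = max J` then `v_j = (d - j)/min J`;
and `v_j = 0` for `j ∉ J`. -/
noncomputable def vJ (d k : ℕ) (J : Finset ℕ) : Fin k → ℝ := fun i =>
  if (i : ℕ) + 1 ∈ J then
    ((if ∃ m ∈ J, (i : ℕ) + 1 < m then ((sInf {m : ℕ | m ∈ J ∧ (i : ℕ) + 1 < m} : ℕ) : ℝ)
      else (d : ℝ)) - ((i : ℕ) + 1)) / ((sInf {m : ℕ | m ∈ J} : ℕ) : ℝ)
  else 0

/-- The polytope `P_{k,d}`: points with nonnegative coordinates satisfying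
`(d-j)/j + ((d-j)/j)(x_1 + ⋯ + x_{j-1}) - (x_j + ⋯ + x_k) ≥ 0` for `1 ≤ j ≤ k`
(the index `j : Fin k` represents `j+1`). -/
def Pkd (k d : ℕ) : Set (Fin k → ℝ) :=
  {x | (∀ i, 0 ≤ x i) ∧ ∀ j : Fin k,
    0 ≤ ((d : ℝ) - (((j : ℕ) : ℝ) + 1)) / (((j : ℕ) : ℝ) + 1)
        + ((d : ℝ) - (((j : ℕ) : ℝ) + 1)) / (((j : ℕ) : ℝ) + 1)
          * (∑ i ∈ Finset.Iio j, x i)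
        - ∑ i ∈ Finset.Ici j, x i}

open Finset

namespace PkdAux

open Classical in
/-- smallest element of `J` exceeding `m`, or `d` if there is none. -/
noncomputable def g (d : ℕ) (J : Finset ℕ) (m : ℕ) : ℕ :=
  if ∃ a ∈ J, m < a then sInf {a : ℕ | a ∈ J ∧ m < a} else d



/-- partial sum of the first `m` coordinates (1-indexed coords `1..m`). -/
def pSum {k : ℕ} (x : Fin k → ℝ) (m : ℕ) : ℝ :=
  ∑ i : Fin k, if (i : ℕ) < m then x i else 0

lemma pSum_zero {k : ℕ} (x : Fin k → ℝ) : pSum x 0 = 0 := by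
  simp [pSum]

lemma pSum_of_le {k : ℕ} (x : Fin k → ℝ) {m : ℕ} (h : k ≤ m) : pSum x m = ∑ i, x i := by
  unfold pSum
  refine Finset.sum_congr rfl fun i _ => ?_
  rw [if_pos (lt_of_lt_of_le i.isLt h)]

lemma pSum_succ {k : ℕ} (x : Fin k → ℝ) (m : ℕ) :
    pSum x (m + 1) = pSum x m + (if h : m < k then x ⟨m, h⟩ else 0) := by
  unfold pSum
  by_cases h : m < k
  · rw [dif_pos h]
    have key : ∀ i : Fin k, (if (i : ℕ) < m + 1 then x i else 0)
        = (if (i : ℕ) < m then x i else 0) + (if i = ⟨m, h⟩ then x i else 0) := by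
      intro i
      by_cases hi : (i : ℕ) < m
      · rw [if_pos hi, if_pos (Nat.lt_succ_of_lt hi), if_neg (by simp [Fin.ext_iff]; omega)]
        ring
      · by_cases hi2 : (i : ℕ) = m
        · rw [if_neg hi, if_pos (by omega), if_pos (Fin.ext hi2)]
          ring
        · rw [if_neg hi, if_neg (by omega), if_neg (by simp [Fin.ext_iff]; omega)]
          ring
    rw [Finset.sum_congr rfl (fun i _ => key i), Finset.sum_add_distrib,
      Finset.sum_ite_eq' Finset.univ (⟨m, h⟩ : Fin k) x]
    simp
  · rw [dif_neg h, add_zero]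
    refine Finset.sum_congr rfl fun i _ => ?_
    have hi := i.isLt
    rw [if_pos (by omega), if_pos (by omega)]

lemma pSum_add {k : ℕ} (x y : Fin k → ℝ) (m : ℕ) :
    pSum (x + y) m = pSum x m + pSum y m := by
  unfold pSum
  rw [← Finset.sum_add_distrib]
  refine Finset.sum_congr rfl fun i _ => ?_
  by_cases hi : (i : ℕ) < m <;> simp [hi]

lemma pSum_smul {k : ℕ} (c : ℝ) (x : Fin k → ℝ) (m : ℕ) :
    pSum (c • x) m = c * pSum x m := by
  unfold pSum
  rw [Finset.mul_sum]
  refine Finset.sum_congr rfl fun i _ => ?_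
  by_cases hi : (i : ℕ) < m <;> simp [hi]

/-- congruence for partial sums: if all coordinates in `[m, m')` vanish. -/
lemma pSum_congr_zero {k : ℕ} (x : Fin k → ℝ) {m m' : ℕ} (h : m ≤ m')
    (hz : ∀ i : Fin k, m ≤ (i : ℕ) → (i : ℕ) < m' → x i = 0) :
    pSum x m' = pSum x m := by
  induction m', h using Nat.le_induction with
  | base => rfl
  | succ n hn ih =>
    rw [pSum_succ, ih (fun i h1 h2 => hz i h1 (by omega))]
    by_cases h : n < k
    · rw [dif_pos h, hz ⟨n, h⟩ (by simpa using hn) (by simp), add_zero]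
    · rw [dif_neg h, add_zero]


variable {d k : ℕ} {J : Finset ℕ}

lemma g_of_exists (h : ∃ a ∈ J, m < a) : g d J m = sInf {a : ℕ | a ∈ J ∧ m < a} := by
  rw [g, if_pos h]

lemma g_of_not_exists (h : ¬ ∃ a ∈ J, m < a) : g d J m = d := by
  rw [g, if_neg h]

lemma g_spec {m : ℕ} (h : ∃ a ∈ J, m < a) : g d J m ∈ J ∧ m < g d J m := by
  rw [g_of_exists h]
  obtain ⟨a, ha, hma⟩ := h
  exact Nat.sInf_mem (⟨a, ha, hma⟩ : {a : ℕ | a ∈ J ∧ m < a}.Nonempty)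

lemma g_le {m a : ℕ} (ha : a ∈ J) (hma : m < a) : g d J m ≤ a := by
  rw [g_of_exists ⟨a, ha, hma⟩]
  exact Nat.sInf_le ⟨ha, hma⟩

lemma lt_g {m : ℕ} (hmd : m < d) : m < g d J m := by
  by_cases h : ∃ a ∈ J, m < a
  · exact (g_spec h).2
  · rw [g_of_not_exists h]; exact hmd

lemma g_succ_mem {m : ℕ} (h : m + 1 ∈ J) : g d J m = m + 1 := by
  have h1 : g d J m ≤ m + 1 := g_le h (Nat.lt_succ_self m)
  have h2 : m < g d J m := (g_spec ⟨m + 1, h, Nat.lt_succ_self m⟩).2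
  omega

lemma g_succ_not_mem {m : ℕ} (h : m + 1 ∉ J) : g d J (m + 1) = g d J m := by
  have hset : {a : ℕ | a ∈ J ∧ m + 1 < a} = {a : ℕ | a ∈ J ∧ m < a} := by
    ext a
    simp only [Set.mem_setOf_eq, and_congr_right_iff]
    intro haJ
    constructor
    · omega
    · intro hma
      rcases (by omega : a = m + 1 ∨ m + 1 < a) with h1 | h1
      · exact absurd (h1 ▸ haJ) h
      · exact h1
  by_cases hex : ∃ a ∈ J, m < a
  · obtain ⟨a, ha, hma⟩ := hex
    have hma1 : m + 1 < a := by
      rcases (by omega : a = m + 1 ∨ m + 1 < a) with h1 | h1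
      · exact absurd (h1 ▸ ha) h
      · exact h1
    rw [g_of_exists ⟨a, ha, hma1⟩, g_of_exists ⟨a, ha, hma⟩, hset]
  · have hex1 : ¬ ∃ a ∈ J, m + 1 < a := by
      rintro ⟨a, ha, hma⟩; exact hex ⟨a, ha, by omega⟩
    rw [g_of_not_exists hex1, g_of_not_exists hex]

lemma g_eq_d_of_ge (hJ : J ⊆ Finset.Icc 1 k) {m : ℕ} (hm : k ≤ m) : g d J m = d := by
  apply g_of_not_exists
  rintro ⟨a, ha, hma⟩
  have := (Finset.mem_Icc.1 (hJ ha)).2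
  omega

lemma g_zero (hJ : J ⊆ Finset.Icc 1 k) (hne : J.Nonempty) :
    g d J 0 = sInf {m : ℕ | m ∈ J} := by
  obtain ⟨a, ha⟩ := hne
  have h1 : 1 ≤ a := (Finset.mem_Icc.1 (hJ ha)).1
  rw [g_of_exists ⟨a, ha, by omega⟩]
  congr 1
  ext b
  simp only [Set.mem_setOf_eq, and_iff_left_iff_imp]
  intro hb
  have := (Finset.mem_Icc.1 (hJ hb)).1
  omega

lemma g_zero_pos (hJ : J ⊆ Finset.Icc 1 k) (hne : J.Nonempty) : 0 < g d J 0 := by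
  obtain ⟨a, ha⟩ := hne
  have h1 : 1 ≤ a := (Finset.mem_Icc.1 (hJ ha)).1
  exact (g_spec ⟨a, ha, by omega⟩).2

lemma g_zero_mem (hJ : J ⊆ Finset.Icc 1 k) (hne : J.Nonempty) : g d J 0 ∈ J := by
  obtain ⟨a, ha⟩ := hne
  have h1 : 1 ≤ a := (Finset.mem_Icc.1 (hJ ha)).1
  exact (g_spec ⟨a, ha, by omega⟩).1

/-- `vJ` expressed via `g`. -/
lemma vJ_eq (hJ : J ⊆ Finset.Icc 1 k) (i : Fin k) :
    vJ d k J i = if (i : ℕ) + 1 ∈ J then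
      ((g d J ((i : ℕ) + 1) : ℝ) - ((i : ℕ) + 1)) / ((g d J 0 : ℝ)) else 0 := by
  unfold vJ
  by_cases hm : (i : ℕ) + 1 ∈ J
  · rw [if_pos hm, if_pos hm]
    have hne : J.Nonempty := ⟨_, hm⟩
    rw [g_zero hJ hne]
    unfold g
    by_cases hex : ∃ a ∈ J, (i : ℕ) + 1 < a
    · rw [if_pos hex, if_pos hex]
    · rw [if_neg hex, if_neg hex]
  · rw [if_neg hm, if_neg hm]


lemma vJ_empty (d k : ℕ) : vJ d k ∅ = 0 := by
  funext i
  simp [vJ]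

lemma one_add_pSum_vJ (hJ : J ⊆ Finset.Icc 1 k) (hne : J.Nonempty) (m : ℕ) :
    1 + pSum (vJ d k J) m = (g d J m : ℝ) / (g d J 0 : ℝ) := by
  have hg0 : (0 : ℝ) < (g d J 0 : ℝ) := by exact_mod_cast g_zero_pos hJ hne
  induction m with
  | zero => rw [pSum_zero, div_self (ne_of_gt hg0), add_zero]
  | succ m ih =>
    rw [pSum_succ]
    by_cases hm : m + 1 ∈ J
    · have hmk : m + 1 ≤ k := (Finset.mem_Icc.1 (hJ hm)).2
      have hmlt : m < k := by omega
      rw [dif_pos hmlt]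
      have hval : vJ d k J ⟨m, hmlt⟩
          = ((g d J (m + 1) : ℝ) - (m + 1)) / ((g d J 0 : ℝ)) := by
        rw [vJ_eq hJ]
        simp only [if_pos (show ((⟨m, hmlt⟩ : Fin k) : ℕ) + 1 ∈ J from hm)]
      have hgm : g d J m = m + 1 := g_succ_mem hm
      rw [hval]
      rw [show 1 + (pSum (vJ d k J) m + ((g d J (m + 1) : ℝ) - (m + 1)) / (g d J 0 : ℝ))
          = (1 + pSum (vJ d k J) m) + ((g d J (m + 1) : ℝ) - (m + 1)) / (g d J 0 : ℝ) by ring,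
        ih, hgm]
      push_cast
      field_simp
      ring
    · rw [g_succ_not_mem hm, ← ih]
      by_cases hmlt : m < k
      · rw [dif_pos hmlt]
        have hval : vJ d k J ⟨m, hmlt⟩ = 0 := by
          rw [vJ_eq hJ]
          exact if_neg hm
        rw [hval]; ring
      · rw [dif_neg hmlt]; ring

lemma one_add_tot_vJ (hJ : J ⊆ Finset.Icc 1 k) (hne : J.Nonempty) (hkd : k < d) :
    1 + pSum (vJ d k J) k = (d : ℝ) / (g d J 0 : ℝ) := by
  rw [one_add_pSum_vJ hJ hne, g_eq_d_of_ge hJ le_rfl]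

lemma vJ_pos (hJ : J ⊆ Finset.Icc 1 k) (hkd : k < d) {i : Fin k}
    (hi : (i : ℕ) + 1 ∈ J) : 0 < vJ d k J i := by
  have hne : J.Nonempty := ⟨_, hi⟩
  have hg0 : (0 : ℝ) < (g d J 0 : ℝ) := by exact_mod_cast g_zero_pos hJ hne
  rw [vJ_eq hJ, if_pos hi]
  apply div_pos _ hg0
  have h1 : (i : ℕ) + 1 ≤ k := (Finset.mem_Icc.1 (hJ hi)).2
  have h2 : (i : ℕ) + 1 < g d J ((i : ℕ) + 1) := lt_g (by omega)
  have : ((i : ℕ) + 1 : ℝ) < (g d J ((i : ℕ) + 1) : ℝ) := by exact_mod_cast h2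
  push_cast
  linarith

lemma vJ_nonneg (hJ : J ⊆ Finset.Icc 1 k) (hkd : k < d) (i : Fin k) : 0 ≤ vJ d k J i := by
  by_cases hi : (i : ℕ) + 1 ∈ J
  · exact le_of_lt (vJ_pos hJ hkd hi)
  · rw [vJ_eq hJ, if_neg hi]

lemma vJ_constraint (hJ : J ⊆ Finset.Icc 1 k) (hkd : k < d) {m : ℕ} (h1 : 1 ≤ m) (h2 : m ≤ k) :
    (m : ℝ) * (1 + pSum (vJ d k J) k) ≤ (d : ℝ) * (1 + pSum (vJ d k J) (m - 1)) := by
  rcases J.eq_empty_or_nonempty with rfl | hne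
  · rw [vJ_empty]
    have : pSum (0 : Fin k → ℝ) = fun _ => 0 := by
      funext m; unfold pSum; simp
    rw [this]
    simp only [add_zero, mul_one]
    exact_mod_cast le_of_lt (lt_of_le_of_lt h2 hkd)
  · have hg0 : (0 : ℝ) < (g d J 0 : ℝ) := by exact_mod_cast g_zero_pos hJ hne
    rw [one_add_tot_vJ hJ hne hkd, one_add_pSum_vJ hJ hne]
    have hgd : m - 1 < d := by omega
    have h3 : m ≤ g d J (m - 1) := by have := lt_g (J := J) hgd; omega
    have h4 : ((m : ℝ)) ≤ (g d J (m - 1) : ℝ) := by exact_mod_cast h3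
    have hd0 : (0:ℝ) ≤ d := by positivity
    rw [mul_div_assoc', mul_div_assoc', div_le_div_iff_of_pos_right hg0]
    nlinarith

lemma vJ_tight (hJ : J ⊆ Finset.Icc 1 k) (hkd : k < d) {m : ℕ} (hm : m ∈ J) :
    (m : ℝ) * (1 + pSum (vJ d k J) k) = (d : ℝ) * (1 + pSum (vJ d k J) (m - 1)) := by
  have hne : J.Nonempty := ⟨_, hm⟩
  have h1 : 1 ≤ m := (Finset.mem_Icc.1 (hJ hm)).1
  have hgm : g d J (m - 1) = m := by
    have := g_succ_mem (d := d) (m := m - 1) (by rw [Nat.sub_add_cancel h1]; exact hm)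
    omega
  rw [one_add_tot_vJ hJ hne hkd, one_add_pSum_vJ hJ hne, hgm]
  ring

lemma eq_vJ (hJ : J ⊆ Finset.Icc 1 k) (hkd : k < d) {y : Fin k → ℝ}
    (hz : ∀ i : Fin k, (i : ℕ) + 1 ∉ J → y i = 0)
    (ht : ∀ m ∈ J, (m : ℝ) * (1 + pSum y k) = (d : ℝ) * (1 + pSum y (m - 1))) :
    y = vJ d k J := by
  rcases J.eq_empty_or_nonempty with rfl | hne
  · funext i
    rw [vJ_empty]
    exact hz i (Finset.notMem_empty _)
  · have hd0 : (0 : ℝ) < (d : ℝ) := by exact_mod_cast (by omega : 0 < d)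
    have hg0 : (0 : ℝ) < (g d J 0 : ℝ) := by exact_mod_cast g_zero_pos hJ hne
    set σ : ℝ := 1 + pSum y k with hσ
    have claim : ∀ t, t ≤ k → (d : ℝ) * (1 + pSum y (k - t)) = (g d J (k - t) : ℝ) * σ := by
      intro t
      induction t with
      | zero =>
        intro _
        rw [Nat.sub_zero, g_eq_d_of_ge hJ le_rfl]
      | succ t ih =>
        intro htk
        set m := k - (t + 1) with hm
        have hm1 : m + 1 = k - t := by omega
        by_cases hmem : m + 1 ∈ J
        · have := ht (m + 1) hmem
          rw [Nat.add_sub_cancel] at this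
          rw [← this, g_succ_mem hmem]
        · have hmk : m < k := by omega
          have hps : pSum y (m + 1) = pSum y m := by
            rw [pSum_succ, dif_pos hmk, hz ⟨m, hmk⟩ hmem, add_zero]
          have := ih (by omega)
          rw [← hm1, hps, g_succ_not_mem hmem] at this
          exact this
    have hσval : σ = (d : ℝ) / (g d J 0 : ℝ) := by
      have := claim k le_rfl
      rw [Nat.sub_self, pSum_zero, add_zero, mul_one] at this
      rw [this]
      field_simp
    have claim' : ∀ m, m ≤ k → (1 + pSum y m) = (g d J m : ℝ) * σ / d := by
      intro m hmk
      have := claim (k - m) (by omega)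
      rw [Nat.sub_sub_self hmk] at this
      rw [← this]
      field_simp
    funext i
    have hik : (i : ℕ) < k := i.isLt
    have hyi : y i = pSum y ((i : ℕ) + 1) - pSum y (i : ℕ) := by
      rw [pSum_succ, dif_pos hik]
      simp
    by_cases hmem : (i : ℕ) + 1 ∈ J
    · have e1 := claim' ((i : ℕ) + 1) (by omega)
      have e2 := claim' (i : ℕ) (by omega)
      have hgi : g d J (i : ℕ) = (i : ℕ) + 1 := g_succ_mem hmem
      rw [vJ_eq hJ, if_pos hmem]
      rw [hyi, show pSum y ((i:ℕ)+1) - pSum y (i:ℕ)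
          = (1 + pSum y ((i:ℕ)+1)) - (1 + pSum y (i:ℕ)) by ring, e1, e2, hgi, hσval]
      field_simp
      push_cast
      ring
    · rw [vJ_eq hJ, if_neg hmem]
      exact hz i hmem

def Q (k d : ℕ) : Set (Fin k → ℝ) :=
  {x | (∀ i, 0 ≤ x i) ∧ ∀ m : ℕ, 1 ≤ m → m ≤ k →
    (m : ℝ) * (1 + pSum x k) ≤ (d : ℝ) * (1 + pSum x (m - 1))}

lemma sum_Iio (x : Fin k → ℝ) (j : Fin k) : ∑ i ∈ Finset.Iio j, x i = pSum x (j : ℕ) := by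
  rw [pSum, ← Finset.sum_filter]
  apply Finset.sum_congr _ (fun _ _ => rfl)
  ext i
  simp only [Finset.mem_filter, Finset.mem_Iio, Finset.mem_univ, true_and, Fin.lt_def]

lemma sum_Ici (x : Fin k → ℝ) (j : Fin k) :
    ∑ i ∈ Finset.Ici j, x i = pSum x k - pSum x (j : ℕ) := by
  have h := Finset.sum_add_sum_compl (Finset.Iio j) x
  have hcompl : (Finset.Iio j)ᶜ = Finset.Ici j := by
    ext i
    simp [not_lt]
  rw [hcompl] at h
  rw [pSum_of_le x le_rfl, ← h, sum_Iio]
  ring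

lemma constraint_iff (x : Fin k → ℝ) (j : Fin k) :
    (0 ≤ ((d : ℝ) - (((j : ℕ) : ℝ) + 1)) / (((j : ℕ) : ℝ) + 1)
        + ((d : ℝ) - (((j : ℕ) : ℝ) + 1)) / (((j : ℕ) : ℝ) + 1)
          * (∑ i ∈ Finset.Iio j, x i)
        - ∑ i ∈ Finset.Ici j, x i)
      ↔ (((j : ℕ) : ℝ) + 1) * (1 + pSum x k) ≤ (d : ℝ) * (1 + pSum x (j : ℕ)) := by
  have hc : (0 : ℝ) < ((j : ℕ) : ℝ) + 1 := by positivity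
  rw [sum_Iio, sum_Ici]
  set c : ℝ := ((j : ℕ) : ℝ) + 1
  set B : ℝ := pSum x (j : ℕ)
  set T : ℝ := pSum x k
  have key : (d - c) / c + (d - c) / c * B - (T - B)
      = ((d : ℝ) * (1 + B) - c * (1 + T)) / c := by
    field_simp
    ring
  rw [key, le_div_iff₀ hc, zero_mul, sub_nonneg]

lemma Pkd_eq_Q (hk : 0 < k) : Pkd k d = Q k d := by
  ext x
  simp only [Pkd, Q, Set.mem_setOf_eq]
  constructor
  · rintro ⟨h0, hc⟩
    refine ⟨h0, fun m h1 h2 => ?_⟩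
    have hjk : m - 1 < k := by omega
    have := (constraint_iff x ⟨m - 1, hjk⟩).1 (hc ⟨m - 1, hjk⟩)
    have hcast : (((⟨m - 1, hjk⟩ : Fin k) : ℕ) : ℝ) + 1 = (m : ℝ) := by
      have : ((⟨m - 1, hjk⟩ : Fin k) : ℕ) = m - 1 := rfl
      rw [this]
      have : (m - 1 : ℕ) + 1 = m := by omega
      exact_mod_cast congrArg (Nat.cast : ℕ → ℝ) this
    rw [hcast] at this
    simpa using this
  · rintro ⟨h0, hc⟩
    refine ⟨h0, fun j => ?_⟩
    rw [constraint_iff]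
    have := hc ((j : ℕ) + 1) (by omega) (by omega)
    rw [Nat.add_sub_cancel] at this
    exact_mod_cast this

lemma vJ_mem_Q (hJ : J ⊆ Finset.Icc 1 k) (hkd : k < d) : vJ d k J ∈ Q k d :=
  ⟨vJ_nonneg hJ hkd, fun _ h1 h2 => vJ_constraint hJ hkd h1 h2⟩

lemma convex_Q : Convex ℝ (Q k d) := by
  rintro x ⟨hx0, hxc⟩ y ⟨hy0, hyc⟩ a b ha hb hab
  constructor
  · intro i
    have : (a • x + b • y) i = a * x i + b * y i := rfl
    rw [this]
    have := hx0 i; have := hy0 i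
    positivity
  · intro m h1 h2
    rw [pSum_add, pSum_add, pSum_smul, pSum_smul, pSum_smul, pSum_smul]
    have hxm := hxc m h1 h2
    have hym := hyc m h1 h2
    nlinarith [hxm, hym, ha, hb, hab]

lemma continuous_pSum (m : ℕ) : Continuous fun x : Fin k → ℝ => pSum x m := by
  apply continuous_finset_sum
  intro i _
  by_cases h : (i : ℕ) < m
  · simpa [h] using continuous_apply i
  · simpa [h] using continuous_const

lemma isClosed_Q : IsClosed (Q k d) := by
  have hQ : Q k d = (⋂ i : Fin k, {x : Fin k → ℝ | 0 ≤ x i}) ∩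
      ⋂ m : ℕ, ⋂ (_ : 1 ≤ m), ⋂ (_ : m ≤ k),
        {x : Fin k → ℝ | (m : ℝ) * (1 + pSum x k) ≤ (d : ℝ) * (1 + pSum x (m - 1))} := by
    ext x
    simp only [Q, Set.mem_setOf_eq, Set.mem_inter_iff, Set.mem_iInter]
  rw [hQ]
  apply IsClosed.inter
  · exact isClosed_iInter fun i => isClosed_le continuous_const (continuous_apply i)
  · refine isClosed_iInter fun m => isClosed_iInter fun _ => isClosed_iInter fun _ => ?_
    exact isClosed_le
      (continuous_const.mul (continuous_const.add (continuous_pSum k)))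
      (continuous_const.mul (continuous_const.add (continuous_pSum (m - 1))))

lemma tot_le (hk : 0 < k) (hkd : k < d) {x : Fin k → ℝ} (hx : x ∈ Q k d) :
    pSum x k ≤ (d : ℝ) - 1 := by
  have := hx.2 1 le_rfl hk
  rw [pSum_zero] at this
  push_cast at this
  linarith

lemma isBounded_Q (hk : 0 < k) (hkd : k < d) : Bornology.IsBounded (Q k d) := by
  rw [isBounded_iff_forall_norm_le]
  refine ⟨d, fun x hx => ?_⟩
  have hd0 : (0 : ℝ) ≤ d := by positivity
  rw [pi_norm_le_iff_of_nonneg hd0]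
  intro i
  rw [Real.norm_eq_abs, abs_le]
  have h1 : x i ≤ pSum x k := by
    rw [pSum_of_le x le_rfl]
    exact Finset.single_le_sum (fun j _ => hx.1 j) (Finset.mem_univ i)
  have h2 := tot_le hk hkd hx
  have h3 := hx.1 i
  constructor <;> linarith

lemma isCompact_Q (hk : 0 < k) (hkd : k < d) : IsCompact (Q k d) := by
  rw [Metric.isCompact_iff_isClosed_bounded]
  exact ⟨isClosed_Q, isBounded_Q hk hkd⟩

lemma weight_zero {la lb p q : ℝ} (hla : 0 < la) (hlb : 0 < lb) (hp : 0 ≤ p) (hq : 0 ≤ q)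
    (h : la * p + lb * q = 0) : p = 0 ∧ q = 0 := by
  constructor <;> nlinarith

lemma vJ_extreme (hJ : J ⊆ Finset.Icc 1 k) (hkd : k < d) :
    vJ d k J ∈ Set.extremePoints ℝ (Q k d) := by
  refine ⟨vJ_mem_Q hJ hkd, fun a ha b hb hseg => ?_⟩
  obtain ⟨la, lb, hla, hlb, hlab, hsum⟩ := hseg
  have hcoord : ∀ i : Fin k, la * a i + lb * b i = vJ d k J i := by
    intro i
    rw [← hsum]; rfl
  have hpsum : ∀ m : ℕ, la * pSum a m + lb * pSum b m = pSum (vJ d k J) m := by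
    intro m
    rw [← hsum, pSum_add, pSum_smul, pSum_smul]
  have hz : ∀ c ∈ Q k d, (∀ i : Fin k, (i : ℕ) + 1 ∉ J → c i = 0) ∧
      (∀ m ∈ J, (m : ℝ) * (1 + pSum c k) = (d : ℝ) * (1 + pSum c (m - 1))) → True := fun _ _ _ => trivial
  -- coordinates off J vanish for a and b
  have hza : ∀ i : Fin k, (i : ℕ) + 1 ∉ J → a i = 0 ∧ b i = 0 := by
    intro i hi
    have h0 : vJ d k J i = 0 := by rw [vJ_eq hJ, if_neg hi]
    exact weight_zero hla hlb (ha.1 i) (hb.1 i) (by rw [hcoord i, h0])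
  -- tight constraints for a and b
  have hta : ∀ m ∈ J, ((m : ℝ) * (1 + pSum a k) = (d : ℝ) * (1 + pSum a (m - 1)))
      ∧ ((m : ℝ) * (1 + pSum b k) = (d : ℝ) * (1 + pSum b (m - 1))) := by
    intro m hm
    have h1 : 1 ≤ m := (Finset.mem_Icc.1 (hJ hm)).1
    have h2 : m ≤ k := (Finset.mem_Icc.1 (hJ hm)).2
    have hFa : 0 ≤ (d : ℝ) * (1 + pSum a (m - 1)) - m * (1 + pSum a k) := by
      have := ha.2 m h1 h2; linarith
    have hFb : 0 ≤ (d : ℝ) * (1 + pSum b (m - 1)) - m * (1 + pSum b k) := by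
      have := hb.2 m h1 h2; linarith
    have hcomb : la * ((d : ℝ) * (1 + pSum a (m - 1)) - m * (1 + pSum a k))
        + lb * ((d : ℝ) * (1 + pSum b (m - 1)) - m * (1 + pSum b k)) = 0 := by
      have e1 := hpsum (m - 1)
      have e2 := hpsum k
      have e3 := vJ_tight hJ hkd hm
      nlinarith [e1, e2, e3, hlab]
    obtain ⟨hA, hB⟩ := weight_zero hla hlb hFa hFb hcomb
    constructor <;> linarith
  have haj : a = vJ d k J :=
    eq_vJ hJ hkd (fun i hi => (hza i hi).1) (fun m hm => (hta m hm).1)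
  have hbj : b = vJ d k J :=
    eq_vJ hJ hkd (fun i hi => (hza i hi).2) (fun m hm => (hta m hm).2)
  exact haj

lemma pSum_nonneg {x : Fin k → ℝ} (hx : ∀ i, 0 ≤ x i) (m : ℕ) : 0 ≤ pSum x m := by
  apply Finset.sum_nonneg
  intro i _
  by_cases h : (i : ℕ) < m <;> simp [h, hx i]

lemma pSum_single (i : Fin k) (c : ℝ) (m : ℕ) :
    pSum (Pi.single i c) m = if (i : ℕ) < m then c else 0 := by
  unfold pSum
  have key : ∀ j : Fin k, (if (j : ℕ) < m then (Pi.single i c : Fin k → ℝ) j else 0)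
      = if j = i then (if (i : ℕ) < m then c else 0) else 0 := by
    intro j
    rcases eq_or_ne j i with rfl | hne
    · simp
    · rw [if_neg hne, Pi.single_eq_of_ne hne]
      by_cases h : (j : ℕ) < m <;> simp [h]
  rw [Finset.sum_congr rfl (fun j _ => key j), Finset.sum_ite_eq' Finset.univ i]
  simp

lemma mid_openSegment (x u : Fin k → ℝ) : x ∈ openSegment ℝ (x + u) (x - u) := by
  refine ⟨1/2, 1/2, by norm_num, by norm_num, by norm_num, ?_⟩
  funext i
  simp only [Pi.smul_apply, Pi.add_apply, Pi.sub_apply, smul_eq_mul]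
  ring

lemma perturbA (hkd : k < d) {x : Fin k → ℝ} (hxQ : x ∈ Q k d) {p j : ℕ}
    (hp1 : 1 ≤ p) (hpj : p < j) (hjk : j ≤ k)
    {ip istar : Fin k} (hip : (ip : ℕ) + 1 = p) (histar : (istar : ℕ) + 1 = j)
    (hxip : 0 < x ip) (hxistar : 0 < x istar)
    (hstrict : ∀ m : ℕ, p < m → m ≤ j →
      (m : ℝ) * (1 + pSum x k) < (d : ℝ) * (1 + pSum x (m - 1))) :
    ∃ u : Fin k → ℝ, u ≠ 0 ∧ x + u ∈ Q k d ∧ x - u ∈ Q k d := by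
  have hd0 : (0 : ℝ) < d := by exact_mod_cast (by omega : 0 < d)
  have hipne : ip ≠ istar := by
    intro h; rw [h] at hip; omega
  set S := Finset.Icc (p + 1) j with hS
  have hSne : S.Nonempty := ⟨p + 1, Finset.mem_Icc.2 ⟨le_rfl, hpj⟩⟩
  set δ := S.inf' hSne
    (fun m => ((d : ℝ) * (1 + pSum x (m - 1)) - m * (1 + pSum x k)) / d) with hδ
  set ε := min (min (x ip) (x istar)) δ with hε
  have hδpos : 0 < δ := by
    rw [hδ, Finset.lt_inf'_iff]
    intro m hm
    rw [Finset.mem_Icc] at hm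
    have := hstrict m (by omega) hm.2
    apply div_pos (by linarith) hd0
  have hεpos : 0 < ε := lt_min (lt_min hxip hxistar) hδpos
  have hεip : ε ≤ x ip := le_trans (min_le_left _ _) (min_le_left _ _)
  have hεistar : ε ≤ x istar := le_trans (min_le_left _ _) (min_le_right _ _)
  have hεδ : ε ≤ δ := min_le_right _ _
  set w : Fin k → ℝ := Pi.single ip 1 + Pi.single istar (-1) with hw
  have hwip : w ip = 1 := by
    rw [hw, Pi.add_apply, Pi.single_eq_same, Pi.single_eq_of_ne hipne, add_zero]
  have hwistar : w istar = -1 := by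
    rw [hw, Pi.add_apply, Pi.single_eq_same, Pi.single_eq_of_ne hipne.symm, zero_add]
  have hwother : ∀ i : Fin k, i ≠ ip → i ≠ istar → w i = 0 := by
    intro i h1 h2
    rw [hw, Pi.add_apply, Pi.single_eq_of_ne h1, Pi.single_eq_of_ne h2, add_zero]
  have hpw : ∀ m' : ℕ, pSum w m'
      = (if (ip : ℕ) < m' then (1:ℝ) else 0) + (if (istar : ℕ) < m' then (-1:ℝ) else 0) := by
    intro m'
    rw [hw, pSum_add, pSum_single, pSum_single]
  have hmem : ∀ e : ℝ, |e| ≤ ε → x + e • w ∈ Q k d := by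
    intro e he
    obtain ⟨he1, he2⟩ := abs_le.1 he
    constructor
    · intro i
      rcases eq_or_ne i ip with rfl | h1
      · rw [Pi.add_apply, Pi.smul_apply, hwip, smul_eq_mul]
        linarith
      rcases eq_or_ne i istar with rfl | h2
      · rw [Pi.add_apply, Pi.smul_apply, hwistar, smul_eq_mul]
        linarith
      · rw [Pi.add_apply, Pi.smul_apply, hwother i h1 h2, smul_eq_mul]
        have := hxQ.1 i
        linarith
    · intro m h1 h2
      rw [pSum_add, pSum_add, pSum_smul, pSum_smul, hpw, hpw]
      have hipk : (ip : ℕ) < k := ip.isLt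
      have histark : (istar : ℕ) < k := istar.isLt
      rw [if_pos hipk, if_pos histark]
      have hQm := hxQ.2 m h1 h2
      by_cases hc1 : p < m
      · by_cases hc2 : m ≤ j
        · -- middle case: indicator for ip on, for istar off
          rw [if_pos (by omega : (ip : ℕ) < m - 1), if_neg (by omega : ¬ (istar : ℕ) < m - 1)]
          have hslack : δ ≤ ((d : ℝ) * (1 + pSum x (m - 1)) - m * (1 + pSum x k)) / d :=
            Finset.inf'_le _ (Finset.mem_Icc.2 ⟨by omega, hc2⟩)
          have : (d:ℝ) * δ ≤ (d : ℝ) * (1 + pSum x (m - 1)) - m * (1 + pSum x k) := by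
            rw [le_div_iff₀ hd0] at hslack
            linarith
          nlinarith
        · -- m > j: both indicators on
          rw [if_pos (by omega : (ip : ℕ) < m - 1), if_pos (by omega : (istar : ℕ) < m - 1)]
          nlinarith
      · -- m ≤ p: both off
        rw [if_neg (by omega : ¬ (ip : ℕ) < m - 1), if_neg (by omega : ¬ (istar : ℕ) < m - 1)]
        nlinarith
  refine ⟨ε • w, ?_, ?_, ?_⟩
  · intro h
    have := congrFun h ip
    rw [Pi.smul_apply, hwip, smul_eq_mul, mul_one] at this
    exact absurd this (ne_of_gt hεpos)
  · exact hmem ε (by rw [abs_of_pos hεpos])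
  · have := hmem (-ε) (by rw [abs_neg, abs_of_pos hεpos])
    convert this using 1
    funext i
    simp only [Pi.sub_apply, Pi.add_apply, Pi.smul_apply, smul_eq_mul]
    ring

lemma perturbB (hkd : k < d) {x : Fin k → ℝ} (hxQ : x ∈ Q k d) {j : ℕ}
    (hj1 : 1 ≤ j) (hjk : j ≤ k)
    {istar : Fin k} (histar : (istar : ℕ) + 1 = j) (hxistar : 0 < x istar)
    (hzero : ∀ m' : ℕ, m' < j → pSum x m' = 0)
    (hstrictB : ∀ m : ℕ, 1 ≤ m → m ≤ j → (m : ℝ) * (1 + pSum x k) < (d : ℝ)) :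
    ∃ u : Fin k → ℝ, u ≠ 0 ∧ x + u ∈ Q k d ∧ x - u ∈ Q k d := by
  have hd0 : (0 : ℝ) < d := by exact_mod_cast (by omega : 0 < d)
  have hT0 : 0 ≤ pSum x k := pSum_nonneg hxQ.1 k
  set S := Finset.Icc 1 j with hS
  have hSne : S.Nonempty := ⟨1, Finset.mem_Icc.2 ⟨le_rfl, hj1⟩⟩
  set δ := S.inf' hSne
    (fun m => ((d : ℝ) - m * (1 + pSum x k)) / (m * (1 + pSum x k))) with hδ
  set ε := min (min (1/2) (x istar / (x istar + 1))) δ with hε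
  have hδpos : 0 < δ := by
    rw [hδ, Finset.lt_inf'_iff]
    intro m hm
    rw [Finset.mem_Icc] at hm
    have h1 := hstrictB m hm.1 hm.2
    have hm0 : (0:ℝ) < (m:ℝ) * (1 + pSum x k) := by
      have : (0:ℝ) < (m:ℝ) := by exact_mod_cast hm.1
      nlinarith
    exact div_pos (by linarith) hm0
  have hεpos : 0 < ε := by
    apply lt_min (lt_min (by norm_num) _) hδpos
    positivity
  have hεhalf : ε ≤ 1/2 := le_trans (min_le_left _ _) (min_le_left _ _)
  have hεistar : ε * (x istar + 1) ≤ x istar := by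
    have h1 : ε ≤ x istar / (x istar + 1) := le_trans (min_le_left _ _) (min_le_right _ _)
    rw [div_eq_mul_inv] at h1
    have h2 : (0:ℝ) < x istar + 1 := by linarith
    calc ε * (x istar + 1) ≤ x istar * (x istar + 1)⁻¹ * (x istar + 1) := by nlinarith
      _ = x istar := by field_simp
  set w : Fin k → ℝ := x + Pi.single istar 1 with hw
  have hwistar : w istar = x istar + 1 := by
    rw [hw, Pi.add_apply, Pi.single_eq_same]
  have hwother : ∀ i : Fin k, i ≠ istar → w i = x i := by
    intro i h1
    rw [hw, Pi.add_apply, Pi.single_eq_of_ne h1, add_zero]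
  have hpw : ∀ m' : ℕ, pSum w m' = pSum x m' + (if (istar : ℕ) < m' then (1:ℝ) else 0) := by
    intro m'
    rw [hw, pSum_add, pSum_single]
  have hmem : ∀ e : ℝ, |e| ≤ ε → x + e • w ∈ Q k d := by
    intro e he
    obtain ⟨he1, he2⟩ := abs_le.1 he
    constructor
    · intro i
      rcases eq_or_ne i istar with rfl | h1
      · rw [Pi.add_apply, Pi.smul_apply, hwistar, smul_eq_mul]
        nlinarith
      · rw [Pi.add_apply, Pi.smul_apply, hwother i h1, smul_eq_mul]
        have h3 := hxQ.1 i
        nlinarith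
    · intro m h1 h2
      rw [pSum_add, pSum_add, pSum_smul, pSum_smul, hpw, hpw]
      have histark : (istar : ℕ) < k := istar.isLt
      rw [if_pos histark]
      have hQm := hxQ.2 m h1 h2
      by_cases hc : m ≤ j
      · rw [if_neg (by omega : ¬ (istar : ℕ) < m - 1)]
        have hz1 : pSum x (m - 1) = 0 := hzero (m - 1) (by omega)
        rw [hz1] at hQm ⊢
        have hstr := hstrictB m h1 hc
        have hslack : δ ≤ ((d : ℝ) - m * (1 + pSum x k)) / (m * (1 + pSum x k)) :=
          Finset.inf'_le _ (Finset.mem_Icc.2 ⟨h1, hc⟩)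
        have hm0 : (0:ℝ) < (m:ℝ) * (1 + pSum x k) := by
          have : (0:ℝ) < (m:ℝ) := by exact_mod_cast h1
          nlinarith
        have hδs : δ * ((m:ℝ) * (1 + pSum x k)) ≤ (d : ℝ) - m * (1 + pSum x k) := by
          rw [le_div_iff₀ hm0] at hslack
          linarith
        have hεδ : ε ≤ δ := min_le_right _ _
        nlinarith
      · rw [if_pos (by omega : (istar : ℕ) < m - 1)]
        have key : (m:ℝ) * ((1 + e) * (1 + pSum x k)) ≤ (d:ℝ) * ((1 + e) * (1 + pSum x (m-1))) := by
          have h3 : (0:ℝ) ≤ 1 + e := by linarith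
          nlinarith
        calc (m:ℝ) * (1 + (pSum x k + e * (pSum x k + 1)))
            = (m:ℝ) * ((1 + e) * (1 + pSum x k)) := by ring
          _ ≤ (d:ℝ) * ((1 + e) * (1 + pSum x (m-1))) := key
          _ = (d:ℝ) * (1 + (pSum x (m-1) + e * (pSum x (m-1) + 1))) := by ring
  refine ⟨ε • w, ?_, ?_, ?_⟩
  · intro h
    have := congrFun h istar
    rw [Pi.smul_apply, hwistar, smul_eq_mul, Pi.zero_apply] at this
    nlinarith
  · exact hmem ε (by rw [abs_of_pos hεpos])
  · have := hmem (-ε) (by rw [abs_neg, abs_of_pos hεpos])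
    convert this using 1
    funext i
    simp only [Pi.sub_apply, Pi.add_apply, Pi.smul_apply, smul_eq_mul]
    ring

lemma extreme_subset (hk : 0 < k) (hkd : k < d) {x : Fin k → ℝ}
    (hx : x ∈ Set.extremePoints ℝ (Q k d)) :
    ∃ J, J ⊆ Finset.Icc 1 k ∧ x = vJ d k J := by
  classical
  obtain ⟨hxQ, hext⟩ := hx
  set J : Finset ℕ := (Finset.Icc 1 k).filter
      (fun m => ∃ i : Fin k, (i : ℕ) + 1 = m ∧ x i ≠ 0) with hJdef
  have hJ : J ⊆ Finset.Icc 1 k := Finset.filter_subset _ _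
  refine ⟨J, hJ, ?_⟩
  have hmemJ : ∀ i : Fin k, ((i : ℕ) + 1 ∈ J ↔ x i ≠ 0) := by
    intro i
    rw [hJdef, Finset.mem_filter]
    constructor
    · rintro ⟨-, i', hi', hxi'⟩
      have : i' = i := Fin.ext (by omega)
      rwa [← this]
    · intro hxi
      exact ⟨Finset.mem_Icc.2 ⟨by omega, by have := i.isLt; omega⟩, i, rfl, hxi⟩
  have hz : ∀ i : Fin k, (i : ℕ) + 1 ∉ J → x i = 0 := by
    intro i hi
    by_contra h
    exact hi ((hmemJ i).2 h)
  by_cases htight : ∀ m ∈ J, (m : ℝ) * (1 + pSum x k) = (d : ℝ) * (1 + pSum x (m - 1))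
  · exact eq_vJ hJ hkd hz htight
  exfalso
  push_neg at htight
  obtain ⟨j, hjJ, hjne⟩ := htight
  have hj1 : 1 ≤ j := (Finset.mem_Icc.1 (hJ hjJ)).1
  have hjk : j ≤ k := (Finset.mem_Icc.1 (hJ hjJ)).2
  obtain ⟨istar, histar, hxistar'⟩ : ∃ i : Fin k, (i : ℕ) + 1 = j ∧ x i ≠ 0 := by
    have h := hjJ; rw [hJdef, Finset.mem_filter] at h; exact h.2
  have hxistar : 0 < x istar := lt_of_le_of_ne (hxQ.1 istar) (Ne.symm hxistar')
  have hstrictj : (j : ℝ) * (1 + pSum x k) < (d : ℝ) * (1 + pSum x (j - 1)) :=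
    lt_of_le_of_ne (hxQ.2 j hj1 hjk) hjne
  have hT0 : (0:ℝ) < 1 + pSum x k := by
    have := pSum_nonneg hxQ.1 k; linarith
  have hcontra : ∀ u : Fin k → ℝ, u ≠ 0 → x + u ∈ Q k d → x - u ∈ Q k d → False := by
    intro u hu h1 h2
    have h3 := hext h1 h2 (mid_openSegment x u)
    apply hu
    funext i
    have h4 := congrFun h3 i
    rw [Pi.add_apply] at h4
    rw [Pi.zero_apply]
    linarith
  by_cases hcase : ∃ a ∈ J, a < j
  · -- there is an element of J below j
    set P := J.filter (· < j) with hP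
    have hPne : P.Nonempty := by
      obtain ⟨a, ha, hal⟩ := hcase
      exact ⟨a, Finset.mem_filter.2 ⟨ha, hal⟩⟩
    set p := P.max' hPne with hp
    have hpP : p ∈ P := P.max'_mem hPne
    have hpJ : p ∈ J := (Finset.mem_filter.1 hpP).1
    have hpj : p < j := by
      have := (Finset.mem_filter.1 hpP).2
      simpa using this
    have hp1 : 1 ≤ p := (Finset.mem_Icc.1 (hJ hpJ)).1
    have hmax : ∀ a ∈ J, a < j → a ≤ p := fun a ha hal =>
      P.le_max' a (Finset.mem_filter.2 ⟨ha, by simpa using hal⟩)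
    obtain ⟨ip, hipval, hxip'⟩ : ∃ i : Fin k, (i : ℕ) + 1 = p ∧ x i ≠ 0 := by
      have h := hpJ; rw [hJdef, Finset.mem_filter] at h; exact h.2
    have hxip : 0 < x ip := lt_of_le_of_ne (hxQ.1 ip) (Ne.symm hxip')
    have hstrict : ∀ m : ℕ, p < m → m ≤ j →
        (m : ℝ) * (1 + pSum x k) < (d : ℝ) * (1 + pSum x (m - 1)) := by
      intro m hm1 hm2
      have hps : pSum x (j - 1) = pSum x (m - 1) := by
        apply pSum_congr_zero x (by omega : m - 1 ≤ j - 1)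
        intro i hi1 hi2
        apply hz
        intro hiJ
        have := hmax _ hiJ (by omega)
        omega
      have hmj : (m : ℝ) ≤ (j : ℝ) := by exact_mod_cast hm2
      calc (m : ℝ) * (1 + pSum x k) ≤ (j : ℝ) * (1 + pSum x k) := by nlinarith
        _ < (d : ℝ) * (1 + pSum x (j - 1)) := hstrictj
        _ = (d : ℝ) * (1 + pSum x (m - 1)) := by rw [hps]
    obtain ⟨u, hu, h1, h2⟩ :=
      perturbA hkd hxQ hp1 hpj hjk hipval histar hxip hxistar hstrict
    exact hcontra u hu h1 h2
  · -- j is the least element of J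
    push_neg at hcase
    have hzero : ∀ m' : ℕ, m' < j → pSum x m' = 0 := by
      intro m' hm'
      rw [← pSum_zero x]
      apply pSum_congr_zero x (Nat.zero_le m')
      intro i _ hi2
      apply hz
      intro hiJ
      have := hcase _ hiJ
      omega
    have hstrict : ∀ m : ℕ, 1 ≤ m → m ≤ j → (m : ℝ) * (1 + pSum x k) < (d : ℝ) := by
      intro m hm1 hm2
      have hpsj : pSum x (j - 1) = 0 := hzero _ (by omega)
      rw [hpsj] at hstrictj
      have hmj : (m : ℝ) ≤ (j : ℝ) := by exact_mod_cast hm2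
      nlinarith
    obtain ⟨u, hu, h1, h2⟩ := perturbB hkd hxQ hj1 hjk histar hxistar hzero hstrict
    exact hcontra u hu h1 h2

lemma vJ_subset_of_eq (hkd : k < d) {J J' : Finset ℕ} (hJ : J ⊆ Finset.Icc 1 k)
    (hJ' : J' ⊆ Finset.Icc 1 k) (heq : vJ d k J = vJ d k J') : J ⊆ J' := by
  intro m hm
  have h1 : 1 ≤ m := (Finset.mem_Icc.1 (hJ hm)).1
  have h2 : m ≤ k := (Finset.mem_Icc.1 (hJ hm)).2
  set i : Fin k := ⟨m - 1, by omega⟩ with hi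
  have hival : (i : ℕ) + 1 = m := by simp [hi]; omega
  by_contra hmJ'
  have hpos : 0 < vJ d k J i := vJ_pos hJ hkd (by rw [hival]; exact hm)
  have hzero : vJ d k J' i = 0 := by
    rw [vJ_eq hJ', if_neg (by rw [hival]; exact hmJ')]
  rw [heq, hzero] at hpos
  exact lt_irrefl _ hpos

lemma vJ_injOn (hkd : k < d) :
    Set.InjOn (vJ d k) {J : Finset ℕ | J ⊆ Finset.Icc 1 k} := by
  intro J hJ J' hJ' heq
  exact Finset.Subset.antisymm (vJ_subset_of_eq hkd hJ hJ' heq)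
    (vJ_subset_of_eq hkd hJ' hJ heq.symm)

lemma V_finite (d k : ℕ) :
    Set.Finite {v : Fin k → ℝ | ∃ J : Finset ℕ, J ⊆ Finset.Icc 1 k ∧ v = vJ d k J} := by
  have : {v : Fin k → ℝ | ∃ J : Finset ℕ, J ⊆ Finset.Icc 1 k ∧ v = vJ d k J}
      = (vJ d k) '' ↑((Finset.Icc 1 k).powerset) := by
    ext v
    simp only [Set.mem_setOf_eq, Set.mem_image, Finset.coe_powerset, Set.mem_preimage,
      Set.mem_powerset_iff, Finset.coe_subset, Finset.mem_coe]
    constructor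
    · rintro ⟨J, h1, rfl⟩
      exact ⟨J, by simpa using h1, rfl⟩
    · rintro ⟨J, h1, rfl⟩
      exact ⟨J, by simpa using h1, rfl⟩
  rw [this]
  exact ((Finset.Icc 1 k).powerset.finite_toSet).image _

end PkdAux

/-- For positive integers `d > k`, `P_{k,d}` is a bounded convex set
equal to the convex hull of the `2^k` pairwise distinct points `v_J`, `J ⊆ {1,…,k}`,
and its extreme points are exactly these points. -/
theorem Pkd_polytope (k d : ℕ) (hk : 0 < k) (hkd : k < d) :
    Bornology.IsBounded (Pkd k d) ∧ Convex ℝ (Pkd k d) ∧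
    Pkd k d = convexHull ℝ {v : Fin k → ℝ | ∃ J : Finset ℕ, J ⊆ Finset.Icc 1 k ∧ v = vJ d k J} ∧
    Set.InjOn (vJ d k) {J : Finset ℕ | J ⊆ Finset.Icc 1 k} ∧
    Set.extremePoints ℝ (Pkd k d)
      = {v : Fin k → ℝ | ∃ J : Finset ℕ, J ⊆ Finset.Icc 1 k ∧ v = vJ d k J} := by
  classical
  have hPQ : Pkd k d = PkdAux.Q k d := PkdAux.Pkd_eq_Q hk
  set V : Set (Fin k → ℝ) :=
    {v : Fin k → ℝ | ∃ J : Finset ℕ, J ⊆ Finset.Icc 1 k ∧ v = vJ d k J} with hV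
  have hVQ : V ⊆ PkdAux.Q k d := by
    rintro v ⟨J, hJ, rfl⟩
    exact PkdAux.vJ_mem_Q hJ hkd
  have hextV : Set.extremePoints ℝ (PkdAux.Q k d) = V := by
    apply Set.Subset.antisymm
    · intro v hv
      exact PkdAux.extreme_subset hk hkd hv
    · rintro v ⟨J, hJ, rfl⟩
      exact PkdAux.vJ_extreme hJ hkd
  have hullQ : PkdAux.Q k d = convexHull ℝ V := by
    apply Set.Subset.antisymm
    · have h1 := closure_convexHull_extremePoints (PkdAux.isCompact_Q hk hkd)
        (PkdAux.convex_Q)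
      rw [hextV] at h1
      rw [← h1, ((PkdAux.V_finite d k).isClosed_convexHull (𝕜 := ℝ)).closure_eq]
    · exact convexHull_min hVQ PkdAux.convex_Q
  refine ⟨?_, ?_, ?_, PkdAux.vJ_injOn hkd, ?_⟩
  · rw [hPQ]; exact PkdAux.isBounded_Q hk hkd
  · rw [hPQ]; exact PkdAux.convex_Q
  · rw [hPQ]; exact hullQ
  · rw [hPQ]; exact hextV
end

section
/- Let d > k be positive integers and let J = {j_1 < j_2 < ⋯ < j_n} be a nonempty subset of {1, …, k}. Then for every algebraic integer α of degree d, one has |α_0|^{j_1}·|α_{j_1}|^{j_2 − j_1}·|α_{j_2}|^{j_3 − j_2}⋯|α_{j_n}|^{d − j_n} ≥ |α_0·α_1⋯α_{d−1}| ≥ 1; consequently the point v_J belongs to E_{k,d}. -/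
/-- `r 0, …, r (d-1)` is a listing of the roots (with multiplicity) of `q`,
sorted so that the absolute values are non-increasing. -/
def SortedRoots (d : ℕ) (q : Polynomial ℂ) (r : ℕ → ℂ) : Prop :=
  q.roots = (Multiset.range d).map r ∧
    ∀ i j : ℕ, i ≤ j → j < d → ‖r j‖ ≤ ‖r i‖

/-- The set `E_{k,d}`: tuples `(c_1,…,c_k)` of nonnegative reals (here `c i` plays the
role of `c_{i+1}`) such that `|α_0| |α_1|^{c_1} ⋯ |α_k|^{c_k} ≥ 1` for every algebraic
integer `α` of degree `d`, i.e. for every sorted listing of the roots of every monic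
irreducible integer polynomial of degree `d`. -/
def Ekd (k d : ℕ) : Set (Fin k → ℝ) :=
  {c | (∀ i, 0 ≤ c i) ∧
    ∀ (p : Polynomial ℤ) (r : ℕ → ℂ),
      p.Monic → Irreducible p → p.natDegree = d →
      SortedRoots d (p.map (Int.castRingHom ℂ)) r →
      1 ≤ ‖r 0‖ * ∏ i : Fin k, ‖r (i.1 + 1)‖ ^ c i}

open Classical in
/-- The successor of `j` in `J`: the smallest element of `J` exceeding `j`, or `d` if
`j` is the largest element of `J`. -/
noncomputable def nextElt (d : ℕ) (J : Finset ℕ) (j : ℕ) : ℕ :=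
  if ∃ m ∈ J, j < m then sInf {m : ℕ | m ∈ J ∧ j < m} else d

section Aux
open Finset

lemma nextElt_gt {d : ℕ} (J : Finset ℕ) {j : ℕ} (hjd : j < d) : j < nextElt d J j := by
  classical
  unfold nextElt
  split_ifs with h
  · have hne : {m : ℕ | m ∈ J ∧ j < m}.Nonempty := by
      obtain ⟨m, hm, h2⟩ := h; exact ⟨m, hm, h2⟩
    exact (Nat.sInf_mem hne).2
  · exact hjd

lemma nextElt_mem_or (d : ℕ) (J : Finset ℕ) (j : ℕ) :
    nextElt d J j ∈ J ∨ nextElt d J j = d := by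
  classical
  unfold nextElt
  split_ifs with h
  · have hne : {m : ℕ | m ∈ J ∧ j < m}.Nonempty := by
      obtain ⟨m, hm, h2⟩ := h; exact ⟨m, hm, h2⟩
    exact Or.inl (Nat.sInf_mem hne).1
  · exact Or.inr rfl

lemma nextElt_le {d k : ℕ} (hkd : k < d) {J : Finset ℕ} (hJsub : J ⊆ Finset.Icc 1 k)
    (j : ℕ) : nextElt d J j ≤ d := by
  rcases nextElt_mem_or d J j with h | h
  · exact le_of_lt (lt_of_le_of_lt (Finset.mem_Icc.1 (hJsub h)).2 hkd)
  · exact h.le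

lemma nextElt_le_of_mem {d : ℕ} {J : Finset ℕ} {j j' : ℕ} (hj' : j' ∈ J) (h : j < j') :
    nextElt d J j ≤ j' := by
  classical
  unfold nextElt
  rw [if_pos ⟨j', hj', h⟩]
  exact Nat.sInf_le ⟨hj', h⟩

lemma nextElt_zero {d k : ℕ} {J : Finset ℕ} (hJne : J.Nonempty)
    (hJsub : J ⊆ Finset.Icc 1 k) : nextElt d J 0 = J.min' hJne := by
  have hm : J.min' hJne ∈ J := J.min'_mem hJne
  have hpos : 0 < J.min' hJne := (Finset.mem_Icc.1 (hJsub hm)).1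
  apply le_antisymm
  · exact nextElt_le_of_mem hm hpos
  · classical
    unfold nextElt
    rw [if_pos ⟨_, hm, hpos⟩]
    have hne : {m : ℕ | m ∈ J ∧ 0 < m}.Nonempty := ⟨_, hm, hpos⟩
    exact J.min'_le _ (Nat.sInf_mem hne).1

noncomputable def bIdx (J : Finset ℕ) (i : ℕ) : ℕ :=
  ((insert 0 J).filter (· ≤ i)).max' ⟨0, by simp⟩

lemma bIdx_mem_filter (J : Finset ℕ) (i : ℕ) :
    bIdx J i ∈ (insert 0 J).filter (· ≤ i) :=
  Finset.max'_mem _ _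

lemma bIdx_mem (J : Finset ℕ) (i : ℕ) : bIdx J i ∈ insert 0 J :=
  (Finset.mem_filter.1 (bIdx_mem_filter J i)).1

lemma bIdx_le (J : Finset ℕ) (i : ℕ) : bIdx J i ≤ i :=
  (Finset.mem_filter.1 (bIdx_mem_filter J i)).2

lemma lt_nextElt_bIdx {d : ℕ} (J : Finset ℕ) {i : ℕ} (hid : i < d) :
    i < nextElt d J (bIdx J i) := by
  classical
  unfold nextElt
  split_ifs with h
  · by_contra hle
    push_neg at hle
    have hne : {m : ℕ | m ∈ J ∧ bIdx J i < m}.Nonempty := by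
      obtain ⟨m, hm, h2⟩ := h; exact ⟨m, hm, h2⟩
    have hmem := Nat.sInf_mem hne
    have : sInf {m : ℕ | m ∈ J ∧ bIdx J i < m} ≤ bIdx J i :=
      Finset.le_max' ((insert 0 J).filter (· ≤ i)) _
        (Finset.mem_filter.2 ⟨Finset.mem_insert_of_mem hmem.1, hle⟩)
    exact absurd hmem.2 (not_lt.mpr this)
  · exact hid

lemma range_eq_biUnion {k d : ℕ} (hkd : k < d) {J : Finset ℕ}
    (hJsub : J ⊆ Finset.Icc 1 k) :
    Finset.range d = (insert 0 J).biUnion (fun j => Finset.Ico j (nextElt d J j)) := by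
  classical
  ext i
  simp only [Finset.mem_range, Finset.mem_biUnion, Finset.mem_Ico]
  constructor
  · intro hid
    exact ⟨bIdx J i, bIdx_mem J i, bIdx_le J i, lt_nextElt_bIdx J hid⟩
  · rintro ⟨j, hj, -, h2⟩
    exact lt_of_lt_of_le h2 (nextElt_le hkd hJsub j)

lemma Ico_disjoint_next {d : ℕ} {J : Finset ℕ} {a b : ℕ} (hbJ : b ∈ J) (hlt : a < b) :
    Disjoint (Finset.Ico a (nextElt d J a)) (Finset.Ico b (nextElt d J b)) := by
  have hnext : nextElt d J a ≤ b := nextElt_le_of_mem hbJ hlt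
  simp only [Finset.disjoint_left, Finset.mem_Ico]
  rintro x ⟨-, h2⟩ ⟨h3, -⟩
  omega

lemma pairwiseDisjoint_Ico (d : ℕ) (J : Finset ℕ) :
    (↑(insert 0 J) : Set ℕ).PairwiseDisjoint
      (fun j => Finset.Ico j (nextElt d J j)) := by
  intro a ha b hb hab
  have haJ := Finset.mem_insert.1 (Finset.mem_coe.1 ha)
  have hbJ := Finset.mem_insert.1 (Finset.mem_coe.1 hb)
  rcases lt_trichotomy a b with h | h | h
  · have hb' : b ∈ J := hbJ.resolve_left (by omega)
    exact Ico_disjoint_next hb' h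
  · exact absurd h hab
  · have ha' : a ∈ J := haJ.resolve_left (by omega)
    exact (Ico_disjoint_next ha' h).symm


lemma prod_abs_le {k d : ℕ} (hkd : k < d) {J : Finset ℕ} (hJsub : J ⊆ Finset.Icc 1 k)
    (hJne : J.Nonempty) (r : ℕ → ℂ)
    (hsort : ∀ i j : ℕ, i ≤ j → j < d → ‖r j‖ ≤ ‖r i‖) :
    ‖∏ i ∈ Finset.range d, r i‖
      ≤ ‖r 0‖ ^ (J.min' hJne)
        * ∏ j ∈ J, ‖r j‖ ^ (nextElt d J j - j) := by
  classical
  have h0 : (0 : ℕ) ∉ J := fun h => by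
    have := (Finset.mem_Icc.1 (hJsub h)).1; omega
  rw [norm_prod, range_eq_biUnion hkd hJsub, Finset.prod_biUnion (pairwiseDisjoint_Ico d J)]
  have hstep : ∀ j ∈ insert 0 J,
      (∏ i ∈ Finset.Ico j (nextElt d J j), ‖r i‖)
        ≤ ‖r j‖ ^ (nextElt d J j - j) := by
    intro j hj
    have hle : nextElt d J j ≤ d := nextElt_le hkd hJsub j
    calc ∏ i ∈ Finset.Ico j (nextElt d J j), ‖r i‖
        ≤ ∏ _i ∈ Finset.Ico j (nextElt d J j), ‖r j‖ := by
          apply Finset.prod_le_prod (fun _ _ => norm_nonneg _)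
          intro i hi
          rw [Finset.mem_Ico] at hi
          exact hsort j i hi.1 (lt_of_lt_of_le hi.2 hle)
      _ = ‖r j‖ ^ (nextElt d J j - j) := by
          rw [Finset.prod_const, Nat.card_Ico]
  calc ∏ j ∈ insert 0 J, ∏ i ∈ Finset.Ico j (nextElt d J j), ‖r i‖
      ≤ ∏ j ∈ insert 0 J, ‖r j‖ ^ (nextElt d J j - j) :=
        Finset.prod_le_prod
          (fun _ _ => Finset.prod_nonneg fun _ _ => norm_nonneg _) hstep
    _ = _ := by
        rw [Finset.prod_insert h0, nextElt_zero hJne hJsub, Nat.sub_zero]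

lemma one_le_prod_abs {d : ℕ} (hd : 2 ≤ d) (p : Polynomial ℤ) (r : ℕ → ℂ)
    (hmon : p.Monic) (hirr : Irreducible p) (hdeg : p.natDegree = d)
    (hroots : (p.map (Int.castRingHom ℂ)).roots = (Multiset.range d).map r) :
    1 ≤ ‖∏ i ∈ Finset.range d, r i‖ := by
  classical
  set q := p.map (Int.castRingHom ℂ) with hq
  have hqm : q.Monic := hmon.map _
  have hqd : q.natDegree = d := by rw [hq, hmon.natDegree_map, hdeg]
  have hsplit : q.Splits := IsAlgClosed.splits q
  have hcoeff := hsplit.coeff_zero_eq_prod_roots_of_monic hqm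
  have hprod : q.roots.prod = ∏ i ∈ Finset.range d, r i := by
    rw [hroots, Finset.prod_eq_multiset_prod, Finset.range_val]
  have hc0 : p.coeff 0 ≠ 0 := by
    intro h
    obtain ⟨b, hb⟩ := Polynomial.X_dvd_iff.mpr h
    rcases hirr.isUnit_or_isUnit hb with hu | hu
    · exact Polynomial.not_isUnit_X hu
    · have hb0 : b ≠ 0 := hu.ne_zero
      have h1 : p.natDegree = 1 := by
        rw [hb, Polynomial.natDegree_mul Polynomial.X_ne_zero hb0,
          Polynomial.natDegree_X, Polynomial.natDegree_eq_zero_of_isUnit hu]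
      omega
  have h1 : (1 : ℝ) ≤ ‖q.coeff 0‖ := by
    rw [hq, Polynomial.coeff_map]
    simp only [Int.coe_castRingHom, Complex.norm_intCast]
    have := Int.one_le_abs hc0
    calc (1 : ℝ) = ((1 : ℤ) : ℝ) := by norm_num
      _ ≤ ((|p.coeff 0| : ℤ) : ℝ) := by exact_mod_cast this
      _ = |((p.coeff 0 : ℤ) : ℝ)| := by rw [Int.cast_abs]
  calc (1 : ℝ) ≤ ‖q.coeff 0‖ := h1
    _ = ‖∏ i ∈ Finset.range d, r i‖ := by
        rw [hcoeff, hprod, norm_mul, norm_pow]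
        simp


section Main
open Finset

/-- Let `d > k ≥ 1` and let `J = {j_1 < ⋯ < j_n}` be a nonempty
subset of `{1,…,k}`.  For every algebraic integer `α` of degree `d`,
`|α_0|^{j_1} |α_{j_1}|^{j_2-j_1} ⋯ |α_{j_n}|^{d-j_n} ≥ |α_0 α_1 ⋯ α_{d-1}| ≥ 1`;
consequently `v_J ∈ E_{k,d}`. -/
theorem vJ_mem_Ekd (k d : ℕ) (hk : 0 < k) (hkd : k < d)
    (J : Finset ℕ) (hJsub : J ⊆ Finset.Icc 1 k) (hJne : J.Nonempty) :
    (∀ (p : Polynomial ℤ) (r : ℕ → ℂ),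
      p.Monic → Irreducible p → p.natDegree = d →
      SortedRoots d (p.map (Int.castRingHom ℂ)) r →
      ‖∏ i ∈ Finset.range d, r i‖
          ≤ ‖r 0‖ ^ (J.min' hJne)
            * ∏ j ∈ J, ‖r j‖ ^ (nextElt d J j - j) ∧
      1 ≤ ‖∏ i ∈ Finset.range d, r i‖) ∧
    vJ d k J ∈ Ekd k d := by
  classical
  have hd2 : 2 ≤ d := by omega
  have key : ∀ (p : Polynomial ℤ) (r : ℕ → ℂ),
      p.Monic → Irreducible p → p.natDegree = d →
      SortedRoots d (p.map (Int.castRingHom ℂ)) r →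
      ‖∏ i ∈ Finset.range d, r i‖
          ≤ ‖r 0‖ ^ (J.min' hJne)
            * ∏ j ∈ J, ‖r j‖ ^ (nextElt d J j - j) ∧
      1 ≤ ‖∏ i ∈ Finset.range d, r i‖ := by
    rintro p r hm hi hdeg ⟨h1, h2⟩
    exact ⟨prod_abs_le hkd hJsub hJne r h2, one_le_prod_abs hd2 p r hm hi hdeg h1⟩
  set j1 := J.min' hJne with hj1def
  have hj1J : j1 ∈ J := J.min'_mem hJne
  have hj1 : 1 ≤ j1 := (Finset.mem_Icc.1 (hJsub hj1J)).1
  have hj1ne : ((j1 : ℕ) : ℝ) ≠ 0 := Nat.cast_ne_zero.mpr (by omega)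
  have hsInfJ : sInf {m : ℕ | m ∈ J} = j1 := by
    apply le_antisymm (Nat.sInf_le hj1J)
    exact J.min'_le _ (Nat.sInf_mem (⟨j1, hj1J⟩ : {m : ℕ | m ∈ J}.Nonempty))
  refine ⟨key, ?_, ?_⟩
  · -- nonnegativity of the coordinates of vJ
    intro i
    unfold vJ
    split_ifs with h1 h2
    · have hne : {m : ℕ | m ∈ J ∧ (i : ℕ) + 1 < m}.Nonempty := by
        obtain ⟨m, hm, hlt⟩ := h2; exact ⟨m, hm, hlt⟩
      have hlt := (Nat.sInf_mem hne).2
      apply div_nonneg _ (by positivity)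
      rw [sub_nonneg]
      exact_mod_cast hlt.le
    · have hik : (i : ℕ) + 1 ≤ k := (Finset.mem_Icc.1 (hJsub h1)).2
      apply div_nonneg _ (by positivity)
      rw [sub_nonneg]
      exact_mod_cast (by omega : (i : ℕ) + 1 ≤ d)
    · exact le_refl 0
  · -- the main inequality
    rintro p r hm hi hdeg hs
    obtain ⟨hle, hge⟩ := key p r hm hi hdeg hs
    set A := ‖r 0‖ with hA
    have hAnn : 0 ≤ A := norm_nonneg _
    set g : ℕ → ℝ := fun j =>
      if j ∈ J then ‖r j‖ ^ (nextElt d J j - j) else 1 with hg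
    set P := ∏ i : Fin k, ‖r ((i : ℕ) + 1)‖ ^ vJ d k J i with hP
    have hPnn : 0 ≤ P :=
      Finset.prod_nonneg fun i _ => Real.rpow_nonneg (norm_nonneg _) _
    have hterm : ∀ i : Fin k,
        (‖r ((i : ℕ) + 1)‖ ^ vJ d k J i) ^ j1 = g ((i : ℕ) + 1) := by
      intro i
      have hid : (i : ℕ) + 1 < d := by have := i.isLt; omega
      have hxnn : (0 : ℝ) ≤ ‖r ((i : ℕ) + 1)‖ := norm_nonneg _
      rw [hg]
      unfold vJ nextElt
      rw [hsInfJ]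
      split_ifs with h1 h2
      · have hne : {m : ℕ | m ∈ J ∧ (i : ℕ) + 1 < m}.Nonempty := by
          obtain ⟨m, hm, hlt⟩ := h2; exact ⟨m, hm, hlt⟩
        have hlt := (Nat.sInf_mem hne).2
        rw [← Real.rpow_natCast (‖r ((i : ℕ) + 1)‖ ^ _) j1,
          ← Real.rpow_mul hxnn, div_mul_cancel₀ _ hj1ne,
          show ((sInf {m : ℕ | m ∈ J ∧ (i : ℕ) + 1 < m} : ℕ) : ℝ) - (((i : ℕ) : ℝ) + 1)
            = ((sInf {m : ℕ | m ∈ J ∧ (i : ℕ) + 1 < m} - ((i : ℕ) + 1) : ℕ) : ℝ) by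
              push_cast [Nat.cast_sub hlt.le]; ring,
          Real.rpow_natCast]
        simp [h1, h2]
      · rw [← Real.rpow_natCast (‖r ((i : ℕ) + 1)‖ ^ _) j1,
          ← Real.rpow_mul hxnn, div_mul_cancel₀ _ hj1ne,
          show ((d : ℕ) : ℝ) - (((i : ℕ) : ℝ) + 1) = ((d - ((i : ℕ) + 1) : ℕ) : ℝ) by
              push_cast [Nat.cast_sub hid.le]; ring,
          Real.rpow_natCast]
        simp [h1, h2]
      · simp [h1]
    have hPpow : P ^ j1 = ∏ j ∈ J, ‖r j‖ ^ (nextElt d J j - j) := by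
      calc P ^ j1 = ∏ i : Fin k, (‖r ((i : ℕ) + 1)‖ ^ vJ d k J i) ^ j1 := by
            rw [hP, Finset.prod_pow]
        _ = ∏ i : Fin k, g ((i : ℕ) + 1) := Finset.prod_congr rfl fun i _ => hterm i
        _ = ∏ n ∈ Finset.range k, g (n + 1) :=
            Fin.prod_univ_eq_prod_range (fun n => g (n + 1)) k
        _ = ∏ j ∈ Finset.Ico 1 (k + 1), g j := by
            rw [Finset.prod_Ico_eq_prod_range]
            simp [add_comm]
        _ = ∏ j ∈ Finset.Icc 1 k, g j := by rw [Finset.Ico_add_one_right_eq_Icc]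
        _ = ∏ j ∈ J, g j := (Finset.prod_subset hJsub fun x _ hx => if_neg hx).symm
        _ = ∏ j ∈ J, ‖r j‖ ^ (nextElt d J j - j) :=
            Finset.prod_congr rfl fun j hj => if_pos hj
    have hfin : (1 : ℝ) ≤ (A * P) ^ j1 := by
      rw [mul_pow, hPpow]
      exact le_trans hge hle
    exact (one_le_pow_iff_of_nonneg (mul_nonneg hAnn hPnn) (by omega : j1 ≠ 0)).1 hfin

end Main
end Aux
end

section
/- Let d ≥ 3 be an integer. There exists a constant C > 0 depending only on d such that the following holds: for every algebraic unit α of degree d that is not a root of unity, with H the height of its minimal polynomial, if there exists an integer m with 0 < m < d−1 such that |α_m| ≤ 1 and 0 < |α_m| − |α_{d−1}| < |α_0|^{−1/(d−1)}, then |α_0| ≥ C·H^{1/m}. -/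
/-- The height of an integer polynomial: maximum absolute value of its coefficients. -/
def polyHeight (p : Polynomial ℤ) : ℕ :=
  p.support.sup fun i => (p.coeff i).natAbs

private lemma aux_norm_prod (s : Multiset ℂ) : ‖s.prod‖ = (s.map (norm : ℂ → ℝ)).prod := by
  induction s using Multiset.induction with
  | empty => simp
  | cons a s ih => simp [ih]

private lemma aux_prod_le_pow {A : ℝ} : ∀ {s : Multiset ℝ}, (∀ x ∈ s, 0 ≤ x) →
    (∀ x ∈ s, x ≤ A) → s.prod ≤ A ^ Multiset.card s := by
  intro s
  induction s using Multiset.induction with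
  | empty => simp
  | cons a s ih =>
    intro h0 h1
    simp only [Multiset.prod_cons, Multiset.card_cons, pow_succ]
    rw [mul_comm (A ^ Multiset.card s) A]
    have hA : 0 ≤ A := le_trans (h0 a (Multiset.mem_cons_self a s)) (h1 a (Multiset.mem_cons_self a s))
    refine mul_le_mul (h1 a (Multiset.mem_cons_self a s))
      (ih (fun x hx => h0 x (Multiset.mem_cons_of_mem hx))
        (fun x hx => h1 x (Multiset.mem_cons_of_mem hx)))
      (Multiset.prod_nonneg fun x hx => h0 x (Multiset.mem_cons_of_mem hx)) hA

private lemma aux_card_filter_le (d m : ℕ) {u : Multiset ℕ} (hu : u ≤ Multiset.range d) :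
    Multiset.card (u.filter (· < m)) ≤ m := by
  have h1 : u.filter (· < m) ≤ (Multiset.range d).filter (· < m) :=
    Multiset.filter_le_filter _ hu
  have h2 : (Multiset.range d).filter (· < m) = ((Finset.range d).filter (· < m)).val := by
    rw [Finset.filter_val, Finset.range_val]
  calc Multiset.card (u.filter (· < m)) ≤ Multiset.card ((Multiset.range d).filter (· < m)) :=
        Multiset.card_le_card h1
    _ = ((Finset.range d).filter (· < m)).card := by rw [h2]; rfl
    _ ≤ (Finset.range m).card := by
        apply Finset.card_le_card
        intro x hx
        simp only [Finset.mem_filter, Finset.mem_range] at hx ⊢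
        exact hx.2
    _ = m := Finset.card_range m

private lemma aux_key_prod {r : ℕ → ℂ} {d m : ℕ} {A : ℝ} (hA : 1 ≤ A)
    (hbig : ∀ i < d, (norm : ℂ → ℝ) (r i) ≤ A)
    (hsmall : ∀ i, m ≤ i → i < d → (norm : ℂ → ℝ) (r i) ≤ 1) :
    ∀ u : Multiset ℕ, u ≤ Multiset.range d →
      ((u.map r).map (norm : ℂ → ℝ)).prod ≤ A ^ m := by
  intro u hu
  have key : ∀ u : Multiset ℕ, u ≤ Multiset.range d →
      ((u.map r).map (norm : ℂ → ℝ)).prod ≤ A ^ Multiset.card (u.filter (· < m)) := by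
    intro u
    induction u using Multiset.induction with
    | empty => simp
    | cons a u ih =>
      intro hc
      have hu' : u ≤ Multiset.range d := le_trans (Multiset.le_cons_self u a) hc
      have had : a < d := by
        have := Multiset.mem_of_le hc (Multiset.mem_cons_self a u)
        simpa using this
      have hprodnn : (0:ℝ) ≤ ((u.map r).map (norm : ℂ → ℝ)).prod :=
        Multiset.prod_nonneg (by
          intro x hx
          obtain ⟨z, _, rfl⟩ := Multiset.mem_map.1 hx
          exact norm_nonneg _)
      simp only [Multiset.map_cons, Multiset.prod_cons, Multiset.filter_cons]
      by_cases ham : a < m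
      · rw [if_pos ham, Multiset.card_add, Multiset.card_singleton, add_comm 1 _, pow_succ,
          mul_comm (A ^ _) A]
        exact mul_le_mul (hbig a had) (ih hu') hprodnn (le_trans zero_le_one hA)
      · rw [if_neg ham, zero_add]
        calc (norm : ℂ → ℝ) (r a) * ((u.map r).map (norm : ℂ → ℝ)).prod
            ≤ 1 * (A ^ Multiset.card (Multiset.filter (· < m) u)) :=
              mul_le_mul (hsmall a (le_of_not_gt ham) had) (ih hu') hprodnn zero_le_one
          _ = A ^ Multiset.card (Multiset.filter (· < m) u) := one_mul _
  exact le_trans (key u hu) (pow_le_pow_right₀ hA (aux_card_filter_le d m hu))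

private lemma aux_coeff_bound {q : Polynomial ℂ} (hq : q.Monic) {d m : ℕ} {r : ℕ → ℂ}
    (hdeg : q.natDegree = d) (hroots : q.roots = (Multiset.range d).map r)
    {A : ℝ} (hA : 1 ≤ A) (hbig : ∀ i < d, (norm : ℂ → ℝ) (r i) ≤ A)
    (hsmall : ∀ i, m ≤ i → i < d → (norm : ℂ → ℝ) (r i) ≤ 1)
    {k : ℕ} (hk : k ≤ d) :
    (norm : ℂ → ℝ) (q.coeff k) ≤ (d.choose (d - k) : ℝ) * A ^ m := by
  have hsplits : q.Splits := IsAlgClosed.splits q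
  have hk' : k ≤ q.natDegree := hdeg ▸ hk
  rw [Polynomial.coeff_eq_esymm_roots_of_splits hsplits hk', hq.leadingCoeff, one_mul, norm_mul,
    norm_pow, norm_neg, norm_one, one_pow, one_mul, hdeg, hroots]
  have habs : (norm : ℂ → ℝ) (((Multiset.range d).map r).esymm (d - k))
      ≤ (((((Multiset.range d).map r).powersetCard (d - k)).map Multiset.prod).map
          (norm : ℂ → ℝ)).sum := by
    refine le_trans (norm_multiset_sum_le _) (le_of_eq ?_)
    simp [Multiset.map_map, Function.comp_def]
  refine le_trans habs ?_
  have hcard : Multiset.card ((((Multiset.range d).map r).powersetCard (d - k)).map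
      Multiset.prod |>.map (norm : ℂ → ℝ)) = d.choose (d - k) := by
    simp [Multiset.card_powersetCard]
  have hbound : ∀ x ∈ ((((Multiset.range d).map r).powersetCard (d - k)).map
      Multiset.prod).map (norm : ℂ → ℝ), x ≤ A ^ m := by
    intro x hx
    obtain ⟨w, hw, rfl⟩ := Multiset.mem_map.1 hx
    obtain ⟨t, ht, rfl⟩ := Multiset.mem_map.1 hw
    rw [Multiset.powersetCard_map] at ht
    obtain ⟨u, hu, rfl⟩ := Multiset.mem_map.1 ht
    rw [Multiset.mem_powersetCard] at hu
    rw [aux_norm_prod]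
    exact aux_key_prod hA hbig hsmall u hu.1
  calc (((((Multiset.range d).map r).powersetCard (d - k)).map Multiset.prod).map
        (norm : ℂ → ℝ)).sum ≤ (d.choose (d - k)) • (A ^ m) := by
        rw [← hcard]; exact Multiset.sum_le_card_nsmul _ _ hbound
    _ = (d.choose (d - k) : ℝ) * A ^ m := nsmul_eq_mul _ _

private lemma aux_choose_le (d j : ℕ) : d.choose j ≤ 2 ^ d := by
  rcases le_or_gt j d with h | h
  · calc d.choose j ≤ ∑ i ∈ Finset.range (d + 1), d.choose i :=
        Finset.single_le_sum (fun i _ => Nat.zero_le _)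
          (Finset.mem_range.2 (Nat.lt_succ_of_le h))
      _ = 2 ^ d := Nat.sum_range_choose d
  · rw [Nat.choose_eq_zero_of_lt h]; exact Nat.zero_le _

/-- For `d ≥ 3` there is `C > 0` depending only on `d` such that:
for every algebraic unit `α` of degree `d` that is not a root of unity, with `H` the
height of its minimal polynomial, if `0 < m < d-1` satisfies `|α_m| ≤ 1` and
`0 < |α_m| - |α_{d-1}| < |α_0|^{-1/(d-1)}`, then `|α_0| ≥ C H^{1/m}`. -/
theorem lemma_adapt_a (d : ℕ) (hd : 3 ≤ d) :
    ∃ C : ℝ, 0 < C ∧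
      ∀ (p : Polynomial ℤ) (α : ℂ) (r : ℕ → ℂ) (m : ℕ),
        p.Monic → Irreducible p → p.natDegree = d →
        Polynomial.aeval α p = 0 →
        (p.coeff 0 = 1 ∨ p.coeff 0 = -1) →
        (∀ n : ℕ, 0 < n → α ^ n ≠ 1) →
        SortedRoots d (p.map (Int.castRingHom ℂ)) r →
        0 < m → m < d - 1 →
        ‖r m‖ ≤ 1 →
        0 < ‖r m‖ - ‖r (d - 1)‖ →
        ‖r m‖ - ‖r (d - 1)‖
            < ‖r 0‖ ^ (-(1 / ((d : ℝ) - 1))) →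
        C * (polyHeight p : ℝ) ^ ((m : ℝ)⁻¹) ≤ ‖r 0‖ := by
  refine ⟨((2:ℝ) ^ d)⁻¹, by positivity, ?_⟩
  intro p α r m hmon _hirr hdeg _heval hconst _hru hsorted hm1 hm2 habs1 _ _
  obtain ⟨hroots, hsort⟩ := hsorted
  set q : Polynomial ℂ := p.map (Int.castRingHom ℂ) with hq
  have hqmon : q.Monic := hmon.map _
  have hqdeg : q.natDegree = d := by rw [hq, hmon.natDegree_map]; exact hdeg
  set A : ℝ := (norm : ℂ → ℝ) (r 0) with hA
  have hbig : ∀ i < d, (norm : ℂ → ℝ) (r i) ≤ A := fun i hi => hsort 0 i (Nat.zero_le i) hi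
  have hsmall : ∀ i, m ≤ i → i < d → (norm : ℂ → ℝ) (r i) ≤ 1 := fun i h1 h2 =>
    le_trans (hsort m i h1 h2) habs1
  -- Step 1: 1 ≤ A
  have hcard : Multiset.card q.roots = q.natDegree := by
    rw [hroots, Multiset.card_map, Multiset.card_range, hqdeg]
  have hprodroots : (q.roots.map (norm : ℂ → ℝ)).prod = 1 := by
    have hfac := Polynomial.prod_multiset_X_sub_C_of_monic_of_roots_card_eq hqmon hcard
    have hc0 : (norm : ℂ → ℝ) (q.coeff 0) = 1 := by
      have : q.coeff 0 = ((p.coeff 0 : ℤ) : ℂ) := by simp [hq, Polynomial.coeff_map]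
      rw [this]
      rcases hconst with h | h <;> simp [h]
    have heval0 : q.coeff 0 = (q.roots.map fun a => -a).prod := by
      conv_lhs => rw [Polynomial.coeff_zero_eq_eval_zero, ← hfac]
      rw [Polynomial.eval_multiset_prod, Multiset.map_map]
      congr 1
      apply Multiset.map_congr rfl
      intro a _
      simp [Function.comp_def]
    have : (norm : ℂ → ℝ) (q.coeff 0) = (q.roots.map (norm : ℂ → ℝ)).prod := by
      rw [heval0, aux_norm_prod, Multiset.map_map]
      congr 1
      apply Multiset.map_congr rfl
      intro a _
      simp [Function.comp_def]
    rw [← this, hc0]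
  have hA1 : 1 ≤ A := by
    have hApow : 1 ≤ A ^ d := by
      rw [← hprodroots]
      have : (q.roots.map (norm : ℂ → ℝ)).prod ≤ A ^ Multiset.card (q.roots.map (norm : ℂ → ℝ)) := by
        apply aux_prod_le_pow
        · intro x hx
          obtain ⟨z, _, rfl⟩ := Multiset.mem_map.1 hx
          exact norm_nonneg _
        · intro x hx
          obtain ⟨z, hz, rfl⟩ := Multiset.mem_map.1 hx
          rw [hroots] at hz
          obtain ⟨i, hi, rfl⟩ := Multiset.mem_map.1 hz
          exact hbig i (by simpa using hi)
      refine le_trans this (le_of_eq ?_)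
      rw [Multiset.card_map, hcard, hqdeg]
    have hd0 : d ≠ 0 := by omega
    exact (one_le_pow_iff_of_nonneg (norm_nonneg _) hd0).1 hApow
  -- Step 2: height bound
  have hHbound : (polyHeight p : ℝ) ≤ 2 ^ d * A ^ m := by
    have hp0 : p ≠ 0 := hmon.ne_zero
    have hsupp : p.support.Nonempty := ⟨p.natDegree, Polynomial.natDegree_mem_support_of_nonzero hp0⟩
    obtain ⟨k, hk, hEq⟩ := Finset.exists_mem_eq_sup p.support hsupp
      (fun i => (p.coeff i).natAbs)
    have hkd : k ≤ d := hdeg ▸ Polynomial.le_natDegree_of_mem_supp k hk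
    have hcoeff : ((p.coeff k).natAbs : ℝ) = (norm : ℂ → ℝ) (q.coeff k) := by
      have : q.coeff k = ((p.coeff k : ℤ) : ℂ) := by simp [hq, Polynomial.coeff_map]
      rw [this, Complex.norm_intCast]
      simp [Nat.cast_natAbs, Int.cast_abs]
    have hb := aux_coeff_bound hqmon hqdeg hroots hA1 hbig hsmall hkd
    have hch : (d.choose (d - k) : ℝ) ≤ (2:ℝ) ^ d := by
      exact_mod_cast aux_choose_le d (d - k)
    calc (polyHeight p : ℝ) = ((p.coeff k).natAbs : ℝ) := by rw [polyHeight, hEq]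
      _ = (norm : ℂ → ℝ) (q.coeff k) := hcoeff
      _ ≤ (d.choose (d - k) : ℝ) * A ^ m := hb
      _ ≤ 2 ^ d * A ^ m := by
          apply mul_le_mul_of_nonneg_right hch
          positivity
  -- Step 3: conclude
  have hm0 : (m : ℝ) ≠ 0 := Nat.cast_ne_zero.2 hm1.ne'
  have hinv0 : (0:ℝ) ≤ (m : ℝ)⁻¹ := by positivity
  have h1 : (polyHeight p : ℝ) ^ ((m:ℝ)⁻¹) ≤ (2 ^ d * A ^ m) ^ ((m:ℝ)⁻¹) :=
    Real.rpow_le_rpow (Nat.cast_nonneg _) hHbound hinv0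
  have h2 : ((2:ℝ) ^ d * A ^ m) ^ ((m:ℝ)⁻¹) = ((2:ℝ) ^ d) ^ ((m:ℝ)⁻¹) * A := by
    rw [Real.mul_rpow (by positivity) (by positivity), ← Real.rpow_natCast A m,
      ← Real.rpow_mul (le_trans zero_le_one hA1), mul_inv_cancel₀ hm0, Real.rpow_one]
  have h3 : ((2:ℝ) ^ d) ^ ((m:ℝ)⁻¹) ≤ (2:ℝ) ^ d := by
    have : ((2:ℝ) ^ d) ^ ((m:ℝ)⁻¹) ≤ ((2:ℝ) ^ d) ^ (1:ℝ) := by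
      apply Real.rpow_le_rpow_of_exponent_le (one_le_pow₀ one_le_two)
      rw [inv_le_one_iff₀]
      right
      exact_mod_cast hm1
    simpa using this
  have h4 : (polyHeight p : ℝ) ^ ((m:ℝ)⁻¹) ≤ 2 ^ d * A := by
    refine le_trans h1 ?_
    rw [h2]
    exact mul_le_mul_of_nonneg_right h3 (le_trans zero_le_one hA1)
  have h5 : (0:ℝ) < 2 ^ d := by positivity
  calc ((2:ℝ) ^ d)⁻¹ * (polyHeight p : ℝ) ^ ((m:ℝ)⁻¹) ≤ ((2:ℝ) ^ d)⁻¹ * (2 ^ d * A) := by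
        apply mul_le_mul_of_nonneg_left h4
        positivity
    _ = A := by field_simp
end

section
/- Let d ≥ 3 be an integer. There exists a constant C > 0 depending only on d such that the following holds: for every algebraic unit α of degree d that is not a root of unity, with H the height of its minimal polynomial, if there exists an integer m with 0 < m < d−1 such that |α_m| ≤ 1 and 0 < |α_m| − |α_{d−1}| < |α_0|^{−1/(d−1)}, then |α_m| < 2·|α_0|^{−1/(d−1)} and |α_m| ≤ C·H^{−1/(m(d−1))}. -/
lemma abs_esymm_le_aux (s : Multiset ℂ) (j : ℕ) (M : ℝ)
    (h : ∀ t ∈ Multiset.powersetCard j s, ‖t.prod‖ ≤ M) :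
    ‖s.esymm j‖ ≤ ((Multiset.card s).choose j : ℝ) * M := by
  rw [Multiset.esymm]
  calc ‖(Multiset.map Multiset.prod (s.powersetCard j)).sum‖
      ≤ ((Multiset.map Multiset.prod (s.powersetCard j)).map (fun x => ‖x‖)).sum := by
        simpa using
          norm_multiset_sum_le ((Multiset.map Multiset.prod (s.powersetCard j)))
    _ ≤ Multiset.card (((Multiset.map Multiset.prod (s.powersetCard j))).map (fun x => ‖x‖)) • M := by
        refine Multiset.sum_le_card_nsmul _ _ ?_
        intro x hx
        simp only [Multiset.mem_map] at hx
        obtain ⟨y, hy, rfl⟩ := hx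
        obtain ⟨t, ht, rfl⟩ := hy
        exact h t ht
    _ = ((Multiset.card s).choose j : ℝ) * M := by
        simp [Multiset.card_powersetCard, nsmul_eq_mul]

lemma prod_abs_le_aux (d : ℕ) (r : ℕ → ℂ) (t : Multiset ℂ)
    (ht : t ≤ (Multiset.range d).map r) :
    ‖t.prod‖ ≤ ∏ i ∈ Finset.range d, max 1 (‖r i‖) := by
  have h1 : ‖t.prod‖ = (t.map (fun x => ‖x‖)).prod := map_multiset_prod (normHom (α := ℂ)) t
  rw [h1]
  calc (t.map (fun x => ‖x‖)).prod
      ≤ (t.map (fun x => max 1 ‖x‖)).prod := by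
        exact Multiset.prod_map_le_prod_map₀ _ _ (fun i _ => (norm_nonneg i))
          (fun i _ => le_max_right _ _)
    _ ≤ (((Multiset.range d).map r).map (fun x => max 1 ‖x‖)).prod := by
        obtain ⟨u, hu⟩ := Multiset.le_iff_exists_add.mp ht
        rw [hu, Multiset.map_add, Multiset.prod_add]
        refine le_mul_of_one_le_right (Multiset.prod_nonneg ?_) (Multiset.one_le_prod ?_) <;>
        · intro x hx
          simp only [Multiset.mem_map] at hx
          obtain ⟨y, _, rfl⟩ := hx
          first
          | exact le_trans zero_le_one (le_max_left _ _)
          | exact le_max_left _ _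
    _ = ∏ i ∈ Finset.range d, max 1 (‖r i‖) := by
        rw [Multiset.map_map, Finset.prod_eq_multiset_prod, Finset.range_val]
        rfl

/-- For `d ≥ 3` there is `C > 0` depending only on `d` such that:
for every algebraic unit `α` of degree `d` that is not a root of unity, with `H` the
height of its minimal polynomial, if `0 < m < d-1` satisfies `|α_m| ≤ 1` and
`0 < |α_m| - |α_{d-1}| < |α_0|^{-1/(d-1)}`, then `|α_m| < 2 |α_0|^{-1/(d-1)}` and
`|α_m| ≤ C H^{-1/(m(d-1))}`. -/
theorem lemma_adapt_b (d : ℕ) (hd : 3 ≤ d) :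
    ∃ C : ℝ, 0 < C ∧
      ∀ (p : Polynomial ℤ) (α : ℂ) (r : ℕ → ℂ) (m : ℕ),
        p.Monic → Irreducible p → p.natDegree = d →
        Polynomial.aeval α p = 0 →
        (p.coeff 0 = 1 ∨ p.coeff 0 = -1) →
        (∀ n : ℕ, 0 < n → α ^ n ≠ 1) →
        SortedRoots d (p.map (Int.castRingHom ℂ)) r →
        0 < m → m < d - 1 →
        ‖r m‖ ≤ 1 →
        0 < ‖r m‖ - ‖r (d - 1)‖ →
        ‖r m‖ - ‖r (d - 1)‖
            < ‖r 0‖ ^ (-(1 / ((d : ℝ) - 1))) →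
        ‖r m‖ < 2 * ‖r 0‖ ^ (-(1 / ((d : ℝ) - 1))) ∧
        ‖r m‖ ≤ C * (polyHeight p : ℝ) ^ (-(1 / ((m : ℝ) * ((d : ℝ) - 1)))) := by
  refine ⟨2 ^ (d + 1), by positivity, ?_⟩
  intro p α r m hmonic hirr hdeg haeval hc0 hru hsorted hm0 hmd hrm1 hposd hltd
  obtain ⟨hroots, hsort⟩ := hsorted
  set q : Polynomial ℂ := p.map (Int.castRingHom ℂ) with hq
  have hqmonic : q.Monic := hmonic.map _
  have hqdeg : q.natDegree = d := by rw [hq, Polynomial.Monic.natDegree_map hmonic, hdeg]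
  have hcard : Multiset.card q.roots = d := by rw [hroots]; simp
  have hcard' : Multiset.card q.roots = q.natDegree := by rw [hcard, hqdeg]
  set A : ℝ := ‖r 0‖ with hA
  have hdcast : ((d - 1 : ℕ) : ℝ) = (d : ℝ) - 1 := by
    have : (1:ℕ) ≤ d := by omega
    push_cast [Nat.cast_sub this]
    ring
  -- product of the absolute values of the roots is 1
  have hprodroots : ∏ i ∈ Finset.range d, r i = q.roots.prod := by
    rw [hroots, Finset.prod_eq_multiset_prod, Finset.range_val]
  have habs0 : ‖q.coeff 0‖ = 1 := by
    rw [hq, Polynomial.coeff_map]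
    rcases hc0 with h | h <;> simp [h]
  have hprod : ∏ i ∈ Finset.range d, ‖r i‖ = 1 := by
    have hsplits : q.Splits := IsAlgClosed.splits _
    have h2 := hsplits.coeff_zero_eq_prod_roots_of_monic hqmonic
    rw [h2] at habs0
    rw [← norm_prod, hprodroots]
    simpa [map_mul, map_pow] using habs0
  -- |r 0| ≥ 1
  have hA1 : 1 ≤ A := by
    by_contra hcon
    push_neg at hcon
    have hle : ∏ i ∈ Finset.range d, ‖r i‖ ≤ A ^ d := by
      have h := Finset.prod_le_prod (f := fun i => ‖r i‖) (g := fun _ => A)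
        (fun i _ => norm_nonneg _)
        (fun i hi => hsort 0 i (Nat.zero_le i) (Finset.mem_range.mp hi))
      simpa using h
    rw [hprod] at hle
    have : A ^ d < 1 := pow_lt_one₀ (norm_nonneg _) hcon (by omega)
    linarith
  have hA0 : (0:ℝ) < A := lt_of_lt_of_le one_pos hA1
  -- |r (d-1)|^(d-1) * A ≤ 1
  have hlastpow : ‖r (d - 1)‖ ^ (d - 1) * A ≤ 1 := by
    have hsplit : ∏ i ∈ Finset.range d, ‖r i‖
        = (∏ i ∈ Finset.range (d - 1), ‖r (i + 1)‖) * A := by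
      have hrw : d = (d - 1) + 1 := by omega
      rw [hrw, Finset.prod_range_succ']
      rfl
    have hlow : ‖r (d - 1)‖ ^ (d - 1)
        ≤ ∏ i ∈ Finset.range (d - 1), ‖r (i + 1)‖ := by
      have h := Finset.prod_le_prod (f := fun _ => ‖r (d - 1)‖)
        (g := fun i => ‖r (i + 1)‖)
        (s := Finset.range (d - 1))
        (fun i _ => norm_nonneg _)
        (fun i hi => by
          have hii := Finset.mem_range.mp hi
          exact hsort (i + 1) (d - 1) (by omega) (by omega))
      simpa using h
    calc ‖r (d - 1)‖ ^ (d - 1) * A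
        ≤ (∏ i ∈ Finset.range (d - 1), ‖r (i + 1)‖) * A :=
          mul_le_mul_of_nonneg_right hlow hA0.le
      _ = 1 := by rw [← hsplit, hprod]
  -- |r (d-1)| ≤ A^(-(1/(d-1)))
  have hBle : ‖r (d - 1)‖ ≤ A ^ (-(1 / ((d : ℝ) - 1))) := by
    set B : ℝ := ‖r (d - 1)‖ with hB
    have hB0 : 0 ≤ B := norm_nonneg _
    have hn1 : (0:ℝ) < ((d - 1 : ℕ) : ℝ) := by
      rw [hdcast]
      have : (3:ℝ) ≤ (d:ℝ) := by exact_mod_cast hd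
      linarith
    have hBn : B ^ (d - 1) ≤ A⁻¹ := by
      rw [← mul_le_mul_iff_of_pos_right hA0, inv_mul_cancel₀ (ne_of_gt hA0)]
      exact hlastpow
    have h1 : B ≤ (A⁻¹) ^ (1 / (((d - 1 : ℕ)) : ℝ)) := by
      have hid : B = ((B ^ (d - 1) : ℝ)) ^ (1 / (((d - 1 : ℕ)) : ℝ)) := by
        rw [← Real.rpow_natCast B (d - 1), ← Real.rpow_mul hB0, mul_one_div,
          div_self (ne_of_gt hn1), Real.rpow_one]
      rw [hid]
      exact Real.rpow_le_rpow (by positivity) hBn (by positivity)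
    rw [Real.inv_rpow hA0.le, ← Real.rpow_neg hA0.le, hdcast] at h1
    exact h1
  have hfirst : ‖r m‖ < 2 * A ^ (-(1 / ((d : ℝ) - 1))) := by
    have := hltd
    nlinarith [hBle, hltd]
  refine ⟨hfirst, ?_⟩
  -- height bound
  have hd_mem : d ∈ p.support := by
    rw [Polynomial.mem_support_iff]
    have : p.coeff d = 1 := by rw [← hdeg]; exact hmonic.coeff_natDegree
    simp [this]
  have hH1 : 1 ≤ polyHeight p := by
    have hc : p.coeff d = 1 := by rw [← hdeg]; exact hmonic.coeff_natDegree
    have h : (p.coeff d).natAbs ≤ polyHeight p :=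
      Finset.le_sup (f := fun i => (p.coeff i).natAbs) hd_mem
    rw [hc] at h
    simpa using h
  have hHpos : (0:ℝ) < (polyHeight p : ℝ) := by exact_mod_cast hH1
  obtain ⟨k, hk, hHk⟩ := Finset.exists_mem_eq_sup p.support ⟨d, hd_mem⟩
    (fun i => (p.coeff i).natAbs)
  have hkd : k ≤ d := by
    rw [← hdeg]
    exact Polynomial.le_natDegree_of_mem_supp k hk
  -- M bound
  set M : ℝ := ∏ i ∈ Finset.range d, max 1 (‖r i‖) with hM
  have hM0 : (0:ℝ) ≤ M := Finset.prod_nonneg fun i _ => le_trans zero_le_one (le_max_left _ _)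
  have hMA : M ≤ A ^ m := by
    have hstep : M ≤ ∏ i ∈ Finset.range d, (if i < m then A else 1) := by
      refine Finset.prod_le_prod (fun i _ => le_trans zero_le_one (le_max_left _ _)) ?_
      intro i hi
      rw [Finset.mem_range] at hi
      by_cases him : i < m
      · rw [if_pos him]
        refine max_le hA1 ?_
        exact hsort 0 i (Nat.zero_le i) hi
      · rw [if_neg him]
        refine max_le le_rfl ?_
        exact le_trans (hsort m i (by omega) hi) hrm1
    have heq : ∏ i ∈ Finset.range d, (if i < m then A else 1) = A ^ m := by
      rw [Finset.prod_ite, Finset.prod_const, Finset.prod_const_one, mul_one]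
      congr 1
      have : Finset.filter (fun i => i < m) (Finset.range d) = Finset.range m := by
        ext i
        simp only [Finset.mem_filter, Finset.mem_range]
        omega
      rw [this, Finset.card_range]
    rw [heq] at hstep
    exact hstep
  -- coefficient bound
  have hq_eq : (q.roots.map fun a => Polynomial.X - Polynomial.C a).prod = q :=
    Polynomial.prod_multiset_X_sub_C_of_monic_of_roots_card_eq hqmonic hcard'
  have hcoeffk : ‖q.coeff k‖ ≤ (2:ℝ) ^ d * M := by
    have hkc : k ≤ Multiset.card q.roots := by rw [hcard]; exact hkd
    have hco := Multiset.prod_X_sub_C_coeff q.roots hkc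
    rw [hq_eq] at hco
    rw [hco, norm_mul, norm_pow, norm_neg, norm_one, one_pow, one_mul]
    have hesymm := abs_esymm_le_aux q.roots (Multiset.card q.roots - k) M ?_
    · refine le_trans hesymm ?_
      refine mul_le_mul_of_nonneg_right ?_ hM0
      have hch : (Multiset.card q.roots).choose (Multiset.card q.roots - k) ≤ 2 ^ d := by
        rw [hcard]
        calc d.choose (d - k) ≤ ∑ i ∈ Finset.range (d + 1), d.choose i := by
              refine Finset.single_le_sum (fun i _ => Nat.zero_le _) ?_
              rw [Finset.mem_range]
              omega
          _ = 2 ^ d := Nat.sum_range_choose d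
      exact_mod_cast hch
    · intro t ht
      have hts : t ≤ q.roots := (Multiset.mem_powersetCard.mp ht).1
      rw [hroots] at hts
      exact prod_abs_le_aux d r t hts
  -- H ≤ 2^d * A^m
  have hHle : (polyHeight p : ℝ) ≤ (2:ℝ) ^ d * A ^ m := by
    have h1 : (polyHeight p : ℝ) = ‖q.coeff k‖ := by
      rw [hq, Polynomial.coeff_map]
      have : ‖(Int.castRingHom ℂ) (p.coeff k)‖ = ((p.coeff k).natAbs : ℝ) := by
        simp [Complex.norm_intCast, Nat.cast_natAbs]
      rw [this, polyHeight, hHk]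
    rw [h1]
    calc ‖q.coeff k‖ ≤ (2:ℝ) ^ d * M := hcoeffk
      _ ≤ (2:ℝ) ^ d * A ^ m := by
          refine mul_le_mul_of_nonneg_left hMA (by positivity)
  -- rpow manipulations
  set e : ℝ := 1 / ((m : ℝ) * ((d : ℝ) - 1)) with he
  have hdr : (2:ℝ) ≤ (d:ℝ) - 1 := by
    have : (3:ℝ) ≤ (d:ℝ) := by exact_mod_cast hd
    linarith
  have hm1 : (1:ℝ) ≤ (m:ℝ) := by exact_mod_cast hm0
  have hepos : 0 < e := by
    rw [he]
    positivity
  have he1 : e ≤ 1 := by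
    rw [he]
    rw [div_le_one (by positivity)]
    nlinarith
  have hstep1 : (polyHeight p : ℝ) ^ e ≤ ((2:ℝ) ^ d) ^ e * (A ^ m) ^ e := by
    rw [← Real.mul_rpow (by positivity) (by positivity)]
    exact Real.rpow_le_rpow hHpos.le hHle hepos.le
  have hstep3 : (A ^ m : ℝ) ^ e = A ^ (1 / ((d:ℝ) - 1)) := by
    rw [← Real.rpow_natCast A m, ← Real.rpow_mul hA0.le]
    congr 1
    rw [he]
    field_simp
  have hstep4 : ((2:ℝ) ^ d) ^ e ≤ (2:ℝ) ^ d := by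
    nth_rewrite 2 [← Real.rpow_one ((2:ℝ) ^ d)]
    exact Real.rpow_le_rpow_of_exponent_le (one_le_pow₀ one_le_two) he1
  have hchain : (polyHeight p : ℝ) ^ e ≤ (2:ℝ) ^ d * A ^ (1 / ((d:ℝ) - 1)) := by
    rw [hstep3] at hstep1
    refine le_trans hstep1 ?_
    exact mul_le_mul_of_nonneg_right hstep4 (Real.rpow_nonneg hA0.le _)
  -- invert
  have hX0 : (0:ℝ) < A ^ (1 / ((d:ℝ) - 1)) := Real.rpow_pos_of_pos hA0 _
  have hY0 : (0:ℝ) < (polyHeight p : ℝ) ^ e := Real.rpow_pos_of_pos hHpos _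
  have hinv : (A ^ (1 / ((d:ℝ) - 1)))⁻¹ ≤ (2:ℝ) ^ d * ((polyHeight p : ℝ) ^ e)⁻¹ := by
    rw [inv_le_iff_one_le_mul₀ hX0]
    calc (1:ℝ) = ((polyHeight p : ℝ) ^ e) * ((polyHeight p : ℝ) ^ e)⁻¹ := by
          rw [mul_inv_cancel₀ (ne_of_gt hY0)]
      _ ≤ ((2:ℝ) ^ d * A ^ (1 / ((d:ℝ) - 1))) * ((polyHeight p : ℝ) ^ e)⁻¹ :=
          mul_le_mul_of_nonneg_right hchain (by positivity)
      _ = (2:ℝ) ^ d * ((polyHeight p : ℝ) ^ e)⁻¹ * (A ^ (1 / ((d:ℝ) - 1))) := by ring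
  have hAneg : A ^ (-(1 / ((d:ℝ) - 1))) = (A ^ (1 / ((d:ℝ) - 1)))⁻¹ := Real.rpow_neg hA0.le _
  have hHneg : (polyHeight p : ℝ) ^ (-e) = ((polyHeight p : ℝ) ^ e)⁻¹ :=
    Real.rpow_neg hHpos.le _
  calc ‖r m‖ ≤ 2 * A ^ (-(1 / ((d:ℝ) - 1))) := le_of_lt hfirst
    _ ≤ 2 * ((2:ℝ) ^ d * ((polyHeight p : ℝ) ^ e)⁻¹) := by
        rw [hAneg]
        exact mul_le_mul_of_nonneg_left hinv (by norm_num)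
    _ = 2 ^ (d + 1) * (polyHeight p : ℝ) ^ (-(1 / ((m : ℝ) * ((d : ℝ) - 1)))) := by
        rw [← he, hHneg]
        ring
end

section
/- For every integer d ≥ 2, the set E_{1,d} equals the closed interval [0, d−1]; and for every integer d ≥ 3, the set E_{2,d} equals the convex hull in ℝ^2 of the four points (0,0), (d−1, 0), (1, d−2), and (0, (d−2)/2). -/
open Polynomial

lemma list_range_map_getD {α : Type*} (l : List α) (x : α) :
    (List.range l.length).map (fun i => l.getD i x) = l := by
  apply List.ext_getElem
  · simp
  · intro i h1 h2
    simp only [List.getElem_map, List.getElem_range]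
    exact List.getD_eq_getElem l x h2

lemma exists_sortedRoots (d : ℕ) (q : Polynomial ℂ) (h : Multiset.card q.roots = d) :
    ∃ r : ℕ → ℂ, SortedRoots d q r := by
  classical
  set le : ℂ → ℂ → Bool := fun x y => decide (‖y‖ ≤ ‖x‖) with hle
  set L : List ℂ := q.roots.toList.mergeSort le with hL
  have hperm : L.Perm q.roots.toList := List.mergeSort_perm _ _
  have hlen : L.length = d := by
    rw [hperm.length_eq, Multiset.length_toList, h]
  refine ⟨fun i => L.getD i 0, ?_, ?_⟩
  · have : (↑L : Multiset ℂ) = q.roots := by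
      rw [Multiset.coe_eq_coe.2 hperm, Multiset.coe_toList]
    rw [← this]
    have : (Multiset.range d).map (fun i => L.getD i 0)
        = ((List.range d).map (fun i => L.getD i 0) : List ℂ) := by
      rfl
    rw [this, ← hlen, list_range_map_getD]
  · intro i j hij hj
    rcases eq_or_lt_of_le hij with rfl | hij'
    · exact le_refl _
    · have hsorted := List.pairwise_mergeSort (le := le)
        (fun a b c hab hbc => by
          simp only [hle, decide_eq_true_eq] at *
          exact le_trans hbc hab)
        (fun a b => by
          simp only [hle, Bool.or_eq_true, decide_eq_true_eq]
          exact le_total (‖b‖) (‖a‖))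
        q.roots.toList
      rw [← hL] at hsorted
      rw [List.pairwise_iff_getElem] at hsorted
      have hi : i < L.length := by omega
      have hj' : j < L.length := by omega
      have := hsorted i j hi hj' hij'
      simp only [hle, decide_eq_true_eq] at this
      simpa only [List.getD_eq_getElem L 0 hi, List.getD_eq_getElem L 0 hj'] using this
open Polynomial

-- product of moduli of listed roots equals |constant coeff|
lemma prod_abs_roots_eq (d : ℕ) (q : Polynomial ℂ) (r : ℕ → ℂ) (hm : q.Monic)
    (hd : q.natDegree = d) (hsr : SortedRoots d q r) :
    ∏ i ∈ Finset.range d, ‖r i‖ = ‖q.coeff 0‖ := by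
  have hsplit : Splits q := IsAlgClosed.splits q
  have h0 : q.coeff 0 = (-1) ^ q.natDegree * q.roots.prod :=
    hsplit.coeff_zero_eq_prod_roots_of_monic hm
  have hprod : q.roots.prod = ∏ i ∈ Finset.range d, r i := by
    rw [hsr.1, Finset.prod, Finset.range_val]
  rw [h0, norm_mul, norm_pow]
  have : ‖(-1 : ℂ)‖ = 1 := by simp
  rw [this, one_pow, one_mul, hprod, norm_prod]

lemma int_coeff_abs_ge_one {n : ℤ} (hn : n ≠ 0) : (1:ℝ) ≤ ‖(n : ℂ)‖ := by
  rw [Complex.norm_intCast]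
  rw [← Int.cast_abs]
  exact_mod_cast Int.one_le_abs hn

-- for p monic irreducible with natDegree = d ≥ 2, the constant coeff is nonzero
lemma coeff_zero_ne_zero {p : Polynomial ℤ} (hm : p.Monic) (hi : Irreducible p)
    (hd2 : 2 ≤ p.natDegree) : p.coeff 0 ≠ 0 := by
  intro h
  have hX : (X : Polynomial ℤ) ∣ p := X_dvd_iff.2 h
  obtain ⟨t, ht⟩ := hX
  rcases hi.isUnit_or_isUnit ht with h1 | h2
  · exact Polynomial.not_isUnit_X h1
  · have : t.natDegree = 0 := Polynomial.natDegree_eq_zero_of_isUnit h2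
    have : p.natDegree = 1 := by
      have ht0 : t ≠ 0 := by
        rintro rfl
        rw [mul_zero] at ht
        rw [ht] at hd2
        simp at hd2
      rw [ht, Polynomial.natDegree_mul (X_ne_zero) ht0]
      simp [this]
    omega

section
variable {d : ℕ} {p : Polynomial ℤ} {r : ℕ → ℂ}
  (hm : p.Monic) (hi : Irreducible p) (hd : p.natDegree = d) (hd2 : 2 ≤ d)
  (hsr : SortedRoots d (p.map (Int.castRingHom ℂ)) r)

include hm hd hsr

lemma prod_abs_ge_one (hi : Irreducible p) (hd2 : 2 ≤ d) :
    (1:ℝ) ≤ ∏ i ∈ Finset.range d, ‖r i‖ := by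
  have hm' : (p.map (Int.castRingHom ℂ)).Monic := hm.map _
  have hd' : (p.map (Int.castRingHom ℂ)).natDegree = d := by
    rw [hm.natDegree_map]; exact hd
  rw [prod_abs_roots_eq d _ r hm' hd' hsr]
  rw [Polynomial.coeff_map]
  exact int_coeff_abs_ge_one (coeff_zero_ne_zero hm hi (hd ▸ hd2))

lemma abs_root_pos (hi : Irreducible p) (hd2 : 2 ≤ d) {i : ℕ} (hid : i < d) :
    0 < ‖r i‖ := by
  rcases eq_or_ne (r i) 0 with h | h
  · exfalso
    have hmem : r i ∈ (p.map (Int.castRingHom ℂ)).roots := by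
      rw [hsr.1]
      exact Multiset.mem_map_of_mem r (Multiset.mem_range.2 hid)
    have hroot := isRoot_of_mem_roots hmem
    rw [IsRoot, h] at hroot
    have : (p.map (Int.castRingHom ℂ)).coeff 0 = 0 := by
      rwa [Polynomial.coeff_zero_eq_eval_zero]
    rw [Polynomial.coeff_map] at this
    have h0 : p.coeff 0 = 0 := by
      have := this
      simp only [Int.castRingHom, eq_intCast, Int.cast_eq_zero] at this
      exact this
    exact coeff_zero_ne_zero hm hi (hd ▸ hd2) h0
  · exact norm_pos_iff.2 h

lemma one_le_abs_r0 (hi : Irreducible p) (hd2 : 2 ≤ d) : (1:ℝ) ≤ ‖r 0‖ := by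
  by_contra hlt
  push_neg at hlt
  have h1 := prod_abs_ge_one hm hd hsr hi hd2
  have : ∏ i ∈ Finset.range d, ‖r i‖ < 1 := by
    calc ∏ i ∈ Finset.range d, ‖r i‖
        ≤ ∏ _i ∈ Finset.range d, ‖r 0‖ := by
          apply Finset.prod_le_prod
          · intro i _; positivity
          · intro i hi'
            exact hsr.2 0 i (Nat.zero_le i) (Finset.mem_range.1 hi')
      _ = ‖r 0‖ ^ d := by rw [Finset.prod_const, Finset.card_range]
      _ < 1 := pow_lt_one₀ (by positivity) hlt (by omega)
  linarith

end
open Polynomial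

section absestimates
variable (z : ℂ) (A : ℝ)

lemma abs_sub_ge_left (hA : 0 ≤ A) : ‖z‖ - A ≤ ‖z - A‖ := by
  have h1 : ‖z‖ ≤ ‖z - A‖ + ‖(A:ℂ)‖ := by
    calc ‖z‖ = ‖(z - A) + A‖ := by ring_nf
      _ ≤ _ := norm_add_le _ _
  rw [Complex.norm_real, Real.norm_eq_abs, abs_of_nonneg hA] at h1
  linarith

lemma abs_sub_ge_right (hA : 0 ≤ A) : A - ‖z‖ ≤ ‖z - A‖ := by
  have h1 : ‖(A:ℂ)‖ ≤ ‖(A:ℂ) - z‖ + ‖z‖ :=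
    calc ‖(A:ℂ)‖ = ‖((A:ℂ) - z) + z‖ := by ring_nf
      _ ≤ _ := norm_add_le _ _
  rw [norm_sub_rev, Complex.norm_real, Real.norm_eq_abs, abs_of_nonneg hA] at h1
  linarith

lemma abs_sub_le' : ‖z - A‖ ≤ ‖z‖ + |A| := by
  calc ‖z - A‖ ≤ ‖z‖ + ‖(A:ℂ)‖ := norm_sub_le _ _
    _ = ‖z‖ + |A| := by rw [Complex.norm_real, Real.norm_eq_abs]

end absestimates

section famAroots
-- z^m (z - A) = 1, A ≥ 5 real, m ≥ 1
variable {m : ℕ} {A : ℝ} {z : ℂ}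

lemma famA_abs_eq (hz : z^m * (z - (A:ℂ)) = 1) :
    ‖z‖ ^ m * ‖z - (A:ℂ)‖ = 1 := by
  have := congrArg norm hz
  rwa [norm_mul, norm_pow, norm_one] at this

-- (i) |z| ≤ A + 1
lemma famA_abs_le (hm : 1 ≤ m) (hA : 5 ≤ A) (hz : z^m * (z - (A:ℂ)) = 1) :
    ‖z‖ ≤ A + 1 := by
  by_contra h
  push_neg at h
  have h0 : (0:ℝ) ≤ ‖z‖ := norm_nonneg z
  have hgt : (1:ℝ) < ‖z‖ := by linarith
  have h2 : (1:ℝ) < ‖z - (A:ℂ)‖ := by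
    have := abs_sub_ge_left z A (by linarith)
    linarith
  have h3 : (1:ℝ) < ‖z‖ ^ m := by
    calc (1:ℝ) < ‖z‖ := hgt
      _ = ‖z‖ ^ 1 := (pow_one _).symm
      _ ≤ ‖z‖ ^ m := pow_le_pow_right₀ (le_of_lt hgt) hm
  nlinarith [famA_abs_eq hz]

-- (ii) dichotomy small side
lemma famA_small (hm : 1 ≤ m) (hA : 5 ≤ A) (hz : z^m * (z - (A:ℂ)) = 1)
    (hs : ‖z‖ ≤ A - 1) :
    ‖z‖ ≤ 1 ∧ ‖z‖ ^ m ≤ 1/(A-1) := by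
  have h0 : (0:ℝ) ≤ ‖z‖ := norm_nonneg z
  have heq := famA_abs_eq hz
  have h1 : 1 ≤ ‖z - (A:ℂ)‖ := by
    have := abs_sub_ge_right z A (by linarith)
    linarith
  have h2 : ‖z‖ ^ m ≤ 1 := by
    nlinarith [pow_nonneg h0 m]
  have h3 : ‖z‖ ≤ 1 := by
    by_contra hc
    push_neg at hc
    have : 1 < ‖z‖ ^ m := one_lt_pow₀ hc (by omega)
    linarith
  refine ⟨h3, ?_⟩
  have h4 : A - 1 ≤ ‖z - (A:ℂ)‖ := by
    have := abs_sub_ge_right z A (by linarith)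
    linarith
  -- |z|^m = 1/|z-A| ≤ 1/(A-1)
  have h5 : ‖z‖ ^ m * (A - 1) ≤ ‖z‖ ^ m * ‖z - (A:ℂ)‖ :=
    mul_le_mul_of_nonneg_left h4 (pow_nonneg h0 m)
  rw [heq] at h5
  have hApos : (0:ℝ) < A - 1 := by linarith
  rw [le_div_iff₀ hApos]
  linarith

-- (iii) |z|^m ≥ 1/(2A+2)
lemma famA_low (hm : 1 ≤ m) (hA : 5 ≤ A) (hz : z^m * (z - (A:ℂ)) = 1) :
    1/(2*A+2) ≤ ‖z‖ ^ m := by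
  have h0 : (0:ℝ) ≤ ‖z‖ := norm_nonneg z
  have heq := famA_abs_eq hz
  have h1 : ‖z - (A:ℂ)‖ ≤ 2*A + 2 := by
    have hle := abs_sub_le' z A
    have h2 := famA_abs_le hm hA hz
    rw [abs_of_nonneg (by linarith : (0:ℝ) ≤ A)] at hle
    linarith
  have hpos : 0 < ‖z‖ ^ m := by
    rcases eq_or_lt_of_le (pow_nonneg h0 m) with h | h
    · exfalso; rw [← h] at heq; simp at heq
    · exact h
  rw [div_le_iff₀ (by linarith : (0:ℝ) < 2*A+2)]
  nlinarith

end famAroots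

section famBroots
variable {m : ℕ} {A : ℝ} {z : ℂ}

lemma famB_abs_eq (hz : z^m * (z^2 + (A:ℂ)) = 1) :
    ‖z‖ ^ m * ‖z^2 + (A:ℂ)‖ = 1 := by
  have := congrArg norm hz
  rwa [norm_mul, norm_pow, norm_one] at this

lemma absB_ge_right (z : ℂ) (A : ℝ) (hA : 0 ≤ A) :
    A - ‖z‖ ^ 2 ≤ ‖z^2 + (A:ℂ)‖ := by
  have h1 : ‖(A:ℂ)‖ ≤ ‖z^2 + A‖ + ‖z^2‖ := by
    calc ‖(A:ℂ)‖ = ‖(z^2 + A) + (-(z^2))‖ := by ring_nf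
      _ ≤ _ := by
          have := norm_add_le (z^2 + A) (-(z^2))
          rwa [norm_neg] at this
  rw [Complex.norm_real, Real.norm_eq_abs, abs_of_nonneg hA, norm_pow] at h1
  linarith

lemma absB_ge_left (z : ℂ) (A : ℝ) (hA : 0 ≤ A) :
    ‖z‖ ^ 2 - A ≤ ‖z^2 + (A:ℂ)‖ := by
  have h1 : ‖z^2‖ ≤ ‖z^2 + A‖ + ‖(A:ℂ)‖ := by
    calc ‖z^2‖ = ‖(z^2 + A) + (-(A:ℂ))‖ := by ring_nf
      _ ≤ _ := by
          have := norm_add_le (z^2 + A) (-(A:ℂ))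
          rwa [norm_neg] at this
  rw [Complex.norm_real, Real.norm_eq_abs, abs_of_nonneg hA, norm_pow] at h1
  linarith

lemma absB_le (z : ℂ) (A : ℝ) (hA : 0 ≤ A) :
    ‖z^2 + (A:ℂ)‖ ≤ ‖z‖ ^ 2 + A := by
  calc ‖z^2 + A‖ ≤ ‖z^2‖ + ‖(A:ℂ)‖ := norm_add_le _ _
    _ = ‖z‖ ^ 2 + A := by rw [Complex.norm_real, Real.norm_eq_abs, abs_of_nonneg hA, norm_pow]

-- (i) |z|² ≤ A+1
lemma famB_abs_le (hm : 1 ≤ m) (hA : 10 ≤ A) (hz : z^m * (z^2 + (A:ℂ)) = 1) :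
    ‖z‖ ^ 2 ≤ A + 1 := by
  by_contra h
  push_neg at h
  have h0 : (0:ℝ) ≤ ‖z‖ := norm_nonneg z
  have hgt : (1:ℝ) < ‖z‖ := by nlinarith
  have h2 : (1:ℝ) ≤ ‖z^2 + (A:ℂ)‖ := by
    have := absB_ge_left z A (by linarith)
    linarith
  have h3 : (1:ℝ) < ‖z‖ ^ m := by
    calc (1:ℝ) < ‖z‖ := hgt
      _ = ‖z‖ ^ 1 := (pow_one _).symm
      _ ≤ ‖z‖ ^ m := pow_le_pow_right₀ (le_of_lt hgt) hm
  nlinarith [famB_abs_eq hz]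

-- (ii) small side
lemma famB_small (hm : 1 ≤ m) (hA : 10 ≤ A) (hz : z^m * (z^2 + (A:ℂ)) = 1)
    (hs : ‖z‖ ^ 2 ≤ A - 1) :
    ‖z‖ ≤ 1 ∧ ‖z‖ ^ m ≤ 1/(A-1) := by
  have h0 : (0:ℝ) ≤ ‖z‖ := norm_nonneg z
  have heq := famB_abs_eq hz
  have h1 : 1 ≤ ‖z^2 + (A:ℂ)‖ := by
    have := absB_ge_right z A (by linarith)
    linarith
  have h2 : ‖z‖ ^ m ≤ 1 := by nlinarith [pow_nonneg h0 m]
  have h3 : ‖z‖ ≤ 1 := by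
    by_contra hc
    push_neg at hc
    have : 1 < ‖z‖ ^ m := one_lt_pow₀ hc (by omega)
    linarith
  refine ⟨h3, ?_⟩
  have h4 : A - 1 ≤ ‖z^2 + (A:ℂ)‖ := by
    have := absB_ge_right z A (by linarith)
    nlinarith
  have h5 : ‖z‖ ^ m * (A - 1) ≤ 1 := by
    nlinarith [pow_nonneg h0 m]
  have hApos : (0:ℝ) < A - 1 := by linarith
  rw [le_div_iff₀ hApos]
  linarith

-- (iii) lower bound
lemma famB_low (hm : 1 ≤ m) (hA : 10 ≤ A) (hz : z^m * (z^2 + (A:ℂ)) = 1) :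
    1/(2*A+1) ≤ ‖z‖ ^ m := by
  have h0 : (0:ℝ) ≤ ‖z‖ := norm_nonneg z
  have heq := famB_abs_eq hz
  have h1 : ‖z^2 + (A:ℂ)‖ ≤ 2*A + 1 := by
    have hle := absB_le z A (by linarith)
    have h2 := famB_abs_le hm hA hz
    linarith
  have hpos : 0 < ‖z‖ ^ m := by
    rcases eq_or_lt_of_le (pow_nonneg h0 m) with h | h
    · exfalso; rw [← h] at heq; simp at heq
    · exact h
  rw [div_le_iff₀ (by linarith : (0:ℝ) < 2*A+1)]
  nlinarith

-- (iv) big roots are not real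
lemma famB_big_not_real (hm : 1 ≤ m) (hA : 10 ≤ A) (hz : z^m * (z^2 + (A:ℂ)) = 1)
    (hbig : A - 1 < ‖z‖ ^ 2) (hre : z.im = 0) : False := by
  have h0 : (0:ℝ) ≤ ‖z‖ := norm_nonneg z
  have heq := famB_abs_eq hz
  have hz2 : (2:ℝ) ≤ ‖z‖ := by nlinarith
  have h3 : (2:ℝ) ≤ ‖z‖ ^ m := by
    calc (2:ℝ) ≤ ‖z‖ := hz2
      _ = ‖z‖ ^ 1 := (pow_one _).symm
      _ ≤ ‖z‖ ^ m := pow_le_pow_right₀ (by linarith) hm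
  have hre2 : A ≤ (z^2 + (A:ℂ)).re := by
    simp [Complex.add_re, Complex.sq_norm, Complex.ofReal_re, pow_two, Complex.mul_re, hre, mul_self_nonneg z.re]
  have h4 : A ≤ ‖z^2 + (A:ℂ)‖ := le_trans hre2 (Complex.re_le_norm _)
  nlinarith

end famBroots

/-! ## Factorization helpers -/

lemma multiset_prod_map_le (S : Multiset ℂ) (f : ℂ → ℝ) (b : ℝ) (hb : 0 ≤ b)
    (h : ∀ z ∈ S, 0 ≤ f z ∧ f z ≤ b) : (S.map f).prod ≤ b ^ Multiset.card S := by
  induction S using Multiset.induction with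
  | empty => simp
  | cons a s ih =>
    simp only [Multiset.map_cons, Multiset.prod_cons, Multiset.card_cons, pow_succ]
    have ha := h a (Multiset.mem_cons_self a s)
    have hs : ∀ z ∈ s, 0 ≤ f z ∧ f z ≤ b := fun z hz => h z (Multiset.mem_cons_of_mem hz)
    have h1 := ih hs
    have h2 : (0:ℝ) ≤ (s.map f).prod := Multiset.prod_nonneg (by
      intro x hx
      obtain ⟨z, hz, rfl⟩ := Multiset.mem_map.1 hx
      exact (hs z hz).1)
    calc f a * (s.map f).prod ≤ b * (s.map f).prod := mul_le_mul_of_nonneg_right ha.2 h2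
      _ ≤ b * b ^ Multiset.card s := mul_le_mul_of_nonneg_left h1 hb
      _ = b ^ Multiset.card s * b := mul_comm _ _

lemma exists_monic_factors (p : Polynomial ℤ) (hm : p.Monic) (hd : 2 ≤ p.natDegree)
    (hni : ¬Irreducible p) :
    ∃ q s : Polynomial ℤ, q.Monic ∧ s.Monic ∧ p = q * s ∧
      1 ≤ q.natDegree ∧ 1 ≤ s.natDegree := by
  have hpu : ¬IsUnit p := by
    intro h
    have := Polynomial.natDegree_eq_zero_of_isUnit h
    omega
  rw [irreducible_iff] at hni
  push_neg at hni
  obtain ⟨q, s, hqs, hqu, hsu⟩ := hni hpu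
  have hp0 : p ≠ 0 := hm.ne_zero
  have hq0 : q ≠ 0 := by rintro rfl; simp at hqs; exact hp0 hqs
  have hs0 : s ≠ 0 := by rintro rfl; simp at hqs; exact hp0 hqs
  have hlc : q.leadingCoeff * s.leadingCoeff = 1 := by
    rw [← Polynomial.leadingCoeff_mul, ← hqs, hm.leadingCoeff]
  have hdq : 1 ≤ q.natDegree := by
    by_contra h
    push_neg at h
    have hq' : q.natDegree = 0 := by omega
    obtain ⟨c, rfl⟩ : ∃ c, q = C c := ⟨q.coeff 0, Polynomial.eq_C_of_natDegree_eq_zero hq'⟩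
    apply hqu
    rw [Polynomial.isUnit_C]
    refine IsUnit.of_mul_eq_one s.leadingCoeff ?_
    have hcl : (C c).leadingCoeff = c := Polynomial.leadingCoeff_C c
    rw [← hcl]; exact hlc
  have hds : 1 ≤ s.natDegree := by
    by_contra h
    push_neg at h
    have hs' : s.natDegree = 0 := by omega
    obtain ⟨c, rfl⟩ : ∃ c, s = C c := ⟨s.coeff 0, Polynomial.eq_C_of_natDegree_eq_zero hs'⟩
    apply hsu
    rw [Polynomial.isUnit_C]
    apply IsUnit.of_mul_eq_one q.leadingCoeff
    rw [mul_comm]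
    have hcl : (C c).leadingCoeff = c := Polynomial.leadingCoeff_C c
    rw [← hcl]; exact hlc
  rcases Int.isUnit_iff.1 (IsUnit.of_mul_eq_one _ hlc) with h1 | h1
  · refine ⟨q, s, h1, ?_, hqs, hdq, hds⟩
    have : s.leadingCoeff = 1 := by
      rw [h1, one_mul] at hlc; exact hlc
    exact this
  · refine ⟨-q, -s, ?_, ?_, by rw [neg_mul_neg]; exact hqs, by simpa using hdq,
      by simpa using hds⟩
    · show (-q).leadingCoeff = 1
      rw [Polynomial.leadingCoeff_neg, h1]; ring
    · show (-s).leadingCoeff = 1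
      rw [Polynomial.leadingCoeff_neg]
      have : s.leadingCoeff = -1 := by
        rw [h1] at hlc; linarith
      rw [this]; ring

lemma abs_prod_roots_map (q : Polynomial ℤ) (hq : q.Monic)
    (hc : q.coeff 0 = 1 ∨ q.coeff 0 = -1) :
    (((q.map (Int.castRingHom ℂ)).roots).map norm).prod = 1 := by
  set q' := q.map (Int.castRingHom ℂ) with hq'
  have hm' : q'.Monic := hq.map _
  have hsplit : Splits q' := IsAlgClosed.splits q'
  have h0 : q'.coeff 0 = (-1) ^ q'.natDegree * q'.roots.prod :=
    hsplit.coeff_zero_eq_prod_roots_of_monic hm'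
  have h1 : ‖q'.coeff 0‖ = 1 := by
    rw [hq', Polynomial.coeff_map]
    rcases hc with h | h <;> simp [h]
  rw [h0, norm_mul, norm_pow] at h1
  have h2 : ‖(-1 : ℂ)‖ = 1 := by simp
  rw [h2, one_pow, one_mul] at h1
  exact (map_multiset_prod (normHom (α := ℂ)) _).symm.trans h1

lemma small_factor_false (mm : ℕ) (hmm : 1 ≤ mm) (q : Polynomial ℤ) (hq : q.Monic)
    (hdeg : 1 ≤ q.natDegree) (hc : q.coeff 0 = 1 ∨ q.coeff 0 = -1) (b : ℝ) (hb0 : 0 ≤ b)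
    (hb1 : b < 1)
    (hsmall : ∀ z ∈ (q.map (Int.castRingHom ℂ)).roots, ‖z‖ ^ mm ≤ b) : False := by
  set q' := q.map (Int.castRingHom ℂ) with hq'
  have hm' : q'.Monic := hq.map _
  have hcard : Multiset.card q'.roots = q.natDegree := by
    rw [Polynomial.splits_iff_card_roots.1 (IsAlgClosed.splits q')]
    exact hq.natDegree_map _
  have h1 : ((q'.roots).map norm).prod = 1 := abs_prod_roots_map q hq hc
  have h2 : ((q'.roots).map (fun z => ‖z‖ ^ mm)).prod = 1 := by
    rw [Multiset.prod_map_pow, h1, one_pow]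
  have h3 : ((q'.roots).map (fun z => ‖z‖ ^ mm)).prod ≤ b ^ Multiset.card q'.roots :=
    multiset_prod_map_le _ _ b hb0 (fun z hz => ⟨by positivity, hsmall z hz⟩)
  have h4 : b ^ Multiset.card q'.roots ≤ b ^ 1 :=
    pow_le_pow_of_le_one hb0 (le_of_lt hb1) (by omega)
  rw [h2] at h3
  rw [pow_one] at h4
  linarith


section famAmain

set_option maxHeartbeats 1000000 in
lemma famA_exists (d : ℕ) (hd : 2 ≤ d) (a : ℕ) (ha : 5 ≤ a) :
    ∃ (p : Polynomial ℤ) (r : ℕ → ℂ), p.Monic ∧ Irreducible p ∧ p.natDegree = d ∧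
      SortedRoots d (p.map (Int.castRingHom ℂ)) r ∧
      ‖r 0‖ ≤ (a:ℝ) + 1 ∧
      ∀ i, 1 ≤ i → i < d → ‖r i‖ ≤ 1 ∧
        ‖r i‖ ^ (d-1) ≤ 1/((a:ℝ)-1) := by
  classical
  set m : ℕ := d - 1 with hmdef
  have hm1 : 1 ≤ m := by omega
  have hdm : d = m + 1 := by omega
  set A : ℝ := (a:ℝ) with hAdef
  have hA : 5 ≤ A := by rw [hAdef]; exact_mod_cast ha
  set p : Polynomial ℤ := X^(m+1) - C (a:ℤ) * X^m - 1 with hpdef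
  have hpm : p.Monic := by
    rw [hpdef]
    monicity!
  have hpd : p.natDegree = d := by
    rw [hpdef, hdm]
    compute_degree!
  have hp0 : p.coeff 0 = -1 := by
    have h1 : m + 1 ≠ 0 := by omega
    have h2 : m ≠ 0 := by omega
    simp [hpdef, coeff_one, coeff_X_pow, h1, h2, coeff_C_mul, Ne.symm h1, Ne.symm h2]
  set p' : Polynomial ℂ := p.map (Int.castRingHom ℂ) with hp'def
  have hpm' : p'.Monic := hpm.map _
  have hp'0 : p' ≠ 0 := hpm'.ne_zero
  have hcard : Multiset.card p'.roots = d := by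
    rw [Polynomial.splits_iff_card_roots.1 (IsAlgClosed.splits p'),
      hpm.natDegree_map, hpd]
  obtain ⟨r, hsr⟩ := exists_sortedRoots d p' hcard
  -- the root equation
  have hroot_eq : ∀ z ∈ p'.roots, z^m * (z - (A:ℂ)) = 1 := by
    intro z hz
    have hroot := isRoot_of_mem_roots hz
    rw [IsRoot, hp'def, hpdef] at hroot
    simp only [Polynomial.map_sub, Polynomial.map_mul, Polynomial.map_pow, Polynomial.map_one,
      Polynomial.map_X, Polynomial.map_C, eval_sub, eval_mul, eval_pow, eval_X, eval_one,
      eval_C] at hroot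
    have hcast : (Int.castRingHom ℂ) ((a:ℕ):ℤ) = ((A:ℝ):ℂ) := by
      rw [hAdef]; push_cast; simp
    rw [hcast] at hroot
    have hzm : z^(m+1) = z^m * z := by ring
    linear_combination hroot
  have hmem : ∀ i, i < d → r i ∈ p'.roots := by
    intro i hi
    rw [hsr.1]
    exact Multiset.mem_map_of_mem r (Multiset.mem_range.2 hi)
  -- product of all |r i| equals 1
  have hprod : ∏ i ∈ Finset.range d, ‖r i‖ = 1 := by
    have := prod_abs_roots_eq d p' r hpm' (by rw [hpm.natDegree_map, hpd]) hsr
    rw [this, hp'def, Polynomial.coeff_map, hp0]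
    simp
  -- all roots with index ≥ 1 are at most A - 1
  have hsmall_idx : ∀ i, 1 ≤ i → i < d → ‖r i‖ ≤ A - 1 := by
    intro i hi1 hid
    by_contra hbig
    push_neg at hbig
    have h1 : A - 1 < ‖r 1‖ :=
      lt_of_lt_of_le hbig (hsr.2 1 i hi1 hid)
    have h0 : A - 1 < ‖r 0‖ :=
      lt_of_lt_of_le h1 (hsr.2 0 1 (by omega) (by omega))
    -- m-th powers product
    have hQ : ∏ j ∈ Finset.range d, ‖r j‖ ^ m = 1 := by
      rw [Finset.prod_pow, hprod, one_pow]
    rw [hdm] at hQ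
    have hsplit : ∏ j ∈ Finset.range (m+1), ‖r j‖ ^ m
        = (∏ j ∈ Finset.range 2, ‖r j‖ ^ m) *
          ∏ j ∈ Finset.range (m-1), ‖r (2 + j)‖ ^ m := by
      have h2 : m + 1 = 2 + (m - 1) := by omega
      rw [h2, Finset.prod_range_add]
    have hlow : ∀ j, j < m - 1 → (1/(2*A+2)) ≤ ‖r (2+j)‖ ^ m := by
      intro j hj
      apply famA_low hm1 hA
      exact hroot_eq _ (hmem (2+j) (by omega))
    have hApos : (0:ℝ) < A - 1 := by linarith
    have h2Apos : (0:ℝ) < 2*A+2 := by linarith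
    have hrest : (1/(2*A+2)) ^ (m-1) ≤ ∏ j ∈ Finset.range (m-1), ‖r (2 + j)‖ ^ m := by
      calc (1/(2*A+2)) ^ (m-1) = ∏ _j ∈ Finset.range (m-1), (1/(2*A+2)) := by
            rw [Finset.prod_const, Finset.card_range]
        _ ≤ _ := by
            apply Finset.prod_le_prod
            · intro j _; positivity
            · intro j hj; exact hlow j (Finset.mem_range.1 hj)
    have hf0 : (A-1)^m ≤ ‖r 0‖ ^ m :=
      pow_le_pow_left₀ (by linarith) (le_of_lt h0) m
    have hf1 : (A-1)^m ≤ ‖r 1‖ ^ m :=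
      pow_le_pow_left₀ (by linarith) (le_of_lt h1) m
    have hfirst : (A-1)^m * (A-1)^m ≤ ∏ j ∈ Finset.range 2, ‖r j‖ ^ m := by
      rw [Finset.prod_range_succ, Finset.prod_range_one]
      exact mul_le_mul hf0 hf1 (pow_nonneg (by linarith) m)
        (pow_nonneg (norm_nonneg _) m)
    have h2m : (A-1)^(2*m) = (A-1)^m * (A-1)^m := by
      rw [← pow_add]; congr 1; omega
    have hkey : (A-1)^(2*m) * (1/(2*A+2))^(m-1) ≤ 1 := by
      have hle1 : (A-1)^(2*m) * (1/(2*A+2))^(m-1)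
          ≤ (∏ j ∈ Finset.range 2, ‖r j‖ ^ m) *
            ∏ j ∈ Finset.range (m-1), ‖r (2 + j)‖ ^ m := by
        rw [h2m]
        apply mul_le_mul hfirst hrest (by positivity)
        exact Finset.prod_nonneg (fun j _ => pow_nonneg (norm_nonneg _) m)
      have hle2 : (∏ j ∈ Finset.range 2, ‖r j‖ ^ m) *
          ∏ j ∈ Finset.range (m-1), ‖r (2 + j)‖ ^ m = 1 := by
        rw [← hsplit]; exact hQ
      linarith
    -- now derive contradiction
    have hc1 : (2*A+2)^m ≤ (A-1)^(2*m) := by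
      have h2A : (2*A+2) ≤ (A-1)^2 := by nlinarith
      calc (2*A+2)^m ≤ ((A-1)^2)^m := pow_le_pow_left₀ (by linarith) h2A m
        _ = (A-1)^(2*m) := by rw [← pow_mul, mul_comm]
    have h1d : (1/(2*A+2))^(m-1) = ((2*A+2)^(m-1))⁻¹ := by
      rw [one_div, inv_pow]
    rw [h1d] at hkey
    have hc2 : (2*A+2) ≤ (A-1)^(2*m) * ((2*A+2)^(m-1))⁻¹ := by
      have hppos : (0:ℝ) < (2*A+2)^(m-1) := pow_pos h2Apos _
      rw [← div_eq_mul_inv, le_div_iff₀ hppos]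
      calc (2*A+2) * (2*A+2)^(m-1) = (2*A+2)^m := by
            rw [← pow_succ']; congr 1; omega
        _ ≤ (A-1)^(2*m) := hc1
    linarith
  -- irreducibility
  have hirr : Irreducible p := by
    by_contra hni
    obtain ⟨q, s, hqm, hsm, hqs, hdq, hds⟩ := exists_monic_factors p hpm (hpd ▸ hd) hni
    have hq0s0 : q.coeff 0 * s.coeff 0 = -1 := by
      rw [← Polynomial.mul_coeff_zero, ← hqs, hp0]
    have hq0 : q.coeff 0 = 1 ∨ q.coeff 0 = -1 := by
      have : IsUnit (q.coeff 0) := IsUnit.of_mul_eq_one (-(s.coeff 0)) (by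
        linear_combination -hq0s0)
      exact Int.isUnit_iff.1 this
    have hs0 : s.coeff 0 = 1 ∨ s.coeff 0 = -1 := by
      have : IsUnit (s.coeff 0) := IsUnit.of_mul_eq_one (-(q.coeff 0)) (by
        linear_combination -hq0s0)
      exact Int.isUnit_iff.1 this
    set q' := q.map (Int.castRingHom ℂ) with hq'def
    set s' := s.map (Int.castRingHom ℂ) with hs'def
    have hmul : p' = q' * s' := by rw [hp'def, hqs, Polynomial.map_mul]
    have hq'0 : q' ≠ 0 := (hqm.map _).ne_zero
    have hs'0 : s' ≠ 0 := (hsm.map _).ne_zero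
    have hroots : p'.roots = q'.roots + s'.roots := by
      rw [hmul, Polynomial.roots_mul (by rw [← hmul]; exact hp'0)]
    -- counting big roots
    set Big : ℂ → Prop := fun z => A - 1 < ‖z‖ with hBigdef
    have hcount : Multiset.countP Big p'.roots ≤ 1 := by
      rw [hsr.1, Multiset.countP_map]
      have hsub : Multiset.filter (fun i => Big (r i)) (Multiset.range d) ⊆ {0} := by
        intro i hi
        rw [Multiset.mem_filter, Multiset.mem_range] at hi
        rw [Multiset.mem_singleton]
        by_contra hne
        have hge : 1 ≤ i := by omega
        have := hsmall_idx i hge hi.1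
        rw [hBigdef] at hi
        simp only at hi
        linarith [hi.2]
      have hnodup := (Multiset.nodup_range d).filter (fun i => Big (r i))
      have hle := (Multiset.le_iff_subset hnodup).2 hsub
      have := Multiset.card_le_card hle
      simpa using this
    have hcnt_add : Multiset.countP Big q'.roots + Multiset.countP Big s'.roots ≤ 1 := by
      rw [← Multiset.countP_add, ← hroots]
      exact hcount
    -- one factor has no big roots; derive contradiction from it
    have hfactor : ∀ (t : Polynomial ℤ), t.Monic → 1 ≤ t.natDegree →
        (t.coeff 0 = 1 ∨ t.coeff 0 = -1) →
        (t.map (Int.castRingHom ℂ) ∣ p') →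
        Multiset.countP Big (t.map (Int.castRingHom ℂ)).roots = 0 → False := by
      intro t htm htd htc htdvd hcnt
      apply small_factor_false m hm1 t htm htd htc (1/(A-1))
        (one_div_nonneg.2 (by linarith))
        (by rw [div_lt_one (by linarith)]; linarith)
      intro z hz
      have hzp : z ∈ p'.roots :=
        Multiset.mem_of_le (Polynomial.roots.le_of_dvd hp'0 htdvd) hz
      have hnb : ¬ Big z := Multiset.countP_eq_zero.1 hcnt z hz
      rw [hBigdef] at hnb
      simp only [not_lt] at hnb
      exact (famA_small hm1 hA (hroot_eq z hzp) hnb).2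
    rcases Nat.le_one_iff_eq_zero_or_eq_one.1 (le_trans (Nat.le_add_right _ _) hcnt_add)
      with h | h
    · exact hfactor q hqm hdq hq0 (Dvd.intro s' (by rw [hmul])) h
    · have hs_cnt : Multiset.countP Big s'.roots = 0 := by omega
      exact hfactor s hsm hds hs0 (Dvd.intro_left q' (by rw [hmul])) hs_cnt
  -- final bounds
  refine ⟨p, r, hpm, hirr, hpd, hsr, ?_, ?_⟩
  · have := famA_abs_le hm1 hA (hroot_eq _ (hmem 0 (by omega)))
    exact this
  · intro i hi1 hid
    have hsm := hsmall_idx i hi1 hid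
    exact famA_small hm1 hA (hroot_eq _ (hmem i hid)) hsm

end famAmain


lemma conj_mem_roots (q : Polynomial ℤ) {z : ℂ}
    (hz : z ∈ (q.map (Int.castRingHom ℂ)).roots) :
    (starRingEnd ℂ) z ∈ (q.map (Int.castRingHom ℂ)).roots := by
  rw [Polynomial.mem_roots'] at hz ⊢
  refine ⟨hz.1, ?_⟩
  have h1 : (starRingEnd ℂ) (Polynomial.eval z (q.map (Int.castRingHom ℂ))) = 0 := by
    rw [hz.2.eq_zero]; simp
  rw [Polynomial.eval_map, Polynomial.hom_eval₂] at h1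
  have h2 : (starRingEnd ℂ).comp (Int.castRingHom ℂ) = Int.castRingHom ℂ :=
    Subsingleton.elim _ _
  rw [h2] at h1
  rw [IsRoot, Polynomial.eval_map]
  exact h1

set_option maxHeartbeats 1000000 in
lemma famB_exists (d : ℕ) (hd : 3 ≤ d) (a : ℕ) (ha : 10 ≤ a) :
    ∃ (p : Polynomial ℤ) (r : ℕ → ℂ), p.Monic ∧ Irreducible p ∧ p.natDegree = d ∧
      SortedRoots d (p.map (Int.castRingHom ℂ)) r ∧
      ‖r 0‖ ^ 2 ≤ (a:ℝ) + 1 ∧ ‖r 1‖ ^ 2 ≤ (a:ℝ) + 1 ∧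
      ∀ i, 2 ≤ i → i < d → ‖r i‖ ≤ 1 ∧
        ‖r i‖ ^ (d-2) ≤ 1/((a:ℝ)-1) := by
  classical
  set m : ℕ := d - 2 with hmdef
  have hm1 : 1 ≤ m := by omega
  have hdm : d = m + 2 := by omega
  set A : ℝ := (a:ℝ) with hAdef
  have hA : 10 ≤ A := by rw [hAdef]; exact_mod_cast ha
  set p : Polynomial ℤ := X^(m+2) + C (a:ℤ) * X^m - 1 with hpdef
  have hpm : p.Monic := by
    rw [hpdef]
    monicity!
  have hpd : p.natDegree = d := by
    rw [hpdef, hdm]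
    compute_degree!
  have hp0 : p.coeff 0 = -1 := by
    have h1 : m + 2 ≠ 0 := by omega
    have h2 : m ≠ 0 := by omega
    simp [hpdef, coeff_one, coeff_X_pow, h1, h2, coeff_C_mul, Ne.symm h1, Ne.symm h2]
  set p' : Polynomial ℂ := p.map (Int.castRingHom ℂ) with hp'def
  have hpm' : p'.Monic := hpm.map _
  have hp'0 : p' ≠ 0 := hpm'.ne_zero
  have hcard : Multiset.card p'.roots = d := by
    rw [Polynomial.splits_iff_card_roots.1 (IsAlgClosed.splits p'),
      hpm.natDegree_map, hpd]
  obtain ⟨r, hsr⟩ := exists_sortedRoots d p' hcard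
  have hroot_eq : ∀ z ∈ p'.roots, z^m * (z^2 + (A:ℂ)) = 1 := by
    intro z hz
    have hroot := isRoot_of_mem_roots hz
    rw [IsRoot, hp'def, hpdef] at hroot
    simp only [Polynomial.map_sub, Polynomial.map_add, Polynomial.map_mul, Polynomial.map_pow,
      Polynomial.map_one, Polynomial.map_X, Polynomial.map_C, eval_sub, eval_add, eval_mul,
      eval_pow, eval_X, eval_one, eval_C] at hroot
    have hcast : (Int.castRingHom ℂ) ((a:ℕ):ℤ) = ((A:ℝ):ℂ) := by
      rw [hAdef]; push_cast; simp
    rw [hcast] at hroot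
    linear_combination hroot
  have hmem : ∀ i, i < d → r i ∈ p'.roots := by
    intro i hi
    rw [hsr.1]
    exact Multiset.mem_map_of_mem r (Multiset.mem_range.2 hi)
  have hprod : ∏ i ∈ Finset.range d, ‖r i‖ = 1 := by
    have := prod_abs_roots_eq d p' r hpm' (by rw [hpm.natDegree_map, hpd]) hsr
    rw [this, hp'def, Polynomial.coeff_map, hp0]
    simp
  have hApos : (0:ℝ) < A - 1 := by linarith
  have h2Apos : (0:ℝ) < 2*A+1 := by linarith
  -- all roots with index ≥ 2 satisfy |z|² ≤ A - 1
  have hsmall_idx : ∀ i, 2 ≤ i → i < d → ‖r i‖ ^ 2 ≤ A - 1 := by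
    intro i hi2 hid
    by_contra hbig
    push_neg at hbig
    have habs : ∀ j k : ℕ, j ≤ k → k < d → ‖r k‖ ≤ ‖r j‖ := hsr.2
    have h2 : A - 1 < ‖r 2‖ ^ 2 := by
      have := habs 2 i hi2 hid
      nlinarith [norm_nonneg (r i), norm_nonneg (r 2)]
    have h1 : A - 1 < ‖r 1‖ ^ 2 := by
      have := habs 1 2 (by omega) (by omega)
      nlinarith [norm_nonneg (r 2)]
    have h0 : A - 1 < ‖r 0‖ ^ 2 := by
      have := habs 0 1 (by omega) (by omega)
      nlinarith [norm_nonneg (r 1)]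
    have hQ : ∏ j ∈ Finset.range d, ‖r j‖ ^ (2*m) = 1 := by
      rw [Finset.prod_pow, hprod, one_pow]
    rw [hdm] at hQ
    have hsplit : ∏ j ∈ Finset.range (m+2), ‖r j‖ ^ (2*m)
        = (∏ j ∈ Finset.range 3, ‖r j‖ ^ (2*m)) *
          ∏ j ∈ Finset.range (m-1), ‖r (3 + j)‖ ^ (2*m) := by
      have h3 : m + 2 = 3 + (m - 1) := by omega
      rw [h3, Finset.prod_range_add]
    have hlowpt : ∀ j, j < m - 1 → (1/(2*A+1))^2 ≤ ‖r (3 + j)‖ ^ (2*m) := by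
      intro j hj
      have hlo := famB_low hm1 hA (hroot_eq _ (hmem (3+j) (by omega)))
      have h2m : ‖r (3+j)‖ ^ (2*m) = (‖r (3+j)‖ ^ m)^2 := by
        rw [← pow_mul, mul_comm]
      rw [h2m]
      apply pow_le_pow_left₀ (by positivity) hlo
    have hrest : ((1/(2*A+1))^2) ^ (m-1)
        ≤ ∏ j ∈ Finset.range (m-1), ‖r (3 + j)‖ ^ (2*m) := by
      calc ((1/(2*A+1))^2) ^ (m-1) = ∏ _j ∈ Finset.range (m-1), ((1/(2*A+1))^2) := by
            rw [Finset.prod_const, Finset.card_range]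
        _ ≤ _ := by
            apply Finset.prod_le_prod
            · intro j _; positivity
            · intro j hj; exact hlowpt j (Finset.mem_range.1 hj)
    have hbigpow : ∀ j, j < 3 → (A-1)^m ≤ ‖r j‖ ^ (2*m) := by
      intro j hj
      have hb : A - 1 < ‖r j‖ ^ 2 := by
        interval_cases j
        · exact h0
        · exact h1
        · exact h2
      have h2m : ‖r j‖ ^ (2*m) = (‖r j‖ ^ 2)^m := by
        rw [← pow_mul]
      rw [h2m]
      exact pow_le_pow_left₀ (by linarith) (le_of_lt hb) m
    have hfirst : (A-1)^m * (A-1)^m * (A-1)^m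
        ≤ ∏ j ∈ Finset.range 3, ‖r j‖ ^ (2*m) := by
      rw [Finset.prod_range_succ, Finset.prod_range_succ, Finset.prod_range_one]
      have hn : (0:ℝ) ≤ (A-1)^m := pow_nonneg (by linarith) m
      apply mul_le_mul
      · apply mul_le_mul (hbigpow 0 (by omega)) (hbigpow 1 (by omega)) hn
          (pow_nonneg (norm_nonneg _) _)
      · exact hbigpow 2 (by omega)
      · exact hn
      · exact mul_nonneg (pow_nonneg (norm_nonneg _) _)
          (pow_nonneg (norm_nonneg _) _)
    have hkey : (A-1)^(3*m) * ((1/(2*A+1))^2)^(m-1) ≤ 1 := by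
      have h3m : (A-1)^(3*m) = (A-1)^m * (A-1)^m * (A-1)^m := by
        rw [← pow_add, ← pow_add]; congr 1; omega
      have hle1 : (A-1)^(3*m) * ((1/(2*A+1))^2)^(m-1)
          ≤ (∏ j ∈ Finset.range 3, ‖r j‖ ^ (2*m)) *
            ∏ j ∈ Finset.range (m-1), ‖r (3 + j)‖ ^ (2*m) := by
        rw [h3m]
        apply mul_le_mul hfirst hrest (by positivity)
        exact Finset.prod_nonneg (fun j _ => pow_nonneg (norm_nonneg _) _)
      have hle2 : (∏ j ∈ Finset.range 3, ‖r j‖ ^ (2*m)) *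
          ∏ j ∈ Finset.range (m-1), ‖r (3 + j)‖ ^ (2*m) = 1 := by
        rw [← hsplit]; exact hQ
      linarith
    have hc1 : ((2*A+1)^2)^m ≤ (A-1)^(3*m) := by
      have h2A : (2*A+1)^2 ≤ (A-1)^3 := by nlinarith
      calc ((2*A+1)^2)^m ≤ ((A-1)^3)^m := pow_le_pow_left₀ (by positivity) h2A m
        _ = (A-1)^(3*m) := by rw [← pow_mul, mul_comm]
    have h1d : ((1/(2*A+1))^2)^(m-1) = (((2*A+1)^2)^(m-1))⁻¹ := by
      rw [one_div, inv_pow, inv_pow]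
    rw [h1d] at hkey
    have hc2 : ((2*A+1)^2) ≤ (A-1)^(3*m) * (((2*A+1)^2)^(m-1))⁻¹ := by
      have hppos : (0:ℝ) < ((2*A+1)^2)^(m-1) := pow_pos (by positivity) _
      rw [← div_eq_mul_inv, le_div_iff₀ hppos]
      calc (2*A+1)^2 * ((2*A+1)^2)^(m-1) = ((2*A+1)^2)^m := by
            rw [← pow_succ']; congr 1; omega
        _ ≤ (A-1)^(3*m) := hc1
    nlinarith
  -- irreducibility
  have hirr : Irreducible p := by
    by_contra hni
    obtain ⟨q, s, hqm, hsm, hqs, hdq, hds⟩ := exists_monic_factors p hpm (hpd ▸ (by omega : 2 ≤ d)) hni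
    have hq0s0 : q.coeff 0 * s.coeff 0 = -1 := by
      rw [← Polynomial.mul_coeff_zero, ← hqs, hp0]
    have hq0 : q.coeff 0 = 1 ∨ q.coeff 0 = -1 :=
      Int.isUnit_iff.1 (IsUnit.of_mul_eq_one (-(s.coeff 0)) (by linear_combination -hq0s0))
    have hs0 : s.coeff 0 = 1 ∨ s.coeff 0 = -1 :=
      Int.isUnit_iff.1 (IsUnit.of_mul_eq_one (-(q.coeff 0)) (by linear_combination -hq0s0))
    set q' := q.map (Int.castRingHom ℂ) with hq'def
    set s' := s.map (Int.castRingHom ℂ) with hs'def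
    have hmul : p' = q' * s' := by rw [hp'def, hqs, Polynomial.map_mul]
    have hroots : p'.roots = q'.roots + s'.roots := by
      rw [hmul, Polynomial.roots_mul (by rw [← hmul]; exact hp'0)]
    set Big : ℂ → Prop := fun z => A - 1 < ‖z‖ ^ 2 with hBigdef
    -- at most two big roots in p'
    have hcount : Multiset.countP Big p'.roots ≤ 2 := by
      rw [hsr.1, Multiset.countP_map]
      have hsub : Multiset.filter (fun i => Big (r i)) (Multiset.range d) ⊆ (0 ::ₘ {1}) := by
        intro i hi
        rw [Multiset.mem_filter, Multiset.mem_range] at hi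
        rw [Multiset.mem_cons, Multiset.mem_singleton]
        by_contra hne
        push_neg at hne
        have hge : 2 ≤ i := by omega
        have := hsmall_idx i hge hi.1
        rw [hBigdef] at hi
        simp only at hi
        linarith [hi.2]
      have hnodup := (Multiset.nodup_range d).filter (fun i => Big (r i))
      have hle := (Multiset.le_iff_subset hnodup).2 hsub
      have := Multiset.card_le_card hle
      simpa using this
    -- each factor has at least one big root
    have hfactor : ∀ (t : Polynomial ℤ), t.Monic → 1 ≤ t.natDegree →
        (t.coeff 0 = 1 ∨ t.coeff 0 = -1) →
        (t.map (Int.castRingHom ℂ) ∣ p') →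
        1 ≤ Multiset.countP Big (t.map (Int.castRingHom ℂ)).roots := by
      intro t htm htd htc htdvd
      by_contra hcnt
      push_neg at hcnt
      have hcnt0 : Multiset.countP Big (t.map (Int.castRingHom ℂ)).roots = 0 := by omega
      apply small_factor_false m hm1 t htm htd htc (1/(A-1))
        (one_div_nonneg.2 (by linarith))
        (by rw [div_lt_one (by linarith)]; linarith)
      intro z hz
      have hzp : z ∈ p'.roots :=
        Multiset.mem_of_le (Polynomial.roots.le_of_dvd hp'0 htdvd) hz
      have hnb : ¬ Big z := Multiset.countP_eq_zero.1 hcnt0 z hz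
      rw [hBigdef] at hnb
      simp only [not_lt] at hnb
      exact (famB_small hm1 hA (hroot_eq z hzp) hnb).2
    have hqdvd : q' ∣ p' := Dvd.intro s' (by rw [hmul])
    have hsdvd : s' ∣ p' := Dvd.intro_left q' (by rw [hmul])
    -- q' has a big root z; z is nonreal; conj z is also a big root of q'
    have hq1 : 1 ≤ Multiset.countP Big q'.roots := hfactor q hqm hdq hq0 hqdvd
    have hs1 : 1 ≤ Multiset.countP Big s'.roots := hfactor s hsm hds hs0 hsdvd
    obtain ⟨z, hzq, hzbig⟩ := Multiset.countP_pos.1 (by omega : 0 < Multiset.countP Big q'.roots)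
    have hzp : z ∈ p'.roots := Multiset.mem_of_le (Polynomial.roots.le_of_dvd hp'0 hqdvd) hzq
    have hznr : z.im ≠ 0 := by
      intro him
      exact famB_big_not_real hm1 hA (hroot_eq z hzp) hzbig him
    have hconj : (starRingEnd ℂ) z ∈ q'.roots := conj_mem_roots q hzq
    have hne : (starRingEnd ℂ) z ≠ z := by
      intro h
      exact hznr (Complex.conj_eq_iff_im.1 h)
    have hconjbig : Big ((starRingEnd ℂ) z) := by
      rw [hBigdef]
      simp only
      rwa [Complex.norm_conj]
    -- countP Big q'.roots ≥ 2
    have hq2 : 2 ≤ Multiset.countP Big q'.roots := by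
      have hpair : ((starRingEnd ℂ) z ::ₘ {z}) ≤ Multiset.filter Big q'.roots := by
        rw [Multiset.le_iff_subset (by
          rw [Multiset.nodup_cons]
          exact ⟨by simpa using hne, Multiset.nodup_singleton z⟩)]
        intro w hw
        rw [Multiset.mem_cons, Multiset.mem_singleton] at hw
        rcases hw with rfl | rfl
        · exact Multiset.mem_filter.2 ⟨hconj, hconjbig⟩
        · exact Multiset.mem_filter.2 ⟨hzq, hzbig⟩
      have := Multiset.card_le_card hpair
      simp only [Multiset.card_cons, Multiset.card_singleton] at this
      rwa [Multiset.countP_eq_card_filter]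
    have htot : Multiset.countP Big q'.roots + Multiset.countP Big s'.roots ≤ 2 := by
      rw [← Multiset.countP_add, ← hroots]
      exact hcount
    omega
  refine ⟨p, r, hpm, hirr, hpd, hsr, ?_, ?_, ?_⟩
  · exact famB_abs_le hm1 hA (hroot_eq _ (hmem 0 (by omega)))
  · exact famB_abs_le hm1 hA (hroot_eq _ (hmem 1 (by omega)))
  · intro i hi2 hid
    exact famB_small hm1 hA (hroot_eq _ (hmem i hid)) (hsmall_idx i hi2 hid)

lemma exists_good_a (s t : ℝ) (hs : 0 ≤ s) (hst : s < t) :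
    ∃ a : ℕ, 10 ≤ a ∧ ((a:ℝ)+1) ^ s < ((a:ℝ)-1) ^ t := by
  set ε : ℝ := t - s with hε
  have hεpos : 0 < ε := by rw [hε]; linarith
  set x0 : ℝ := (2:ℝ) ^ (s/ε) with hx0
  have hx0ge : 1 ≤ x0 := Real.one_le_rpow one_le_two (by positivity)
  refine ⟨⌈x0⌉₊ + 12, by omega, ?_⟩
  set a : ℕ := ⌈x0⌉₊ + 12 with ha
  have haR : x0 + 2 ≤ (a:ℝ) := by
    have h1 : x0 ≤ (⌈x0⌉₊ : ℝ) := Nat.le_ceil x0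
    have h2 : ((⌈x0⌉₊ + 12 : ℕ) : ℝ) = (⌈x0⌉₊ : ℝ) + 12 := by push_cast; ring
    rw [ha, h2]
    linarith
  have ha1 : (1:ℝ) < (a:ℝ) - 1 := by linarith
  have ha0 : (0:ℝ) < (a:ℝ) - 1 := by linarith
  have h2a : (a:ℝ) + 1 ≤ 2 * ((a:ℝ)-1) := by linarith
  have step1 : ((a:ℝ)+1) ^ s ≤ (2 * ((a:ℝ)-1)) ^ s :=
    Real.rpow_le_rpow (by linarith) h2a hs
  have step2 : (2 * ((a:ℝ)-1)) ^ s = 2 ^ s * ((a:ℝ)-1) ^ s :=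
    Real.mul_rpow (by norm_num) (le_of_lt ha0)
  have step3 : (2:ℝ) ^ s < ((a:ℝ)-1) ^ ε := by
    have hlt : x0 < (a:ℝ) - 1 := by linarith
    have h1 : x0 ^ ε < ((a:ℝ)-1) ^ ε :=
      Real.rpow_lt_rpow (by positivity) hlt hεpos
    have h2 : x0 ^ ε = (2:ℝ) ^ s := by
      rw [hx0, ← Real.rpow_mul (by norm_num : (0:ℝ) ≤ 2), div_mul_cancel₀ s hεpos.ne']
    rw [← h2]
    exact h1
  have step4 : ((a:ℝ)-1) ^ ε * ((a:ℝ)-1) ^ s = ((a:ℝ)-1) ^ t := by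
    rw [← Real.rpow_add ha0]
    congr 1
    rw [hε]; ring
  have hrs : (0:ℝ) < ((a:ℝ)-1) ^ s := Real.rpow_pos_of_pos ha0 s
  calc ((a:ℝ)+1) ^ s ≤ 2 ^ s * ((a:ℝ)-1) ^ s := by rw [← step2]; exact step1
    _ < ((a:ℝ)-1) ^ ε * ((a:ℝ)-1) ^ s := by
        exact mul_lt_mul_of_pos_right step3 hrs
    _ = ((a:ℝ)-1) ^ t := step4

lemma le_rpow_inv_of_pow_le {x B : ℝ} {n : ℕ} (hn : 1 ≤ n) (hx : 0 ≤ x) (hB : 1 < B)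
    (h : x ^ n ≤ 1/B) : x ≤ B ^ (-(1:ℝ)/(n:ℝ)) := by
  have hB0 : 0 < B := by linarith
  have hn0 : ((n:ℝ)) ≠ 0 := by positivity
  have h1 : x = (x ^ (n:ℕ) : ℝ) ^ ((n:ℝ)⁻¹) := by
    rw [← Real.rpow_natCast x n, ← Real.rpow_mul hx, mul_inv_cancel₀ hn0, Real.rpow_one]
  have h2 : ((x ^ (n:ℕ) : ℝ)) ^ ((n:ℝ)⁻¹) ≤ (1/B) ^ ((n:ℝ)⁻¹) :=
    Real.rpow_le_rpow (pow_nonneg hx n) h (by positivity)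
  have h3 : ((1:ℝ)/B) ^ ((n:ℝ)⁻¹) = B ^ (-(1:ℝ)/(n:ℝ)) := by
    rw [one_div, ← Real.rpow_neg_one B, ← Real.rpow_mul (le_of_lt hB0)]
    congr 1
  rw [h1]
  rw [h3] at h2
  exact h2

lemma le_rpow_half_of_sq_le {x B : ℝ} (hx : 0 ≤ x) (hB : 0 ≤ B) (h : x ^ 2 ≤ B) :
    x ≤ B ^ ((1:ℝ)/2) := by
  have h1 : x = ((x ^ (2:ℕ) : ℝ)) ^ ((1:ℝ)/2) := by
    rw [← Real.rpow_natCast x 2, ← Real.rpow_mul hx]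
    norm_num
  rw [h1]
  exact Real.rpow_le_rpow (pow_nonneg hx 2) h (by norm_num)

lemma one_le_of_one_le_mul_inv {X Y : ℝ} (hY : 0 < Y) (h : 1 ≤ X * Y⁻¹) : Y ≤ X := by
  calc Y = 1 * Y := (one_mul Y).symm
    _ ≤ (X * Y⁻¹) * Y := mul_le_mul_of_nonneg_right h (le_of_lt hY)
    _ = X := by field_simp

section bounds
variable {d : ℕ} {p : Polynomial ℤ} {r : ℕ → ℂ}

-- 1 ≤ (∏_{i<n} |r i|) * |r n|^(d-n)
lemma head_pow_bound (hm : p.Monic) (hi : Irreducible p) (hd : p.natDegree = d)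
    (hd2 : 2 ≤ d) (hsr : SortedRoots d (p.map (Int.castRingHom ℂ)) r)
    (n : ℕ) (hn1 : 1 ≤ n) (hn : n < d) :
    1 ≤ (∏ i ∈ Finset.range n, ‖r i‖) * ‖r n‖ ^ (d - n) := by
  have h1 := prod_abs_ge_one hm hd hsr hi hd2
  have hsplit : ∏ i ∈ Finset.range d, ‖r i‖
      = (∏ i ∈ Finset.range n, ‖r i‖) *
        ∏ i ∈ Finset.range (d - n), ‖r (n + i)‖ := by
    have hdn : d = n + (d - n) := by omega
    calc ∏ i ∈ Finset.range d, ‖r i‖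
        = ∏ i ∈ Finset.range (n + (d - n)), ‖r i‖ := by rw [← hdn]
      _ = _ := Finset.prod_range_add _ _ _
  have htail : ∏ i ∈ Finset.range (d - n), ‖r (n + i)‖
      ≤ ‖r n‖ ^ (d - n) := by
    calc ∏ i ∈ Finset.range (d - n), ‖r (n + i)‖
        ≤ ∏ _i ∈ Finset.range (d - n), ‖r n‖ := by
          apply Finset.prod_le_prod
          · intro i _; exact norm_nonneg _
          · intro i hi'
            exact hsr.2 n (n + i) (Nat.le_add_right n i)
              (by have := Finset.mem_range.1 hi'; omega)
      _ = ‖r n‖ ^ (d - n) := by rw [Finset.prod_const, Finset.card_range]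
  have hhead : (0:ℝ) ≤ ∏ i ∈ Finset.range n, ‖r i‖ :=
    Finset.prod_nonneg (fun i _ => norm_nonneg _)
  calc (1:ℝ) ≤ ∏ i ∈ Finset.range d, ‖r i‖ := h1
    _ = _ := hsplit
    _ ≤ _ := mul_le_mul_of_nonneg_left htail hhead

lemma vertexA (hm : p.Monic) (hi : Irreducible p) (hd : p.natDegree = d)
    (hd2 : 2 ≤ d) (hsr : SortedRoots d (p.map (Int.castRingHom ℂ)) r) :
    1 ≤ ‖r 0‖ * ‖r 1‖ ^ (d - 1) := by
  have := head_pow_bound hm hi hd hd2 hsr 1 le_rfl (by omega)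
  rwa [Finset.prod_range_one] at this

lemma vertexB (hm : p.Monic) (hi : Irreducible p) (hd : p.natDegree = d)
    (hd3 : 3 ≤ d) (hsr : SortedRoots d (p.map (Int.castRingHom ℂ)) r) :
    1 ≤ ‖r 0‖ * ‖r 1‖ * ‖r 2‖ ^ (d - 2) := by
  have := head_pow_bound hm hi hd (by omega) hsr 2 (by omega) (by omega)
  rwa [Finset.prod_range_succ, Finset.prod_range_one] at this

end bounds

-- log characterization of the defining inequality
lemma one_le_mul_prod_rpow_iff {k : ℕ} (a : ℝ) (b : Fin k → ℝ) (g : Fin k → ℝ)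
    (ha : 0 < a) (hb : ∀ i, 0 < b i) :
    (1 ≤ a * ∏ i : Fin k, b i ^ g i) ↔
      0 ≤ Real.log a + ∑ i : Fin k, g i * Real.log (b i) := by
  have hprodpos : 0 < ∏ i : Fin k, b i ^ g i :=
    Finset.prod_pos (fun i _ => Real.rpow_pos_of_pos (hb i) _)
  have hxpos : 0 < a * ∏ i : Fin k, b i ^ g i := mul_pos ha hprodpos
  rw [← Real.log_nonneg_iff hxpos]
  rw [Real.log_mul (ne_of_gt ha) (ne_of_gt hprodpos)]
  rw [Real.log_prod (fun i _ => ne_of_gt (Real.rpow_pos_of_pos (hb i) _))]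
  have : ∀ i : Fin k, Real.log (b i ^ g i) = g i * Real.log (b i) :=
    fun i => Real.log_rpow (hb i) _
  rw [Finset.sum_congr rfl (fun i _ => this i)]

lemma convex_Ekd (k d : ℕ) (hkd : k < d) (hd2 : 2 ≤ d) : Convex ℝ (Ekd k d) := by
  intro c hc c' hc' θ τ hθ hτ hθτ
  constructor
  · intro i
    have h1 := hc.1 i
    have h2 := hc'.1 i
    simp only [Pi.add_apply, Pi.smul_apply, smul_eq_mul]
    exact add_nonneg (mul_nonneg hθ h1) (mul_nonneg hτ h2)
  · intro p r hm hi hdeg hsr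
    have h1 := hc.2 p r hm hi hdeg hsr
    have h2 := hc'.2 p r hm hi hdeg hsr
    have hr0 : 0 < ‖r 0‖ := abs_root_pos hm hdeg hsr hi hd2 (by omega)
    have hb : ∀ i : Fin k, 0 < ‖r (i.1 + 1)‖ := by
      intro i
      exact abs_root_pos hm hdeg hsr hi hd2 (by have := i.isLt; omega)
    rw [one_le_mul_prod_rpow_iff _ _ _ hr0 hb] at h1 h2 ⊢
    set L : Fin k → ℝ := fun i => Real.log (‖r (i.1 + 1)‖) with hL
    have hsum : ∑ i : Fin k, (θ • c + τ • c') i * L i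
        = θ * (∑ i : Fin k, c i * L i) + τ * (∑ i : Fin k, c' i * L i) := by
      rw [Finset.mul_sum, Finset.mul_sum, ← Finset.sum_add_distrib]
      apply Finset.sum_congr rfl
      intro i _
      simp only [Pi.add_apply, Pi.smul_apply, smul_eq_mul]
      ring
    rw [hsum]
    have hlog : Real.log (‖r 0‖) =
        (θ + τ) * Real.log (‖r 0‖) := by rw [hθτ, one_mul]
    nlinarith [mul_nonneg hθ (by linarith : 0 ≤ Real.log (‖r 0‖) +
        ∑ i : Fin k, c i * L i), mul_nonneg hτ (by linarith : 0 ≤ Real.log (‖r 0‖) +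
        ∑ i : Fin k, c' i * L i)]


lemma Ekd_one (d : ℕ) (hd : 2 ≤ d) :
    Ekd 1 d = {c : Fin 1 → ℝ | c 0 ∈ Set.Icc (0 : ℝ) ((d : ℝ) - 1)} := by
  have hdR : (2:ℝ) ≤ (d:ℝ) := by exact_mod_cast hd
  have hd1 : (0:ℝ) < (d:ℝ) - 1 := by linarith
  have hcast : ((d-1:ℕ):ℝ) = (d:ℝ) - 1 := by
    push_cast [Nat.cast_sub (by omega : 1 ≤ d)]
    ring
  ext c
  simp only [Set.mem_setOf_eq, Set.mem_Icc]
  constructor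
  · rintro ⟨hpos, hineq⟩
    refine ⟨hpos 0, ?_⟩
    by_contra hgt
    push_neg at hgt
    set t : ℝ := c 0 / ((d:ℝ)-1) with htdef
    have ht : 1 < t := (one_lt_div hd1).2 hgt
    obtain ⟨a, ha10, hlt⟩ := exists_good_a 1 t zero_le_one ht
    have haR : (10:ℝ) ≤ (a:ℝ) := by exact_mod_cast ha10
    obtain ⟨p, r, hm, hi, hdeg, hsr, hr0, hsm⟩ := famA_exists d hd a (by omega)
    have hkey := hineq p r hm hi hdeg hsr
    rw [Fin.prod_univ_one] at hkey
    simp only [Fin.val_zero, Nat.zero_add, zero_add] at hkey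
    have ha1 : (1:ℝ) < (a:ℝ) - 1 := by linarith
    have hsm1 := hsm 1 le_rfl (by omega)
    have hρ : ‖r 1‖ ≤ ((a:ℝ)-1) ^ (-(1:ℝ)/((d-1:ℕ):ℝ)) :=
      le_rpow_inv_of_pow_le (by omega) (norm_nonneg _) ha1 hsm1.2
    rw [hcast] at hρ
    have h2 : ‖r 1‖ ^ (c 0) ≤ (((a:ℝ)-1) ^ (-(1:ℝ)/((d:ℝ)-1))) ^ (c 0) :=
      Real.rpow_le_rpow (norm_nonneg _) hρ (hpos 0)
    have h3 : (((a:ℝ)-1) ^ (-(1:ℝ)/((d:ℝ)-1))) ^ (c 0) = ((a:ℝ)-1) ^ (-t) := by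
      rw [← Real.rpow_mul (by linarith : (0:ℝ) ≤ (a:ℝ)-1)]
      congr 1
      rw [htdef]
      field_simp
    have h4 : 1 ≤ ((a:ℝ)+1) * ((a:ℝ)-1) ^ (-t) := by
      calc (1:ℝ) ≤ ‖r 0‖ * ‖r 1‖ ^ (c 0) := hkey
        _ ≤ ((a:ℝ)+1) * ((a:ℝ)-1) ^ (-t) := by
            apply mul_le_mul hr0 (h2.trans_eq h3) (Real.rpow_nonneg
              (norm_nonneg _) _) (by linarith)
    have h5 : ((a:ℝ)-1) ^ t ≤ (a:ℝ)+1 := by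
      rw [Real.rpow_neg (by linarith : (0:ℝ) ≤ (a:ℝ)-1) t] at h4
      exact one_le_of_one_le_mul_inv (Real.rpow_pos_of_pos (by linarith) t) h4
    rw [Real.rpow_one] at hlt
    linarith
  · rintro ⟨h0, h1⟩
    constructor
    · intro i
      have : i = 0 := Subsingleton.elim i 0
      rw [this]; exact h0
    · intro p r hm hi hdeg hsr
      rw [Fin.prod_univ_one]
      simp only [Fin.val_zero, Nat.zero_add, zero_add]
      have hr0 := one_le_abs_r0 hm hdeg hsr hi hd
      have hr1pos : 0 < ‖r 1‖ := abs_root_pos hm hdeg hsr hi hd (by omega)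
      rcases le_or_gt 1 (‖r 1‖) with hc | hc
      · have h2 : 1 ≤ ‖r 1‖ ^ (c 0) := by
          calc (1:ℝ) = 1 ^ (c 0) := (Real.one_rpow _).symm
            _ ≤ ‖r 1‖ ^ (c 0) := Real.rpow_le_rpow zero_le_one hc h0
        nlinarith
      · have h2 : ‖r 1‖ ^ ((d:ℝ)-1) ≤ ‖r 1‖ ^ (c 0) :=
          Real.rpow_le_rpow_of_exponent_ge hr1pos (le_of_lt hc) h1
        have h3 : ‖r 1‖ ^ ((d:ℝ)-1) = ‖r 1‖ ^ ((d-1:ℕ)) := by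
          rw [← Real.rpow_natCast, hcast]
        have h4 := vertexA hm hi hdeg hd hsr
        calc (1:ℝ) ≤ ‖r 0‖ * ‖r 1‖ ^ ((d-1:ℕ)) := h4
          _ = ‖r 0‖ * ‖r 1‖ ^ ((d:ℝ)-1) := by rw [h3]
          _ ≤ ‖r 0‖ * ‖r 1‖ ^ (c 0) :=
              mul_le_mul_of_nonneg_left h2 (norm_nonneg _)



lemma mem_hull_of_ineqs (d : ℕ) (hd : 3 ≤ d) (c : Fin 2 → ℝ) (hx : 0 ≤ c 0) (hy : 0 ≤ c 1)
    (h1 : c 0 + c 1 ≤ (d:ℝ) - 1) (h2 : 2 * c 1 ≤ ((d:ℝ)-2) * (c 0 + 1)) :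
    c ∈ convexHull ℝ ({![0, 0], ![(d : ℝ) - 1, 0], ![1, (d : ℝ) - 2],
        ![0, ((d : ℝ) - 2) / 2]} : Set (Fin 2 → ℝ)) := by
  have hD : (3:ℝ) ≤ (d:ℝ) := by exact_mod_cast hd
  set S : Set (Fin 2 → ℝ) := {![0, 0], ![(d : ℝ) - 1, 0], ![1, (d : ℝ) - 2],
    ![0, ((d : ℝ) - 2) / 2]} with hS
  have hv0 : (![0, 0] : Fin 2 → ℝ) ∈ convexHull ℝ S :=
    subset_convexHull ℝ S (by rw [hS]; left; rfl)
  have hv1 : (![(d : ℝ) - 1, 0] : Fin 2 → ℝ) ∈ convexHull ℝ S :=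
    subset_convexHull ℝ S (by rw [hS]; right; left; rfl)
  have hv2 : (![1, (d : ℝ) - 2] : Fin 2 → ℝ) ∈ convexHull ℝ S :=
    subset_convexHull ℝ S (by rw [hS]; right; right; left; rfl)
  have hv3 : (![0, ((d : ℝ) - 2) / 2] : Fin 2 → ℝ) ∈ convexHull ℝ S :=
    subset_convexHull ℝ S (by rw [hS]; right; right; right; rfl)
  have hD2 : (0:ℝ) < (d:ℝ) - 2 := by linarith
  have hD1 : (0:ℝ) < (d:ℝ) - 1 := by linarith
  rcases le_or_gt (c 1) (((d:ℝ)-2) * c 0) with hcase | hcase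
  · -- triangle v0 v1 v2
    set γ : ℝ := c 1 / ((d:ℝ)-2) with hγ
    set β : ℝ := (c 0 - γ)/((d:ℝ)-1) with hβ
    have hγ0 : 0 ≤ γ := div_nonneg hy (le_of_lt hD2)
    have hγx : γ ≤ c 0 := by
      rw [hγ, div_le_iff₀ hD2]
      nlinarith
    have hβ0 : 0 ≤ β := div_nonneg (by linarith) (le_of_lt hD1)
    have hβγ : β + γ = (c 0 + c 1)/((d:ℝ)-1) := by
      rw [hβ, hγ]
      field_simp
      ring
    have hw0 : 0 ≤ 1 - β - γ := by
      have : (c 0 + c 1)/((d:ℝ)-1) ≤ 1 := by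
        rw [div_le_one hD1]; exact h1
      linarith [hβγ]
    set w : Fin 3 → ℝ := ![1 - β - γ, β, γ] with hw
    set z : Fin 3 → (Fin 2 → ℝ) := ![![0, 0], ![(d : ℝ) - 1, 0], ![1, (d : ℝ) - 2]] with hz
    have hmem := Convex.sum_mem (t := (Finset.univ : Finset (Fin 3))) (w := w) (z := z)
      (convex_convexHull ℝ S)
      (by
        intro i _
        fin_cases i <;> simp [hw] <;> linarith [hw0, hβ0, hγ0])
      (by rw [Fin.sum_univ_three]; simp [hw]; ring)
      (by
        intro i _
        fin_cases i <;> simp only [hz] <;>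
          first
            | exact hv0
            | exact hv1
            | exact hv2)
    have hceq : c = ∑ i : Fin 3, w i • z i := by
      funext j
      have happ : (∑ i : Fin 3, w i • z i) j = ∑ i : Fin 3, w i * z i j := by
        rw [Finset.sum_apply]
        simp [Pi.smul_apply, smul_eq_mul]
      rw [happ, Fin.sum_univ_three]
      fin_cases j <;>
        simp only [hw, hz, Matrix.cons_val_zero, Matrix.cons_val_one, Matrix.head_cons,
          Matrix.cons_val_fin_one, Fin.zero_eta, Fin.mk_one, Matrix.cons_val_two, Matrix.tail_cons] <;>
        rw [hβ, hγ] <;> field_simp <;> ring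
    rw [hceq]
    exact hmem
  · -- triangle v0 v2 v3
    set β : ℝ := c 0 with hβ
    set γ : ℝ := (2*(c 1 - ((d:ℝ)-2) * c 0))/((d:ℝ)-2) with hγ
    have hγ0 : 0 ≤ γ := div_nonneg (by nlinarith) (le_of_lt hD2)
    have hβγ : β + γ = (β*((d:ℝ)-2) + 2*(c 1) - 2*((d:ℝ)-2)*(c 0))/((d:ℝ)-2) := by
      rw [hγ, hβ]
      field_simp
      ring
    have hw0 : 0 ≤ 1 - β - γ := by
      have hle : (β*((d:ℝ)-2) + 2*(c 1) - 2*((d:ℝ)-2)*(c 0))/((d:ℝ)-2) ≤ 1 := by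
        rw [div_le_one hD2, hβ]
        nlinarith
      linarith [hβγ]
    set w : Fin 3 → ℝ := ![1 - β - γ, β, γ] with hw
    set z : Fin 3 → (Fin 2 → ℝ) := ![![0, 0], ![1, (d : ℝ) - 2], ![0, ((d : ℝ) - 2)/2]]
      with hz
    have hmem := Convex.sum_mem (t := (Finset.univ : Finset (Fin 3))) (w := w) (z := z)
      (convex_convexHull ℝ S)
      (by
        intro i _
        fin_cases i <;> simp [hw] <;> linarith [hw0, hγ0, hx])
      (by rw [Fin.sum_univ_three]; simp [hw]; ring)
      (by
        intro i _
        fin_cases i <;> simp only [hz] <;>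
          first
            | exact hv0
            | exact hv2
            | exact hv3)
    have hceq : c = ∑ i : Fin 3, w i • z i := by
      funext j
      have happ : (∑ i : Fin 3, w i • z i) j = ∑ i : Fin 3, w i * z i j := by
        rw [Finset.sum_apply]
        simp [Pi.smul_apply, smul_eq_mul]
      rw [happ, Fin.sum_univ_three]
      fin_cases j <;>
        simp only [hw, hz, Matrix.cons_val_zero, Matrix.cons_val_one, Matrix.head_cons,
          Matrix.cons_val_fin_one, Fin.zero_eta, Fin.mk_one, Matrix.cons_val_two, Matrix.tail_cons] <;>
        rw [hβ, hγ] <;> field_simp <;> ring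
    rw [hceq]
    exact hmem

set_option maxHeartbeats 1000000 in
lemma Ekd_two (d : ℕ) (hd : 3 ≤ d) :
    Ekd 2 d = convexHull ℝ ({![0, 0], ![(d : ℝ) - 1, 0], ![1, (d : ℝ) - 2],
      ![0, ((d : ℝ) - 2) / 2]} : Set (Fin 2 → ℝ)) := by
  have hD : (3:ℝ) ≤ (d:ℝ) := by exact_mod_cast hd
  have hD1 : (0:ℝ) < (d:ℝ) - 1 := by linarith
  have hD2 : (0:ℝ) < (d:ℝ) - 2 := by linarith
  have hcast1 : ((d-1:ℕ):ℝ) = (d:ℝ) - 1 := by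
    push_cast [Nat.cast_sub (by omega : 1 ≤ d)]; ring
  have hcast2 : ((d-2:ℕ):ℝ) = (d:ℝ) - 2 := by
    push_cast [Nat.cast_sub (by omega : 2 ≤ d)]; ring
  apply Set.Subset.antisymm
  · -- Ekd 2 d ⊆ hull
    rintro c ⟨hpos, hineq⟩
    have hx := hpos 0
    have hy := hpos 1
    -- first inequality : c 0 + c 1 ≤ d - 1
    have hsum : c 0 + c 1 ≤ (d:ℝ) - 1 := by
      by_contra hgt
      push_neg at hgt
      set t : ℝ := (c 0 + c 1) / ((d:ℝ)-1) with htdef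
      have ht : 1 < t := (one_lt_div hD1).2 hgt
      obtain ⟨a, ha10, hlt⟩ := exists_good_a 1 t zero_le_one ht
      have haR : (10:ℝ) ≤ (a:ℝ) := by exact_mod_cast ha10
      have ha1 : (1:ℝ) < (a:ℝ) - 1 := by linarith
      obtain ⟨p, r, hm, hi, hdeg, hsr, hr0, hsm⟩ := famA_exists d (by omega) a (by omega)
      have hkey := hineq p r hm hi hdeg hsr
      rw [Fin.prod_univ_two] at hkey
      simp only [Fin.val_zero, Fin.val_one, zero_add] at hkey
      set ρ : ℝ := ((a:ℝ)-1) ^ (-(1:ℝ)/((d:ℝ)-1)) with hρdef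
      have hρpos : 0 < ρ := Real.rpow_pos_of_pos (by linarith) _
      have hρle : ∀ i, 1 ≤ i → i < d → ‖r i‖ ≤ ρ := by
        intro i h1 h2
        have := le_rpow_inv_of_pow_le (by omega : 1 ≤ d - 1) (norm_nonneg (r i))
          ha1 (hsm i h1 h2).2
        rwa [hcast1] at this
      have hb1 : ‖r 1‖ ^ (c 0) ≤ ρ ^ (c 0) :=
        Real.rpow_le_rpow (norm_nonneg _) (hρle 1 le_rfl (by omega)) hx
      have hb2 : ‖r 2‖ ^ (c 1) ≤ ρ ^ (c 1) :=
        Real.rpow_le_rpow (norm_nonneg _) (hρle 2 (by omega) (by omega)) hy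
      have hρadd : ρ ^ (c 0) * ρ ^ (c 1) = ρ ^ (c 0 + c 1) := (Real.rpow_add hρpos _ _).symm
      have hρt : ρ ^ (c 0 + c 1) = ((a:ℝ)-1) ^ (-t) := by
        rw [hρdef, ← Real.rpow_mul (by linarith : (0:ℝ) ≤ (a:ℝ)-1)]
        congr 1
        rw [htdef]
        field_simp
      have h4 : 1 ≤ ((a:ℝ)+1) * ((a:ℝ)-1) ^ (-t) := by
        calc (1:ℝ) ≤ ‖r 0‖ * (‖r 1‖ ^ (c 0) *
              ‖r 2‖ ^ (c 1)) := hkey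
          _ ≤ ((a:ℝ)+1) * (ρ ^ (c 0) * ρ ^ (c 1)) := by
              apply mul_le_mul hr0 _ _ (by linarith)
              · exact mul_le_mul hb1 hb2 (Real.rpow_nonneg (norm_nonneg _) _)
                  (Real.rpow_nonneg (le_of_lt hρpos) _)
              · exact mul_nonneg (Real.rpow_nonneg (norm_nonneg _) _)
                  (Real.rpow_nonneg (norm_nonneg _) _)
          _ = ((a:ℝ)+1) * ((a:ℝ)-1) ^ (-t) := by rw [hρadd, hρt]
      have h5 : ((a:ℝ)-1) ^ t ≤ (a:ℝ)+1 := by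
        rw [Real.rpow_neg (by linarith : (0:ℝ) ≤ (a:ℝ)-1) t] at h4
        exact one_le_of_one_le_mul_inv (Real.rpow_pos_of_pos (by linarith) t) h4
      rw [Real.rpow_one] at hlt
      linarith
    -- second inequality : 2 c1 ≤ (d-2)(c0+1)
    have hedge : 2 * c 1 ≤ ((d:ℝ)-2) * (c 0 + 1) := by
      by_contra hgt
      push_neg at hgt
      set s : ℝ := (1 + c 0) / 2 with hsdef
      set t : ℝ := c 1 / ((d:ℝ)-2) with htdef
      have hs0 : 0 ≤ s := by rw [hsdef]; positivity
      have hst : s < t := by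
        rw [hsdef, htdef, div_lt_div_iff₀ (by norm_num) hD2]
        nlinarith
      obtain ⟨a, ha10, hlt⟩ := exists_good_a s t hs0 hst
      have haR : (10:ℝ) ≤ (a:ℝ) := by exact_mod_cast ha10
      have ha1 : (1:ℝ) < (a:ℝ) - 1 := by linarith
      obtain ⟨p, r, hm, hi, hdeg, hsr, h0sq, h1sq, hsm⟩ := famB_exists d hd a (by omega)
      have hkey := hineq p r hm hi hdeg hsr
      rw [Fin.prod_univ_two] at hkey
      simp only [Fin.val_zero, Fin.val_one, zero_add] at hkey
      set B : ℝ := ((a:ℝ)+1) ^ ((1:ℝ)/2) with hBdef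
      have hBpos : 0 < B := Real.rpow_pos_of_pos (by linarith) _
      have hB0 : ‖r 0‖ ≤ B :=
        le_rpow_half_of_sq_le (norm_nonneg _) (by linarith) h0sq
      have hB1 : ‖r 1‖ ≤ B :=
        le_rpow_half_of_sq_le (norm_nonneg _) (by linarith) h1sq
      set ρ : ℝ := ((a:ℝ)-1) ^ (-(1:ℝ)/((d:ℝ)-2)) with hρdef
      have hρpos : 0 < ρ := Real.rpow_pos_of_pos (by linarith) _
      have hρ2 : ‖r 2‖ ≤ ρ := by
        have := le_rpow_inv_of_pow_le (by omega : 1 ≤ d - 2) (norm_nonneg (r 2))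
          ha1 (hsm 2 le_rfl (by omega)).2
        rwa [hcast2] at this
      have hb1 : ‖r 1‖ ^ (c 0) ≤ B ^ (c 0) :=
        Real.rpow_le_rpow (norm_nonneg _) hB1 hx
      have hb2 : ‖r 2‖ ^ (c 1) ≤ ρ ^ (c 1) :=
        Real.rpow_le_rpow (norm_nonneg _) hρ2 hy
      have h4 : 1 ≤ B * (B ^ (c 0) * ρ ^ (c 1)) := by
        calc (1:ℝ) ≤ ‖r 0‖ * (‖r 1‖ ^ (c 0) *
              ‖r 2‖ ^ (c 1)) := hkey
          _ ≤ B * (B ^ (c 0) * ρ ^ (c 1)) := by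
              apply mul_le_mul hB0 _ _ (le_of_lt hBpos)
              · exact mul_le_mul hb1 hb2 (Real.rpow_nonneg (norm_nonneg _) _)
                  (Real.rpow_nonneg (le_of_lt hBpos) _)
              · exact mul_nonneg (Real.rpow_nonneg (norm_nonneg _) _)
                  (Real.rpow_nonneg (norm_nonneg _) _)
      have hBB : B * B ^ (c 0) = B ^ (1 + c 0) := by
        rw [Real.rpow_add hBpos, Real.rpow_one]
      have hBs : B ^ (1 + c 0) = ((a:ℝ)+1) ^ s := by
        rw [hBdef, ← Real.rpow_mul (by linarith : (0:ℝ) ≤ (a:ℝ)+1)]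
        congr 1
        rw [hsdef]
        ring
      have hρt : ρ ^ (c 1) = ((a:ℝ)-1) ^ (-t) := by
        rw [hρdef, ← Real.rpow_mul (by linarith : (0:ℝ) ≤ (a:ℝ)-1)]
        congr 1
        rw [htdef]
        field_simp
      have h5 : 1 ≤ ((a:ℝ)+1) ^ s * ((a:ℝ)-1) ^ (-t) := by
        calc (1:ℝ) ≤ B * (B ^ (c 0) * ρ ^ (c 1)) := h4
          _ = (B * B ^ (c 0)) * ρ ^ (c 1) := by ring
          _ = ((a:ℝ)+1) ^ s * ((a:ℝ)-1) ^ (-t) := by rw [hBB, hBs, hρt]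
      have h6 : ((a:ℝ)-1) ^ t ≤ ((a:ℝ)+1) ^ s := by
        rw [Real.rpow_neg (by linarith : (0:ℝ) ≤ (a:ℝ)-1) t] at h5
        exact one_le_of_one_le_mul_inv (Real.rpow_pos_of_pos (by linarith) t) h5
      linarith
    exact mem_hull_of_ineqs d hd c hx hy hsum hedge
  · -- hull ⊆ Ekd 2 d
    apply convexHull_min _ (convex_Ekd 2 d (by omega) (by omega))
    intro v hv
    simp only [Set.mem_insert_iff, Set.mem_singleton_iff] at hv
    rcases hv with rfl | rfl | rfl | rfl
    · -- vertex (0,0)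
      refine ⟨?_, ?_⟩
      · intro i
        fin_cases i <;> norm_num
      · intro p r hm hi hdeg hsr
        rw [Fin.prod_univ_two]
        simp only [Fin.val_zero, Fin.val_one, zero_add, Matrix.cons_val_zero,
          Matrix.cons_val_one, Matrix.head_cons]
        rw [Real.rpow_zero, Real.rpow_zero, mul_one, mul_one]
        exact one_le_abs_r0 hm hdeg hsr hi (by omega)
    · -- vertex (d-1, 0)
      refine ⟨?_, ?_⟩
      · intro i
        fin_cases i <;> norm_num <;> linarith
      · intro p r hm hi hdeg hsr
        rw [Fin.prod_univ_two]
        simp only [Fin.val_zero, Fin.val_one, zero_add, Matrix.cons_val_zero,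
          Matrix.cons_val_one, Matrix.head_cons]
        rw [Real.rpow_zero, mul_one]
        rw [show ((d:ℝ)-1) = ((d-1:ℕ):ℝ) from hcast1.symm, Real.rpow_natCast]
        exact vertexA hm hi hdeg (by omega) hsr
    · -- vertex (1, d-2)
      refine ⟨?_, ?_⟩
      · intro i
        fin_cases i <;> norm_num <;> linarith
      · intro p r hm hi hdeg hsr
        rw [Fin.prod_univ_two]
        simp only [Fin.val_zero, Fin.val_one, zero_add, Matrix.cons_val_zero,
          Matrix.cons_val_one, Matrix.head_cons]
        rw [Real.rpow_one]
        rw [show ((d:ℝ)-2) = ((d-2:ℕ):ℝ) from hcast2.symm, Real.rpow_natCast]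
        rw [← mul_assoc]
        exact vertexB hm hi hdeg hd hsr
    · -- vertex (0, (d-2)/2)
      refine ⟨?_, ?_⟩
      · intro i
        fin_cases i <;> norm_num <;> linarith
      · intro p r hm hi hdeg hsr
        rw [Fin.prod_univ_two]
        simp only [Fin.val_zero, Fin.val_one, zero_add, Matrix.cons_val_zero,
          Matrix.cons_val_one, Matrix.head_cons]
        rw [Real.rpow_zero, one_mul]
        have hr2pos : 0 < ‖r 2‖ := abs_root_pos hm hdeg hsr hi (by omega)
          (by omega)
        have h2e : ‖r 2‖ ^ (((d:ℝ)-2)/2) * ‖r 2‖ ^ (((d:ℝ)-2)/2)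
            = ‖r 2‖ ^ ((d:ℝ)-2) := by
          rw [← Real.rpow_add hr2pos]
          congr 1
          ring
        have hvB := vertexB hm hi hdeg hd hsr
        have hpowcast : ‖r 2‖ ^ ((d-2:ℕ)) = ‖r 2‖ ^ ((d:ℝ)-2) := by
          rw [← Real.rpow_natCast, hcast2]
        rw [hpowcast] at hvB
        have h01 : ‖r 1‖ ≤ ‖r 0‖ := hsr.2 0 1 (by omega) (by omega)
        set T : ℝ := ‖r 0‖ * ‖r 2‖ ^ (((d:ℝ)-2)/2) with hT
        have hT0 : 0 ≤ T :=
          mul_nonneg (norm_nonneg _) (Real.rpow_nonneg (norm_nonneg _) _)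
        have hTsq : 1 ≤ T * T := by
          calc (1:ℝ) ≤ ‖r 0‖ * ‖r 1‖ *
                ‖r 2‖ ^ ((d:ℝ)-2) := hvB
            _ ≤ ‖r 0‖ * ‖r 0‖ *
                ‖r 2‖ ^ ((d:ℝ)-2) := by
                apply mul_le_mul_of_nonneg_right _ (Real.rpow_nonneg (norm_nonneg _) _)
                exact mul_le_mul_of_nonneg_left h01 (norm_nonneg _)
            _ = T * T := by rw [hT]; rw [← h2e]; ring
        nlinarith

/-- For every integer `d ≥ 2`, `E_{1,d}` is the closed interval
`[0, d-1]`; for every integer `d ≥ 3`, `E_{2,d}` is the convex hull in `ℝ²` of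
`(0,0)`, `(d-1, 0)`, `(1, d-2)`, `(0, (d-2)/2)`. -/
theorem Ekd_low_dimensional :
    (∀ d : ℕ, 2 ≤ d → Ekd 1 d = {c : Fin 1 → ℝ | c 0 ∈ Set.Icc (0 : ℝ) ((d : ℝ) - 1)}) ∧
    (∀ d : ℕ, 3 ≤ d → Ekd 2 d =
      convexHull ℝ ({![0, 0], ![(d : ℝ) - 1, 0], ![1, (d : ℝ) - 2],
        ![0, ((d : ℝ) - 2) / 2]} : Set (Fin 2 → ℝ))) := by
  exact ⟨fun d hd => Ekd_one d hd, fun d hd => Ekd_two d hd⟩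
end
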